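/- arXiv:2510.03373 — 4 statements merged into one kernel-verified Lean document; each statement's English description precedes it below -/
import Mathlib

section
/- Let P be a Perron system and let 𝔓⁻ be the associated family of unions of consecutive P⁻-cylinders. Then every set U = (x₁, x₂) \ IS^{P⁻} with 0 ≤ x₁ < x₂ ≤ 1 can be covered by at most three sets from 𝔓⁻, each of diameter at most x₂ − x₁. -/
open Set Filter MeasureTheory
open scoped ENNReal

noncomputable section

/-- A Perron system `P = (φ_n)`: `φ₀ = φ []` and `φ_n(c₁,…,c_n) = φ [c₁,…,c_n]`;
all values are positive integers. -/
structure PerronSystem where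
  φ : List ℕ → ℕ
  φ_pos : ∀ l, 0 < φ l

/-- `(c₁−1)c₁⋯(c_n−1)c_n` (0-based indexing: `c 0 = c₁`). -/
def qprod (c : ℕ → ℕ) (n : ℕ) : ℝ :=
  ∏ i ∈ Finset.range n, (((c i : ℝ) - 1) * (c i : ℝ))

namespace PerronSystem

variable (P : PerronSystem)

/-- `r P c 0 = φ₀` and `r P c n = φ_n(c₁,…,c_n)`. -/
def r (c : ℕ → ℕ) (n : ℕ) : ℕ := P.φ (List.ofFn fun j : Fin n => c j)

/-- The word `c₁ … c_k` is P-admissible: `c_i ≥ φ_{i−1}(c₁,…,c_{i−1}) + 1`. -/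
def AdmissibleUpTo (c : ℕ → ℕ) (k : ℕ) : Prop := ∀ i < k, P.r c i + 1 ≤ c i

/-- The infinite digit sequence `c` is P-admissible. -/
def Admissible (c : ℕ → ℕ) : Prop := ∀ i, P.r c i + 1 ≤ c i

/-- `r₀ r₁ ⋯ r_{n−1}`. -/
def rprod (c : ℕ → ℕ) (n : ℕ) : ℝ := ∏ i ∈ Finset.range n, (P.r c i : ℝ)

/-- Diameter `D_k = r₀⋯r_{k−1} / ((c₁−1)c₁⋯(c_k−1)c_k)` of the cylinder with base `c₁…c_k`. -/
def D (c : ℕ → ℕ) (k : ℕ) : ℝ := P.rprod c k / qprod c k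

/-- `S_k`, the infimum of the positive Perron cylinder with base `c₁…c_k`. -/
def S (c : ℕ → ℕ) (k : ℕ) : ℝ :=
  ∑ n ∈ Finset.range k, P.rprod c (n + 1) / (qprod c n * (c n : ℝ))

/-- The positive Perron cylinder `Δ^P_{c₁…c_k} = (S_k, S_k + D_k]`. -/
def cyl (c : ℕ → ℕ) (k : ℕ) : Set ℝ := Ioc (P.S c k) (P.S c k + P.D c k)

/-- `A_k = ∑_{n=0}^{k−1} (−1)^n r₀⋯r_n / ((c₁−1)c₁⋯(c_n−1)c_n (c_{n+1}−1))`. -/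
def A (c : ℕ → ℕ) (k : ℕ) : ℝ :=
  ∑ n ∈ Finset.range k, (-1 : ℝ) ^ n * P.rprod c (n + 1) / (qprod c n * ((c n : ℝ) - 1))

/-- The second endpoint `A_k + (−1)^k D_k` of the interval `I_{c₁…c_k}`. -/
def altEnd (c : ℕ → ℕ) (k : ℕ) : ℝ := P.A c k + (-1 : ℝ) ^ k * P.D c k

/-- The countable set `IS^{P⁻}` of endpoints of the intervals `I_{c₁…c_k}`
(the word of length `0` contributes the endpoints `0` and `1`). -/
def IS : Set ℝ :=
  {x | ∃ (c : ℕ → ℕ) (k : ℕ), P.AdmissibleUpTo c k ∧ (x = P.A c k ∨ x = P.altEnd c k)}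

/-- The alternating Perron cylinder `Δ^{P⁻}_{c₁…c_k} = I_{c₁…c_k} \ IS^{P⁻}`. -/
def altCyl (c : ℕ → ℕ) (k : ℕ) : Set ℝ :=
  Ioo (min (P.A c k) (P.altEnd c k)) (max (P.A c k) (P.altEnd c k)) \ P.IS

/-- The family `𝔓` of all unions of consecutive positive Perron cylinders of the same
rank contained in a single cylinder of the previous rank. -/
def famP : Set (Set ℝ) :=
  {U | ∃ (c : ℕ → ℕ) (k n : ℕ), P.AdmissibleUpTo c k ∧ P.r c k + 1 ≤ n ∧
      ((∃ m, n ≤ m ∧ U = ⋃ i ∈ Finset.Icc n m, P.cyl (Function.update c k i) (k + 1)) ∨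
        U = ⋃ i ∈ {j : ℕ | n ≤ j}, P.cyl (Function.update c k i) (k + 1))}

/-- The subfamily `𝔓₁ ⊆ 𝔓` of finite unions. -/
def famP1 : Set (Set ℝ) :=
  {U | ∃ (c : ℕ → ℕ) (k n m : ℕ), P.AdmissibleUpTo c k ∧ P.r c k + 1 ≤ n ∧ n ≤ m ∧
      U = ⋃ i ∈ Finset.Icc n m, P.cyl (Function.update c k i) (k + 1)}

/-- The family `𝔓⁻` of all unions of consecutive alternating Perron cylinders of the same
rank contained in a single cylinder of the previous rank. -/
def famAlt : Set (Set ℝ) :=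
  {U | ∃ (c : ℕ → ℕ) (k n : ℕ), P.AdmissibleUpTo c k ∧ P.r c k + 1 ≤ n ∧
      ((∃ m, n ≤ m ∧ U = ⋃ i ∈ Finset.Icc n m, P.altCyl (Function.update c k i) (k + 1)) ∨
        U = ⋃ i ∈ {j : ℕ | n ≤ j}, P.altCyl (Function.update c k i) (k + 1))}

/-- The subfamily `𝔓₁⁻ ⊆ 𝔓⁻` of finite unions. -/
def famAlt1 : Set (Set ℝ) :=
  {U | ∃ (c : ℕ → ℕ) (k n m : ℕ), P.AdmissibleUpTo c k ∧ P.r c k + 1 ≤ n ∧ n ≤ m ∧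
      U = ⋃ i ∈ Finset.Icc n m, P.altCyl (Function.update c k i) (k + 1)}

/-- The value `Δ^P_c` of the positive Perron expansion with digit sequence `c`. -/
def posValue (c : ℕ → ℕ) : ℝ :=
  ∑' n : ℕ, P.rprod c (n + 1) / (qprod c n * (c n : ℝ))

/-- The value `Δ^{P⁻}_c` of the alternating Perron expansion with digit sequence `c`. -/
def altValue (c : ℕ → ℕ) : ℝ :=
  ∑' n : ℕ, (-1 : ℝ) ^ n * P.rprod c (n + 1) / (qprod c n * ((c n : ℝ) - 1))

end PerronSystem

/-- The Hausdorff `α`-dimensional measure of `E` with respect to a family of coverings `Φ`. -/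
def Hfam (Φ : Set (Set ℝ)) (α : ℝ) (E : Set ℝ) : ℝ≥0∞ :=
  ⨆ (ε : ℝ) (_ : 0 < ε),
    ⨅ (f : ℕ → Set ℝ) (_ : E ⊆ ⋃ n, f n) (_ : ∀ n, f n ∈ Φ)
      (_ : ∀ n, EMetric.diam (f n) ≤ ENNReal.ofReal ε),
      ∑' n : ℕ, EMetric.diam (f n) ^ α

/-- The Hausdorff dimension of `E` with respect to a family of coverings `Φ`:
`inf {α > 0 : H^α(E, Φ) = 0}` (equal to `∞` if no such `α` exists). -/
def dimFam (Φ : Set (Set ℝ)) (E : Set ℝ) : ℝ≥0∞ :=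
  ⨅ (α : ℝ) (_ : 0 < α) (_ : Hfam Φ α E = 0), ENNReal.ofReal α

end

/- ===================== Auxiliary development ===================== -/

set_option maxHeartbeats 1000000

noncomputable section PerronAux

namespace PerronSystem

variable (P : PerronSystem)

/-- signed coordinate inside the cylinder of `(c,k)`; distance from `A c k`
measured in the direction of `altEnd c k`. -/
def hco (c : ℕ → ℕ) (k : ℕ) (y : ℝ) : ℝ := (-1 : ℝ) ^ k * (y - P.A c k)

/-- `R = r₀⋯r_k / ((c₁-1)c₁⋯(c_k-1)c_k)`. -/
def RR (c : ℕ → ℕ) (k : ℕ) : ℝ := P.rprod c (k + 1) / qprod c k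

/-- closed cylinder (in coordinates). -/
def clo (c : ℕ → ℕ) (k : ℕ) : Set ℝ :=
  {y | 0 ≤ P.hco c k y ∧ P.hco c k y ≤ P.D c k}

end PerronSystem

open PerronSystem Set

variable {P : PerronSystem}

lemma neg_one_pow_cases (k : ℕ) : ((-1 : ℝ)) ^ k = 1 ∨ ((-1 : ℝ)) ^ k = -1 := by
  rcases Nat.even_or_odd k with h | h
  · exact Or.inl h.neg_one_pow
  · exact Or.inr h.neg_one_pow

lemma neg_one_pow_sq (k : ℕ) : ((-1 : ℝ)) ^ k * ((-1 : ℝ)) ^ k = 1 := by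
  rcases neg_one_pow_cases k with h | h <;> rw [h] <;> norm_num

lemma r_pos (c : ℕ → ℕ) (n : ℕ) : 0 < P.r c n := P.φ_pos _

lemma rprod_pos (c : ℕ → ℕ) (n : ℕ) : 0 < P.rprod c n := by
  apply Finset.prod_pos
  intro i _
  exact_mod_cast r_pos (P := P) c i

lemma adm_digit_two_le {c : ℕ → ℕ} {k : ℕ} (h : P.AdmissibleUpTo c k) :
    ∀ i < k, 2 ≤ c i := by
  intro i hi
  have h1 := h i hi
  have h2 := r_pos (P := P) c i
  omega

lemma qprod_pos {c : ℕ → ℕ} {k : ℕ} (h : ∀ i < k, 2 ≤ c i) : 0 < qprod c k := by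
  apply Finset.prod_pos
  intro i hi
  have h2 : (2 : ℝ) ≤ (c i : ℝ) := by exact_mod_cast h i (Finset.mem_range.mp hi)
  nlinarith

lemma qprod_pos' {c : ℕ → ℕ} {k : ℕ} (h : P.AdmissibleUpTo c k) : 0 < qprod c k :=
  qprod_pos (adm_digit_two_le (P := P) h)

lemma D_pos {c : ℕ → ℕ} {k : ℕ} (h : P.AdmissibleUpTo c k) : 0 < P.D c k :=
  div_pos (rprod_pos c k) (qprod_pos' h)

lemma RR_pos {c : ℕ → ℕ} {k : ℕ} (h : P.AdmissibleUpTo c k) : 0 < P.RR c k :=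
  div_pos (rprod_pos c (k + 1)) (qprod_pos' h)

lemma RR_eq (c : ℕ → ℕ) (k : ℕ) : P.RR c k = P.D c k * (P.r c k : ℝ) := by
  unfold PerronSystem.RR PerronSystem.D PerronSystem.rprod
  rw [Finset.prod_range_succ]
  ring

lemma RR_div_r (c : ℕ → ℕ) (k : ℕ) : P.RR c k / (P.r c k : ℝ) = P.D c k := by
  rw [RR_eq]
  have : (P.r c k : ℝ) ≠ 0 := by exact_mod_cast (r_pos (P := P) c k).ne'
  field_simp

lemma r_update {c : ℕ → ℕ} {k i j : ℕ} (hj : j ≤ k) :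
    P.r (Function.update c k i) j = P.r c j := by
  unfold PerronSystem.r
  have he : (fun t : Fin j => Function.update c k i (t : ℕ)) = fun t : Fin j => c (t : ℕ) := by
    funext t
    exact Function.update_of_ne (by omega) _ _
  rw [he]

lemma rprod_update {c : ℕ → ℕ} {k i n : ℕ} (hn : n ≤ k + 1) :
    P.rprod (Function.update c k i) n = P.rprod c n := by
  unfold PerronSystem.rprod
  apply Finset.prod_congr rfl
  intro t ht
  have := Finset.mem_range.mp ht
  rw [r_update (by omega)]

lemma qprod_update {c : ℕ → ℕ} {k i n : ℕ} (hn : n ≤ k) :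
    qprod (Function.update c k i) n = qprod c n := by
  unfold qprod
  apply Finset.prod_congr rfl
  intro t ht
  have := Finset.mem_range.mp ht
  rw [Function.update_of_ne (by omega)]

lemma qprod_update_succ (c : ℕ → ℕ) (k i : ℕ) :
    qprod (Function.update c k i) (k + 1) = qprod c k * (((i : ℝ) - 1) * (i : ℝ)) := by
  unfold qprod
  rw [Finset.prod_range_succ, Function.update_self]
  congr 1
  exact qprod_update le_rfl

lemma A_update (c : ℕ → ℕ) (k i : ℕ) :
    P.A (Function.update c k i) (k + 1)
      = P.A c k + (-1 : ℝ) ^ k * (P.RR c k / ((i : ℝ) - 1)) := by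
  unfold PerronSystem.A
  rw [Finset.sum_range_succ]
  congr 1
  · apply Finset.sum_congr rfl
    intro n hn
    have hn' := Finset.mem_range.mp hn
    rw [rprod_update (by omega), qprod_update (by omega), Function.update_of_ne (by omega)]
  · rw [rprod_update (le_refl (k+1)), Function.update_self, qprod_update (le_refl k)]
    unfold PerronSystem.RR
    rw [mul_div_assoc, div_div]

lemma D_update (c : ℕ → ℕ) (k i : ℕ) :
    P.D (Function.update c k i) (k + 1)
      = P.RR c k / (((i : ℝ) - 1) * (i : ℝ)) := by
  unfold PerronSystem.D
  rw [rprod_update (le_refl (k+1)), qprod_update_succ c k i]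
  unfold PerronSystem.RR
  rw [div_div]

lemma adm_update {c : ℕ → ℕ} {k : ℕ} (h : P.AdmissibleUpTo c k) {i : ℕ}
    (hi : P.r c k + 1 ≤ i) : P.AdmissibleUpTo (Function.update c k i) (k + 1) := by
  intro j hj
  rcases Nat.lt_or_ge j k with hjk | hjk
  · rw [r_update (by omega), Function.update_of_ne (by omega)]
    exact h j hjk
  · have hjk' : j = k := by omega
    subst hjk'
    rw [r_update le_rfl, Function.update_self]
    exact hi


/- ===== stage 2: geometry of children ===== -/

lemma altEnd_update (c : ℕ → ℕ) (k : ℕ) {i : ℕ} (hi : 2 ≤ i) :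
    P.altEnd (Function.update c k i) (k + 1)
      = P.A c k + (-1 : ℝ) ^ k * (P.RR c k / (i : ℝ)) := by
  have h2 : (2 : ℝ) ≤ (i : ℝ) := by exact_mod_cast hi
  have h1 : ((i : ℝ) - 1) ≠ 0 := by linarith
  have h0 : (i : ℝ) ≠ 0 := by linarith
  unfold PerronSystem.altEnd
  rw [A_update, D_update, pow_succ]
  have : P.RR c k / ((i:ℝ) - 1) - P.RR c k / (((i:ℝ) - 1) * (i:ℝ)) = P.RR c k / (i:ℝ) := by
    field_simp
  rcases neg_one_pow_cases k with h | h <;> rw [h]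
  · linear_combination this
  · linear_combination -this

lemma hco_eq_iff (c : ℕ → ℕ) (k : ℕ) {y t : ℝ} :
    P.hco c k y = t ↔ y = P.A c k + (-1 : ℝ) ^ k * t := by
  have hs := neg_one_pow_sq k
  unfold PerronSystem.hco
  constructor
  · intro h
    linear_combination ((-1 : ℝ) ^ k) * h - (y - P.A c k) * hs
  · intro h
    subst h
    linear_combination t * hs

lemma hco_update (c : ℕ → ℕ) (k : ℕ) (i : ℕ) (y : ℝ) :
    P.hco (Function.update c k i) (k + 1) y
      = P.RR c k / ((i : ℝ) - 1) - P.hco c k y := by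
  unfold PerronSystem.hco
  rw [A_update, pow_succ]
  have hs := neg_one_pow_sq k
  linear_combination (P.RR c k / ((i : ℝ) - 1)) * hs

/-- membership in the open interval with endpoints `A + s*u`, `A + s*v`. -/
lemma mem_Ioo_pm {s A u v y : ℝ} (hs : s = 1 ∨ s = -1) (huv : u < v) :
    y ∈ Ioo (min (A + s * u) (A + s * v)) (max (A + s * u) (A + s * v)) ↔
      u < s * (y - A) ∧ s * (y - A) < v := by
  rcases hs with rfl | rfl
  · rw [min_eq_left (by linarith), max_eq_right (by linarith)]
    simp only [Set.mem_Ioo, one_mul]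
    constructor <;> rintro ⟨a, b⟩ <;> exact ⟨by linarith, by linarith⟩
  · rw [min_eq_right (by nlinarith), max_eq_left (by nlinarith)]
    simp only [Set.mem_Ioo, neg_one_mul]
    constructor <;> rintro ⟨a, b⟩ <;> exact ⟨by linarith, by linarith⟩

lemma divRle {R u v : ℝ} (hR : 0 ≤ R) (hu : 0 < u) (huv : u ≤ v) : R / v ≤ R / u :=
  div_le_div_of_nonneg_left hR hu huv

lemma divRlt {R u v : ℝ} (hR : 0 < R) (hu : 0 < u) (huv : u < v) : R / v < R / u := by
  rw [div_lt_div_iff₀ (by linarith) hu]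
  nlinarith

lemma cast_sub_one {j : ℕ} (hj : 1 ≤ j) : ((j - 1 : ℕ) : ℝ) = (j : ℝ) - 1 := by
  have : ((j - 1 : ℕ) : ℝ) = ((j : ℕ) : ℝ) - ((1 : ℕ) : ℝ) := Nat.cast_sub hj
  simpa using this

lemma dsub_identity {R x : ℝ} (hx1 : x - 1 ≠ 0) (hx0 : x ≠ 0) :
    R / (x - 1) - R / ((x - 1) * x) = R / x := by
  field_simp

lemma dsub_identity' {R x : ℝ} (hx1 : x - 1 ≠ 0) (hx0 : x ≠ 0) :
    R / (x - 1) - R / x = R / ((x - 1) * x) := by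
  field_simp
  ring

/-- the child cylinder in coordinates. -/
lemma altCyl_update_eq {c : ℕ → ℕ} {k : ℕ} (hadm : P.AdmissibleUpTo c k) {i : ℕ}
    (hi : P.r c k + 1 ≤ i) :
    P.altCyl (Function.update c k i) (k + 1)
      = {y | P.RR c k / (i : ℝ) < P.hco c k y ∧ P.hco c k y < P.RR c k / ((i : ℝ) - 1)}
          \ P.IS := by
  have hrk := r_pos (P := P) c k
  have hi2 : 2 ≤ i := by omega
  have hi2' : (2 : ℝ) ≤ (i : ℝ) := by exact_mod_cast hi2
  have hR := RR_pos (P := P) hadm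
  have huv : P.RR c k / (i : ℝ) < P.RR c k / ((i : ℝ) - 1) :=
    divRlt hR (by linarith) (by linarith)
  unfold PerronSystem.altCyl
  rw [A_update, altEnd_update (P := P) c k hi2]
  ext y
  have hmm := mem_Ioo_pm (s := (-1:ℝ)^k) (A := P.A c k) (u := P.RR c k / (i:ℝ))
      (v := P.RR c k / ((i:ℝ) - 1)) (y := y) (neg_one_pow_cases k) huv
  constructor
  · rintro ⟨hy, hyIS⟩
    rw [min_comm, max_comm] at hy
    exact ⟨hmm.mp hy, hyIS⟩
  · rintro ⟨hy, hyIS⟩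
    refine ⟨?_, hyIS⟩
    rw [min_comm, max_comm]
    exact hmm.mpr hy

/-- interior boundary points belong to `IS`. -/
lemma tpt_mem_IS {c : ℕ → ℕ} {k : ℕ} (hadm : P.AdmissibleUpTo c k) {i : ℕ}
    (hi : P.r c k ≤ i) :
    P.A c k + (-1 : ℝ) ^ k * (P.RR c k / (i : ℝ)) ∈ P.IS := by
  rcases eq_or_lt_of_le hi with rfl | hlt
  · refine ⟨c, k, hadm, Or.inr ?_⟩
    rw [RR_div_r]
    rfl
  · have h1 : P.r c k + 1 ≤ i := hlt
    refine ⟨Function.update c k i, k + 1, adm_update hadm h1, Or.inr ?_⟩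
    rw [altEnd_update (P := P) c k (by have := r_pos (P := P) c k; omega)]


/- ===== stage 3: covering unions ===== -/

lemma find_digit {R hx : ℝ} {n : ℕ} (hR : 0 < R) (hx0 : 0 < hx) (hn : 1 ≤ n) :
    ∃ j : ℕ, n ≤ j ∧ R / (j : ℝ) < hx ∧
      (j = n ∨ hx ≤ R / ((j : ℝ) - 1)) ∧ (∀ j', n ≤ j' → R / (j' : ℝ) < hx → j ≤ j') := by
  classical
  have hex : ∃ j : ℕ, n ≤ j ∧ R / (j : ℝ) < hx := by
    obtain ⟨N, hN⟩ := exists_nat_gt (R / hx)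
    refine ⟨max n N, le_max_left _ _, ?_⟩
    have hm1 : 1 ≤ max n N := le_trans hn (le_max_left _ _)
    have hm0 : (0 : ℝ) < ((max n N : ℕ) : ℝ) := Nat.cast_pos.mpr hm1
    rw [div_lt_iff₀ hm0]
    have hNle : (N : ℝ) ≤ ((max n N : ℕ) : ℝ) := Nat.cast_le.mpr (le_max_right n N)
    have hRN : R < (N : ℝ) * hx := by
      rw [div_lt_iff₀ hx0] at hN
      linarith
    nlinarith
  set j := Nat.find hex with hj
  obtain ⟨hj1, hj2⟩ := Nat.find_spec hex
  refine ⟨j, hj1, hj2, ?_, ?_⟩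
  · rcases eq_or_lt_of_le hj1 with he | hlt
    · exact Or.inl he.symm
    · right
      have hmin := Nat.find_min hex (m := j - 1) (by omega)
      push_neg at hmin
      have := hmin (by omega)
      rw [cast_sub_one (by omega)] at this
      exact this
  · intro j' hj'1 hj'2
    exact Nat.find_min' hex ⟨hj'1, hj'2⟩

lemma cover_fin {c : ℕ → ℕ} {k : ℕ} (hadm : P.AdmissibleUpTo c k) {n m : ℕ}
    (hn : P.r c k + 1 ≤ n) (hnm : n ≤ m) :
    (⋃ i ∈ Finset.Icc n m, P.altCyl (Function.update c k i) (k + 1))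
        ⊆ {y | P.RR c k / (m : ℝ) ≤ P.hco c k y ∧ P.hco c k y ≤ P.RR c k / ((n : ℝ) - 1)} ∧
      {y | P.RR c k / (m : ℝ) < P.hco c k y ∧ P.hco c k y < P.RR c k / ((n : ℝ) - 1)} \ P.IS
        ⊆ ⋃ i ∈ Finset.Icc n m, P.altCyl (Function.update c k i) (k + 1) := by
  have hrk := r_pos (P := P) c k
  have hR := RR_pos (P := P) hadm
  have hn2 : 2 ≤ n := by omega
  have hn2' : (2 : ℝ) ≤ (n : ℝ) := by exact_mod_cast hn2
  constructor
  · intro y hy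
    simp only [Set.mem_iUnion, exists_prop] at hy
    obtain ⟨i, hi, hyi⟩ := hy
    obtain ⟨hi1, hi2⟩ := Finset.mem_Icc.mp hi
    have hi2n : 2 ≤ i := by omega
    have hi2' : (2 : ℝ) ≤ (i : ℝ) := by exact_mod_cast hi2n
    rw [altCyl_update_eq hadm (by omega)] at hyi
    obtain ⟨⟨ha, hb⟩, _⟩ := hyi
    constructor
    · refine le_trans (divRle hR.le (by linarith) ?_) ha.le
      exact_mod_cast hi2
    · refine le_trans hb.le (divRle hR.le (by linarith) ?_)
      have : (n : ℝ) ≤ (i : ℝ) := by exact_mod_cast hi1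
      linarith
  · rintro y ⟨⟨hy1, hy2⟩, hyIS⟩
    have hx0 : 0 < P.hco c k y := lt_of_le_of_lt (by positivity) hy1
    obtain ⟨j, hja, hjb, hjc, hjd⟩ := find_digit hR hx0 (by omega : 1 ≤ n)
    have hjm : j ≤ m := hjd m hnm hy1
    have hup : P.hco c k y < P.RR c k / ((j : ℝ) - 1) := by
      rcases hjc with rfl | hjc
      · exact hy2
      · rcases eq_or_lt_of_le hjc with he | hlt
        · exfalso
          apply hyIS
          have hy' : y = P.A c k + (-1 : ℝ) ^ k * (P.RR c k / ((j : ℝ) - 1)) :=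
            (hco_eq_iff c k).mp he
          rw [← cast_sub_one (by omega : 1 ≤ j)] at hy'
          rw [hy']
          exact tpt_mem_IS hadm (by omega)
        · linarith
    simp only [Set.mem_iUnion, exists_prop]
    refine ⟨j, Finset.mem_Icc.mpr ⟨hja, hjm⟩, ?_⟩
    rw [altCyl_update_eq hadm (by omega)]
    exact ⟨⟨hjb, hup⟩, hyIS⟩

lemma cover_inf {c : ℕ → ℕ} {k : ℕ} (hadm : P.AdmissibleUpTo c k) {n : ℕ}
    (hn : P.r c k + 1 ≤ n) :
    (⋃ i ∈ {t : ℕ | n ≤ t}, P.altCyl (Function.update c k i) (k + 1))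
        ⊆ {y | 0 ≤ P.hco c k y ∧ P.hco c k y ≤ P.RR c k / ((n : ℝ) - 1)} ∧
      {y | 0 < P.hco c k y ∧ P.hco c k y < P.RR c k / ((n : ℝ) - 1)} \ P.IS
        ⊆ ⋃ i ∈ {t : ℕ | n ≤ t}, P.altCyl (Function.update c k i) (k + 1) := by
  have hrk := r_pos (P := P) c k
  have hR := RR_pos (P := P) hadm
  have hn2 : 2 ≤ n := by omega
  have hn2' : (2 : ℝ) ≤ (n : ℝ) := by exact_mod_cast hn2
  constructor
  · intro y hy
    simp only [Set.mem_iUnion, exists_prop, Set.mem_setOf_eq] at hy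
    obtain ⟨i, hi, hyi⟩ := hy
    have hi2n : 2 ≤ i := by omega
    have hi2' : (2 : ℝ) ≤ (i : ℝ) := by exact_mod_cast hi2n
    rw [altCyl_update_eq hadm (by omega)] at hyi
    obtain ⟨⟨ha, hb⟩, _⟩ := hyi
    constructor
    · have : 0 < P.RR c k / (i : ℝ) := by positivity
      linarith
    · refine le_trans hb.le (divRle hR.le (by linarith) ?_)
      have : (n : ℝ) ≤ (i : ℝ) := by exact_mod_cast hi
      linarith
  · rintro y ⟨⟨hy1, hy2⟩, hyIS⟩
    obtain ⟨j, hja, hjb, hjc, hjd⟩ := find_digit hR hy1 (by omega : 1 ≤ n)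
    have hup : P.hco c k y < P.RR c k / ((j : ℝ) - 1) := by
      rcases hjc with rfl | hjc
      · exact hy2
      · rcases eq_or_lt_of_le hjc with he | hlt
        · exfalso
          apply hyIS
          have hy' : y = P.A c k + (-1 : ℝ) ^ k * (P.RR c k / ((j : ℝ) - 1)) :=
            (hco_eq_iff c k).mp he
          rw [← cast_sub_one (by omega : 1 ≤ j)] at hy'
          rw [hy']
          exact tpt_mem_IS hadm (by omega)
        · linarith
    simp only [Set.mem_iUnion, exists_prop, Set.mem_setOf_eq]
    refine ⟨j, hja, ?_⟩
    rw [altCyl_update_eq hadm (by omega)]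
    exact ⟨⟨hjb, hup⟩, hyIS⟩

lemma diam_le_band {c : ℕ → ℕ} {k : ℕ} {U : Set ℝ} {α β : ℝ}
    (hU : U ⊆ {y | α ≤ P.hco c k y ∧ P.hco c k y ≤ β}) :
    EMetric.diam U ≤ ENNReal.ofReal (β - α) := by
  apply EMetric.diam_le
  intro x hx y hy
  obtain ⟨hx1, hx2⟩ := hU hx
  obtain ⟨hy1, hy2⟩ := hU hy
  rw [edist_dist, Real.dist_eq]
  apply ENNReal.ofReal_le_ofReal
  unfold PerronSystem.hco at hx1 hx2 hy1 hy2
  rcases neg_one_pow_cases k with h | h <;> rw [h] at hx1 hx2 hy1 hy2 <;>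
    rw [abs_le] <;> constructor <;> nlinarith

lemma clo_closed (c : ℕ → ℕ) (k : ℕ) : IsClosed (P.clo c k) := by
  have h : P.clo c k = (fun y => P.hco c k y) ⁻¹' (Icc 0 (P.D c k)) := by
    ext y
    simp [PerronSystem.clo, Set.mem_Icc, Set.mem_preimage]
  rw [h]
  apply IsClosed.preimage _ isClosed_Icc
  unfold PerronSystem.hco
  fun_prop

lemma endpoints_mem {c : ℕ → ℕ} {k : ℕ} {x₁ x₂ : ℝ} (h₁₂ : x₁ < x₂)
    (hsub : Ioo x₁ x₂ ⊆ P.clo c k) : x₁ ∈ P.clo c k ∧ x₂ ∈ P.clo c k := by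
  have h1 : Icc x₁ x₂ ⊆ P.clo c k := by
    rw [← closure_Ioo h₁₂.ne]
    exact closure_minimal hsub (clo_closed c k)
  exact ⟨h1 ⟨le_rfl, h₁₂.le⟩, h1 ⟨h₁₂.le, le_rfl⟩⟩

lemma width_le {c : ℕ → ℕ} {k : ℕ} {x₁ x₂ : ℝ} (h₁₂ : x₁ < x₂)
    (hsub : Ioo x₁ x₂ ⊆ P.clo c k) : x₂ - x₁ ≤ P.D c k := by
  obtain ⟨⟨h1a, h1b⟩, ⟨h2a, h2b⟩⟩ := endpoints_mem h₁₂ hsub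
  unfold PerronSystem.hco at h1a h1b h2a h2b
  rcases neg_one_pow_cases k with h | h <;> rw [h] at h1a h1b h2a h2b <;> nlinarith

lemma Ioo_iff_band {c : ℕ → ℕ} {k : ℕ} {x₁ x₂ : ℝ} (h₁₂ : x₁ < x₂) (y : ℝ) :
    y ∈ Ioo x₁ x₂ ↔
      (min (P.hco c k x₁) (P.hco c k x₂) < P.hco c k y ∧
        P.hco c k y < max (P.hco c k x₁) (P.hco c k x₂)) := by
  unfold PerronSystem.hco
  rcases neg_one_pow_cases k with h | h <;> rw [h]
  · rw [min_eq_left (by nlinarith), max_eq_right (by nlinarith)]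
    simp only [Set.mem_Ioo, one_mul]
    constructor <;> rintro ⟨a, b⟩ <;> exact ⟨by linarith, by linarith⟩
  · rw [min_eq_right (by nlinarith), max_eq_left (by nlinarith)]
    simp only [Set.mem_Ioo, neg_one_mul]
    constructor <;> rintro ⟨a, b⟩ <;> exact ⟨by linarith, by linarith⟩

lemma band_width {c : ℕ → ℕ} {k : ℕ} {x₁ x₂ : ℝ} (h₁₂ : x₁ < x₂) :
    max (P.hco c k x₁) (P.hco c k x₂) - min (P.hco c k x₁) (P.hco c k x₂) = x₂ - x₁ := by
  unfold PerronSystem.hco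
  rcases neg_one_pow_cases k with h | h <;> rw [h]
  · rw [min_eq_left (by nlinarith), max_eq_right (by nlinarith)]
    ring
  · rw [min_eq_right (by nlinarith), max_eq_left (by nlinarith)]
    ring

lemma mem_Ioo_of_hco_between {c : ℕ → ℕ} {k : ℕ} {x₁ x₂ y₀ y w : ℝ}
    (h0 : y₀ ∈ Ioo x₁ x₂) (h1 : y ∈ Ioo x₁ x₂)
    (hw : (P.hco c k y₀ ≤ P.hco c k w ∧ P.hco c k w ≤ P.hco c k y) ∨
          (P.hco c k y ≤ P.hco c k w ∧ P.hco c k w ≤ P.hco c k y₀)) :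
    w ∈ Ioo x₁ x₂ := by
  obtain ⟨ha0, hb0⟩ := h0
  obtain ⟨ha1, hb1⟩ := h1
  unfold PerronSystem.hco at hw
  constructor <;>
    rcases neg_one_pow_cases k with h | h <;> rw [h] at hw <;>
    rcases hw with ⟨ha, hb⟩ | ⟨ha, hb⟩ <;> nlinarith


/- ===== stage 4: one-set side covers ===== -/

lemma sideA1 {c : ℕ → ℕ} {k : ℕ} (hadm : P.AdmissibleUpTo c k) {hx : ℝ}
    (hx0 : 0 < hx) (hxD : hx ≤ P.D c k) :
    ∃ U s, U ∈ P.famAlt ∧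
      ({y | 0 < P.hco c k y ∧ P.hco c k y < s} \ P.IS ⊆ U) ∧
      EMetric.diam U ≤ ENNReal.ofReal s ∧
      hx ≤ s ∧ s - hx ≤ hx ∧ s - hx ≤ P.D c k / 2 := by
  have hrk := r_pos (P := P) c k
  have hR := RR_pos (P := P) hadm
  have hrk' : (1 : ℝ) ≤ (P.r c k : ℝ) := by exact_mod_cast hrk
  have hDR : P.D c k = P.RR c k / (P.r c k : ℝ) := (RR_div_r c k).symm
  obtain ⟨j, hj1, hj2, hj3, _⟩ := find_digit hR hx0 (by omega : 1 ≤ P.r c k + 1)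
  have hj2n : 2 ≤ j := by omega
  have hj2' : (2 : ℝ) ≤ (j : ℝ) := by exact_mod_cast hj2n
  have hrj : (P.r c k : ℝ) + 1 ≤ (j : ℝ) := by exact_mod_cast hj1
  obtain ⟨hsub, hcov⟩ := cover_inf hadm hj1
  have hgap : P.RR c k / ((j : ℝ) - 1) - P.RR c k / (j : ℝ)
      = P.RR c k / (((j : ℝ) - 1) * (j : ℝ)) :=
    dsub_identity' (by linarith) (by linarith)
  have hgap1 : P.RR c k / (((j : ℝ) - 1) * (j : ℝ)) ≤ P.RR c k / (j : ℝ) :=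
    divRle hR.le (by linarith) (by nlinarith)
  have hgap2 : P.RR c k / (((j : ℝ) - 1) * (j : ℝ))
      ≤ P.RR c k / ((P.r c k : ℝ) * ((P.r c k : ℝ) + 1)) :=
    divRle hR.le (by nlinarith) (by nlinarith)
  have hgap3 : P.RR c k / ((P.r c k : ℝ) * ((P.r c k : ℝ) + 1)) ≤ P.D c k / 2 := by
    rw [hDR, div_div]
    exact divRle hR.le (by nlinarith) (by nlinarith)
  refine ⟨_, P.RR c k / ((j : ℝ) - 1), ⟨c, k, j, hadm, hj1, Or.inr rfl⟩, hcov, ?_, ?_, ?_, ?_⟩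
  · have := diam_le_band (P := P) hsub
    simpa using this
  · rcases hj3 with he | h
    · subst he
      have hc : ((P.r c k + 1 : ℕ) : ℝ) - 1 = (P.r c k : ℝ) := by push_cast; ring
      rw [hc, ← hDR]
      exact hxD
    · exact h
  · linarith
  · linarith

lemma hco_update_top {c : ℕ → ℕ} {k : ℕ} (hadm : P.AdmissibleUpTo c k) (y : ℝ) :
    P.hco (Function.update c k (P.r c k + 1)) (k + 1) y = P.D c k - P.hco c k y := by
  rw [hco_update]
  have hc : ((P.r c k + 1 : ℕ) : ℝ) - 1 = (P.r c k : ℝ) := by push_cast; ring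
  rw [hc, RR_div_r]

lemma D_update_top {c : ℕ → ℕ} {k : ℕ} (hadm : P.AdmissibleUpTo c k) :
    P.D (Function.update c k (P.r c k + 1)) (k + 1)
      = P.RR c k / ((P.r c k : ℝ) * ((P.r c k : ℝ) + 1)) := by
  rw [D_update]
  have hc : ((P.r c k + 1 : ℕ) : ℝ) = (P.r c k : ℝ) + 1 := by push_cast; ring
  rw [hc]
  ring_nf

lemma sideE1 {c : ℕ → ℕ} {k : ℕ} (hadm : P.AdmissibleUpTo c k) {hx : ℝ}
    (hx0 : 0 ≤ hx) (hxD : hx < P.D c k) :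
    ∃ U s, U ∈ P.famAlt ∧
      ({y | s < P.hco c k y ∧ P.hco c k y < P.D c k} \ P.IS ⊆ U) ∧
      EMetric.diam U ≤ ENNReal.ofReal (P.D c k - s) ∧
      0 ≤ s ∧ s ≤ hx ∧ hx - s ≤ P.D c k - hx ∧ hx - s ≤ P.D c k / 4 := by
  have hrk := r_pos (P := P) c k
  have hR := RR_pos (P := P) hadm
  have hD := D_pos (P := P) hadm
  have hrk' : (1 : ℝ) ≤ (P.r c k : ℝ) := by exact_mod_cast hrk
  have hDR : P.D c k = P.RR c k / (P.r c k : ℝ) := (RR_div_r c k).symm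
  have hcD : P.RR c k / ((P.r c k + 1 : ℕ) : ℝ) = P.RR c k / ((P.r c k : ℝ) + 1) := by
    push_cast; ring_nf
  have hDtop : P.RR c k / (((P.r c k + 1 : ℕ) : ℝ) - 1) = P.D c k := by
    have hc : ((P.r c k + 1 : ℕ) : ℝ) - 1 = (P.r c k : ℝ) := by push_cast; ring
    rw [hc, RR_div_r]
  rcases eq_or_lt_of_le hx0 with he0 | hx0'
  · -- hx = 0 : take the full cylinder
    obtain ⟨hsub, hcov⟩ := cover_inf hadm (le_refl (P.r c k + 1))
    rw [hDtop] at hsub hcov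
    refine ⟨_, 0, ⟨c, k, P.r c k + 1, hadm, le_rfl, Or.inr rfl⟩, ?_, ?_, le_rfl, by linarith,
        by linarith, by linarith⟩
    · intro y hy
      exact hcov hy
    · have := diam_le_band (P := P) hsub
      simpa using this
  · obtain ⟨j, hj1, hj2, hj3, _⟩ := find_digit hR hx0' (by omega : 1 ≤ P.r c k + 1)
    have hj2n : 2 ≤ j := by omega
    have hj2' : (2 : ℝ) ≤ (j : ℝ) := by exact_mod_cast hj2n
    have hrj : (P.r c k : ℝ) + 1 ≤ (j : ℝ) := by exact_mod_cast hj1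
    by_cases hce : j = P.r c k + 1
    · -- recurse into the extreme child
      subst hce
      rw [hcD] at hj2
      set c' := Function.update c k (P.r c k + 1) with hc'
      have hadm' : P.AdmissibleUpTo c' (k + 1) := adm_update hadm le_rfl
      have hD' : P.D c' (k + 1) = P.RR c k / ((P.r c k : ℝ) * ((P.r c k : ℝ) + 1)) :=
        D_update_top hadm
      have hgapD : P.D c k - P.RR c k / ((P.r c k : ℝ) + 1)
          = P.RR c k / ((P.r c k : ℝ) * ((P.r c k : ℝ) + 1)) := by
        have h := dsub_identity' (R := P.RR c k) (x := (P.r c k : ℝ) + 1)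
          (by linarith) (by linarith)
        rw [show ((P.r c k : ℝ) + 1) - 1 = (P.r c k : ℝ) from by ring] at h
        rw [hDR]
        linarith [h]
    -- apply sideA1 in the child
      have hx1pos : 0 < P.D c k - hx := by linarith
      have hx1le : P.D c k - hx ≤ P.D c' (k + 1) := by
        rw [hD', ← hgapD]
        linarith
      obtain ⟨U, s1, hUmem, hUcov, hUdiam, hb1, hb2, hb3⟩ := sideA1 hadm' hx1pos hx1le
      have hD'le : P.D c' (k + 1) ≤ P.D c k / 2 := by
        rw [hD', hDR, div_div]
        exact divRle hR.le (by nlinarith) (by nlinarith)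
      refine ⟨U, P.D c k - s1, hUmem, ?_, ?_, by linarith, by linarith, by linarith, ?_⟩
      · intro y ⟨⟨ha, hb⟩, hIS⟩
        apply hUcov
        refine ⟨⟨?_, ?_⟩, hIS⟩
        · rw [hco_update_top hadm]
          linarith
        · rw [hco_update_top hadm]
          linarith
      · have : P.D c k - (P.D c k - s1) = s1 := by ring
        rw [this]
        exact hUdiam
      · -- hx - (D - s1) = s1 - (D - hx) ≤ D'/2 ≤ D/4
        have : s1 - (P.D c k - hx) ≤ P.D c' (k + 1) / 2 := hb3
        linarith [hD'le]
    · -- j ≥ r+2 : finite union down to the extreme child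
      have hj3' : hx ≤ P.RR c k / ((j : ℝ) - 1) := by
        rcases hj3 with he | h
        · exact absurd he hce
        · exact h
      have hjge : P.r c k + 2 ≤ j := by omega
      have hjge' : (P.r c k : ℝ) + 2 ≤ (j : ℝ) := by exact_mod_cast hjge
      obtain ⟨hsub, hcov⟩ := cover_fin hadm (le_refl (P.r c k + 1)) (by omega : P.r c k + 1 ≤ j)
      rw [hDtop] at hsub hcov
      have hgap : P.RR c k / ((j : ℝ) - 1) - P.RR c k / (j : ℝ)
          = P.RR c k / (((j : ℝ) - 1) * (j : ℝ)) :=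
        dsub_identity' (by linarith) (by linarith)
      have hgap2 : P.RR c k / (((j : ℝ) - 1) * (j : ℝ))
          ≤ P.RR c k / (((j : ℝ) - 2) * ((j : ℝ) - 1)) :=
        divRle hR.le (by nlinarith) (by nlinarith)
      have hgap3 : P.RR c k / ((j : ℝ) - 2) - P.RR c k / ((j : ℝ) - 1)
          = P.RR c k / (((j : ℝ) - 2) * ((j : ℝ) - 1)) := by
        have := dsub_identity' (R := P.RR c k) (x := (j : ℝ) - 1) (by nlinarith) (by nlinarith)
        rw [show (j : ℝ) - 1 - 1 = (j : ℝ) - 2 by ring] at this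
        exact this
      have hgap4 : P.RR c k / ((j : ℝ) - 2) ≤ P.D c k := by
        rw [hDR]
        exact divRle hR.le (by linarith) (by linarith)
      have hgap5 : P.RR c k / (((j : ℝ) - 1) * (j : ℝ))
          ≤ P.RR c k / (((P.r c k : ℝ) + 1) * ((P.r c k : ℝ) + 2)) :=
        divRle hR.le (by nlinarith) (by nlinarith)
      have hgap6 : P.RR c k / (((P.r c k : ℝ) + 1) * ((P.r c k : ℝ) + 2)) ≤ P.D c k / 4 := by
        rw [hDR, div_div]
        exact divRle hR.le (by nlinarith) (by nlinarith)
      refine ⟨⋃ i ∈ Finset.Icc (P.r c k + 1) j, P.altCyl (Function.update c k i) (k + 1),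
          P.RR c k / (j : ℝ), ⟨c, k, P.r c k + 1, hadm, le_rfl, Or.inl ⟨j, by omega, rfl⟩⟩,
          hcov, ?_, by positivity, by linarith, ?_, ?_⟩
      · have := diam_le_band (P := P) hsub
        simpa using this
      · -- hx - R/j ≤ D - hx
        linarith
      · linarith


/- ===== stage 5: two-set side covers ===== -/

lemma sideA2 {c : ℕ → ℕ} {k : ℕ} (hadm : P.AdmissibleUpTo c k) {hx : ℝ}
    (hx0 : 0 < hx) (hxD : hx ≤ P.D c k) :
    ∃ U V, U ∈ P.famAlt ∧ V ∈ P.famAlt ∧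
      ({y | 0 < P.hco c k y ∧ P.hco c k y < hx} \ P.IS ⊆ U ∪ V) ∧
      EMetric.diam U ≤ ENNReal.ofReal hx ∧ EMetric.diam V ≤ ENNReal.ofReal hx := by
  have hrk := r_pos (P := P) c k
  have hR := RR_pos (P := P) hadm
  have hrk' : (1 : ℝ) ≤ (P.r c k : ℝ) := by exact_mod_cast hrk
  have hDR : P.D c k = P.RR c k / (P.r c k : ℝ) := (RR_div_r c k).symm
  obtain ⟨j, hj1, hj2, hj3, _⟩ := find_digit hR hx0 (by omega : 1 ≤ P.r c k + 1)
  have hj2n : 2 ≤ j := by omega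
  have hj2' : (2 : ℝ) ≤ (j : ℝ) := by exact_mod_cast hj2n
  have hrj : (P.r c k : ℝ) + 1 ≤ (j : ℝ) := by exact_mod_cast hj1
  have hup : hx ≤ P.RR c k / ((j : ℝ) - 1) := by
    rcases hj3 with he | h
    · subst he
      have hc : ((P.r c k + 1 : ℕ) : ℝ) - 1 = (P.r c k : ℝ) := by push_cast; ring
      rw [hc, ← hDR]
      exact hxD
    · exact h
  -- the tail beyond the child containing the point
  obtain ⟨hsubU, hcovU⟩ := cover_inf hadm (show P.r c k + 1 ≤ j + 1 by omega)
  have hcj : ((j + 1 : ℕ) : ℝ) - 1 = (j : ℝ) := by push_cast; ring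
  rw [hcj] at hsubU hcovU
  -- the child containing the point
  set c' := Function.update c k j with hc'
  have hadm' : P.AdmissibleUpTo c' (k + 1) := adm_update hadm hj1
  have hD' : P.D c' (k + 1) = P.RR c k / (((j : ℝ) - 1) * (j : ℝ)) := D_update c k j
  have hrel : ∀ y, P.hco c' (k + 1) y = P.RR c k / ((j : ℝ) - 1) - P.hco c k y :=
    fun y => hco_update c k j y
  have hid : P.RR c k / ((j : ℝ) - 1) - P.RR c k / (((j : ℝ) - 1) * (j : ℝ))
      = P.RR c k / (j : ℝ) := dsub_identity (by linarith) (by linarith)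
  have hxj0 : 0 ≤ P.RR c k / ((j : ℝ) - 1) - hx := by linarith
  have hxjD : P.RR c k / ((j : ℝ) - 1) - hx < P.D c' (k + 1) := by
    rw [hD']
    linarith
  obtain ⟨V, sj, hVmem, hVcov, hVdiam, hsj0, hsj1, hsj2, hsj3⟩ := sideE1 hadm' hxj0 hxjD
  have hD'j : P.D c' (k + 1) ≤ P.RR c k / (j : ℝ) := by
    rw [hD']
    exact divRle hR.le (by linarith) (by nlinarith)
  refine ⟨_, V, ⟨c, k, j + 1, hadm, by omega, Or.inr rfl⟩, hVmem, ?_, ?_, ?_⟩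
  · -- coverage
    rintro y ⟨⟨hy1, hy2⟩, hyIS⟩
    rcases lt_trichotomy (P.hco c k y) (P.RR c k / (j : ℝ)) with hlt | heq | hgt
    · exact Or.inl (hcovU ⟨⟨hy1, hlt⟩, hyIS⟩)
    · exfalso
      apply hyIS
      rw [(hco_eq_iff c k).mp heq]
      exact tpt_mem_IS hadm (by omega)
    · refine Or.inr (hVcov ⟨⟨?_, ?_⟩, hyIS⟩)
      · rw [hrel]
        linarith
      · rw [hrel, hD']
        linarith
  · refine le_trans (by simpa using diam_le_band (P := P) hsubU) ?_
    exact ENNReal.ofReal_le_ofReal (by linarith)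
  · refine le_trans hVdiam (ENNReal.ofReal_le_ofReal ?_)
    -- D' - sj ≤ hx
    have h1 : P.D c' (k + 1) - (P.RR c k / ((j : ℝ) - 1) - hx) ≤ hx - P.RR c k / (j:ℝ) + P.D c' (k+1) - P.D c' (k+1) + (P.D c' (k+1)) - (P.D c' (k+1)) := by
      rw [hD']
      linarith
    have h2 : P.D c' (k + 1) / 4 ≤ P.RR c k / (j : ℝ) := by linarith [hD'j, D_pos (P := P) hadm']
    linarith

lemma sideE2 {c : ℕ → ℕ} {k : ℕ} (hadm : P.AdmissibleUpTo c k) {hx : ℝ}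
    (hx0 : 0 ≤ hx) (hxD : hx < P.D c k) :
    ∃ U V, U ∈ P.famAlt ∧ V ∈ P.famAlt ∧
      ({y | hx < P.hco c k y ∧ P.hco c k y < P.D c k} \ P.IS ⊆ U ∪ V) ∧
      EMetric.diam U ≤ ENNReal.ofReal (P.D c k - hx) ∧
      EMetric.diam V ≤ ENNReal.ofReal (P.D c k - hx) := by
  have hrk := r_pos (P := P) c k
  have hR := RR_pos (P := P) hadm
  have hD := D_pos (P := P) hadm
  have hrk' : (1 : ℝ) ≤ (P.r c k : ℝ) := by exact_mod_cast hrk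
  have hDR : P.D c k = P.RR c k / (P.r c k : ℝ) := (RR_div_r c k).symm
  have hDtop : P.RR c k / (((P.r c k + 1 : ℕ) : ℝ) - 1) = P.D c k := by
    have hc : ((P.r c k + 1 : ℕ) : ℝ) - 1 = (P.r c k : ℝ) := by push_cast; ring
    rw [hc, RR_div_r]
  rcases eq_or_lt_of_le hx0 with he0 | hx0'
  · -- hx = 0 : the full cylinder, twice
    obtain ⟨hsub, hcov⟩ := cover_inf hadm (le_refl (P.r c k + 1))
    rw [hDtop] at hsub hcov
    refine ⟨_, _, ⟨c, k, P.r c k + 1, hadm, le_rfl, Or.inr rfl⟩,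
      ⟨c, k, P.r c k + 1, hadm, le_rfl, Or.inr rfl⟩, ?_, ?_, ?_⟩
    · intro y hy
      refine Or.inl (hcov ?_)
      obtain ⟨⟨hy1, hy2⟩, hyIS⟩ := hy
      exact ⟨⟨by linarith, hy2⟩, hyIS⟩
    · refine le_trans (by simpa using diam_le_band (P := P) hsub) ?_
      exact ENNReal.ofReal_le_ofReal (by linarith)
    · refine le_trans (by simpa using diam_le_band (P := P) hsub) ?_
      exact ENNReal.ofReal_le_ofReal (by linarith)
  · obtain ⟨j, hj1, hj2, hj3, _⟩ := find_digit hR hx0' (by omega : 1 ≤ P.r c k + 1)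
    have hj2n : 2 ≤ j := by omega
    have hj2' : (2 : ℝ) ≤ (j : ℝ) := by exact_mod_cast hj2n
    have hrj : (P.r c k : ℝ) + 1 ≤ (j : ℝ) := by exact_mod_cast hj1
    by_cases hce : j = P.r c k + 1
    · -- inside the extreme child
      subst hce
      have hcD : P.RR c k / ((P.r c k + 1 : ℕ) : ℝ) = P.RR c k / ((P.r c k : ℝ) + 1) := by
        push_cast; ring_nf
      rw [hcD] at hj2
      set c' := Function.update c k (P.r c k + 1) with hc'
      have hadm' : P.AdmissibleUpTo c' (k + 1) := adm_update hadm le_rfl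
      have hD' : P.D c' (k + 1) = P.RR c k / ((P.r c k : ℝ) * ((P.r c k : ℝ) + 1)) :=
        D_update_top hadm
      have hgapD : P.D c k - P.RR c k / ((P.r c k : ℝ) + 1)
          = P.RR c k / ((P.r c k : ℝ) * ((P.r c k : ℝ) + 1)) := by
        have h := dsub_identity' (R := P.RR c k) (x := (P.r c k : ℝ) + 1)
          (by linarith) (by linarith)
        rw [show ((P.r c k : ℝ) + 1) - 1 = (P.r c k : ℝ) from by ring] at h
        rw [hDR]
        linarith [h]
      have hx1pos : 0 < P.D c k - hx := by linarith
      have hx1le : P.D c k - hx ≤ P.D c' (k + 1) := by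
        rw [hD', ← hgapD]
        linarith
      obtain ⟨U, V, hUmem, hVmem, hcov, hUd, hVd⟩ := sideA2 hadm' hx1pos hx1le
      refine ⟨U, V, hUmem, hVmem, ?_, hUd, hVd⟩
      rintro y ⟨⟨hy1, hy2⟩, hyIS⟩
      apply hcov
      refine ⟨⟨?_, ?_⟩, hyIS⟩
      · rw [hco_update_top hadm]
        linarith
      · rw [hco_update_top hadm]
        linarith
    · -- j ≥ r + 2
      have hj3' : hx ≤ P.RR c k / ((j : ℝ) - 1) := by
        rcases hj3 with he | h
        · exact absurd he hce
        · exact h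
      have hjge : P.r c k + 2 ≤ j := by omega
      have hjge' : (P.r c k : ℝ) + 2 ≤ (j : ℝ) := by exact_mod_cast hjge
      obtain ⟨hsubU, hcovU⟩ := cover_fin hadm (le_refl (P.r c k + 1))
        (show P.r c k + 1 ≤ j - 1 by omega)
      rw [hDtop, cast_sub_one (by omega : 1 ≤ j)] at hsubU hcovU
      have hUmem : (⋃ i ∈ Finset.Icc (P.r c k + 1) (j - 1),
          P.altCyl (Function.update c k i) (k + 1)) ∈ P.famAlt :=
        ⟨c, k, P.r c k + 1, hadm, le_rfl, Or.inl ⟨j - 1, by omega, rfl⟩⟩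
      have hUdiam : EMetric.diam (⋃ i ∈ Finset.Icc (P.r c k + 1) (j - 1),
          P.altCyl (Function.update c k i) (k + 1)) ≤ ENNReal.ofReal (P.D c k - hx) := by
        refine le_trans (diam_le_band (P := P) hsubU) (ENNReal.ofReal_le_ofReal ?_)
        linarith
      rcases eq_or_lt_of_le hj3' with heq | hlt
      · -- hx is exactly the inner boundary point : one union suffices
        refine ⟨_, _, hUmem, hUmem, ?_, hUdiam, hUdiam⟩
        rintro y ⟨⟨hy1, hy2⟩, hyIS⟩
        refine Or.inl (hcovU ⟨⟨?_, hy2⟩, hyIS⟩)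
        rw [← heq]
        exact hy1
      · -- also use a one-set cover inside child j
        set c' := Function.update c k j with hc'
        have hadm' : P.AdmissibleUpTo c' (k + 1) := adm_update hadm hj1
        have hD' : P.D c' (k + 1) = P.RR c k / (((j : ℝ) - 1) * (j : ℝ)) := D_update c k j
        have hrel : ∀ y, P.hco c' (k + 1) y = P.RR c k / ((j : ℝ) - 1) - P.hco c k y :=
          fun y => hco_update c k j y
        have hid : P.RR c k / ((j : ℝ) - 1) - P.RR c k / (((j : ℝ) - 1) * (j : ℝ))
            = P.RR c k / (j : ℝ) := dsub_identity (by linarith) (by linarith)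
        have hx'0 : 0 < P.RR c k / ((j : ℝ) - 1) - hx := by linarith
        have hx'le : P.RR c k / ((j : ℝ) - 1) - hx ≤ P.D c' (k + 1) := by
          rw [hD']
          linarith
        obtain ⟨V, s', hVmem, hVcov, hVdiam, hb1, hb2, hb3⟩ := sideA1 hadm' hx'0 hx'le
        have hVdiam' : EMetric.diam V ≤ ENNReal.ofReal (P.D c k - hx) := by
          refine le_trans hVdiam (ENNReal.ofReal_le_ofReal ?_)
          -- s' ≤ D - hx
          have h1 : P.D c' (k + 1) / 2
              ≤ P.RR c k / (((P.r c k : ℝ) + 1) * ((P.r c k : ℝ) + 2)) / 2 := by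
            rw [hD']
            have := divRle (R := P.RR c k) hR.le
              (u := ((P.r c k : ℝ) + 1) * ((P.r c k : ℝ) + 2))
              (v := ((j : ℝ) - 1) * (j : ℝ)) (by nlinarith) (by nlinarith)
            linarith
          have h2 : P.RR c k / (((P.r c k : ℝ) + 1) * ((P.r c k : ℝ) + 2)) / 2
              ≤ P.RR c k / ((P.r c k : ℝ) * ((P.r c k : ℝ) + 1)) := by
            rw [div_div]
            exact divRle hR.le (by nlinarith) (by nlinarith)
          have h3 : P.RR c k / ((P.r c k : ℝ) * ((P.r c k : ℝ) + 1)) ≤ P.D c k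
              - P.RR c k / ((j : ℝ) - 1) := by
            have ha := dsub_identity' (R := P.RR c k) (x := (P.r c k : ℝ) + 1)
              (by linarith) (by linarith)
            rw [show ((P.r c k : ℝ) + 1) - 1 = (P.r c k : ℝ) from by ring] at ha
            have hb : P.RR c k / ((j : ℝ) - 1) ≤ P.RR c k / ((P.r c k : ℝ) + 1) :=
              divRle hR.le (by linarith) (by linarith)
            rw [hDR]
            linarith
          linarith
        refine ⟨_, V, hUmem, hVmem, ?_, hUdiam, hVdiam'⟩
        rintro y ⟨⟨hy1, hy2⟩, hyIS⟩
        rcases lt_trichotomy (P.hco c k y) (P.RR c k / ((j : ℝ) - 1)) with hlt2 | heq2 | hgt2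
        · refine Or.inr (hVcov ⟨⟨?_, ?_⟩, hyIS⟩)
          · rw [hrel]
            linarith
          · rw [hrel]
            linarith
        · exfalso
          apply hyIS
          have := (hco_eq_iff c k).mp heq2
          rw [← cast_sub_one (by omega : 1 ≤ j)] at this
          rw [this]
          exact tpt_mem_IS hadm (by omega)
        · exact Or.inl (hcovU ⟨⟨hgt2, hy2⟩, hyIS⟩)


/- ===== stage 6: descent to a cylinder with an interior boundary point ===== -/

lemma hco_tpt (c : ℕ → ℕ) (k : ℕ) (t : ℝ) :
    P.hco c k (P.A c k + (-1 : ℝ) ^ k * t) = t := (hco_eq_iff c k).mpr rfl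

lemma descend_aux {x₁ x₂ : ℝ} (h₁₂ : x₁ < x₂) :
    ∀ F : ℕ, ∀ c : ℕ → ℕ, ∀ k : ℕ, P.AdmissibleUpTo c k → Ioo x₁ x₂ ⊆ P.clo c k →
      P.A c k ∉ Ioo x₁ x₂ → P.altEnd c k ∉ Ioo x₁ x₂ →
      P.D c k < (x₂ - x₁) * 2 ^ F →
      ∃ c' k', P.AdmissibleUpTo c' k' ∧ Ioo x₁ x₂ ⊆ P.clo c' k' ∧
        P.A c' k' ∉ Ioo x₁ x₂ ∧ P.altEnd c' k' ∉ Ioo x₁ x₂ ∧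
        ∃ i, P.r c' k' + 1 ≤ i ∧
          (P.A c' k' + (-1 : ℝ) ^ k' * (P.RR c' k' / (i : ℝ))) ∈ Ioo x₁ x₂ := by
  intro F
  induction F with
  | zero =>
    intro c k hadm hsub hA hE hD
    exfalso
    have hw := width_le h₁₂ hsub
    simp only [pow_zero, mul_one] at hD
    linarith
  | succ F ih =>
    intro c k hadm hsub hA hE hDF
    by_cases hex : ∃ i, P.r c k + 1 ≤ i ∧
        (P.A c k + (-1 : ℝ) ^ k * (P.RR c k / (i : ℝ))) ∈ Ioo x₁ x₂
    · exact ⟨c, k, hadm, hsub, hA, hE, hex⟩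
    · push_neg at hex
      have hrk := r_pos (P := P) c k
      have hR := RR_pos (P := P) hadm
      have hD := D_pos (P := P) hadm
      have hrk' : (1 : ℝ) ≤ (P.r c k : ℝ) := by exact_mod_cast hrk
      have hDR : P.D c k = P.RR c k / (P.r c k : ℝ) := (RR_div_r c k).symm
      set y₀ := (x₁ + x₂) / 2 with hy₀def
      have hy₀ : y₀ ∈ Ioo x₁ x₂ := ⟨by simp only [hy₀def]; linarith, by simp only [hy₀def]; linarith⟩
      obtain ⟨hy₀0, hy₀D⟩ := hsub hy₀
      have hy₀pos : 0 < P.hco c k y₀ := by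
        rcases eq_or_lt_of_le hy₀0 with he | h
        · exfalso
          apply hA
          have := (hco_eq_iff c k).mp he.symm
          simp only [mul_zero, add_zero] at this
          rw [← this]
          exact hy₀
        · exact h
      obtain ⟨j, hj1, hj2, hj3, _⟩ := find_digit hR hy₀pos (by omega : 1 ≤ P.r c k + 1)
      have hj2n : 2 ≤ j := by omega
      have hj2' : (2 : ℝ) ≤ (j : ℝ) := by exact_mod_cast hj2n
      have hrj : (P.r c k : ℝ) + 1 ≤ (j : ℝ) := by exact_mod_cast hj1
      have hupy : P.hco c k y₀ ≤ P.RR c k / ((j : ℝ) - 1) := by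
        rcases hj3 with he | h
        · subst he
          have hc : ((P.r c k + 1 : ℕ) : ℝ) - 1 = (P.r c k : ℝ) := by push_cast; ring
          rw [hc, ← hDR]
          exact hy₀D
        · exact h
      have hclaim : ∀ y ∈ Ioo x₁ x₂,
          P.RR c k / (j : ℝ) ≤ P.hco c k y ∧ P.hco c k y ≤ P.RR c k / ((j : ℝ) - 1) := by
        intro y hy
        constructor
        · by_contra hlt
          push_neg at hlt
          refine hex j hj1 ?_
          apply mem_Ioo_of_hco_between hy₀ hy
          rw [hco_tpt]
          exact Or.inr ⟨hlt.le, hj2.le⟩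
        · by_cases hcej : j = P.r c k + 1
          · subst hcej
            have hc : ((P.r c k + 1 : ℕ) : ℝ) - 1 = (P.r c k : ℝ) := by push_cast; ring
            rw [hc, ← hDR]
            exact (hsub hy).2
          · by_contra hgt
            push_neg at hgt
            refine hex (j - 1) (by omega) ?_
            apply mem_Ioo_of_hco_between hy₀ hy
            rw [hco_tpt, cast_sub_one (by omega : 1 ≤ j)]
            exact Or.inl ⟨hupy, hgt.le⟩
      set c' := Function.update c k j with hc'
      have hadm' : P.AdmissibleUpTo c' (k + 1) := adm_update hadm hj1
      have hD' : P.D c' (k + 1) = P.RR c k / (((j : ℝ) - 1) * (j : ℝ)) := D_update c k j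
      have hrel : ∀ y, P.hco c' (k + 1) y = P.RR c k / ((j : ℝ) - 1) - P.hco c k y :=
        fun y => hco_update c k j y
      have hid : P.RR c k / ((j : ℝ) - 1) - P.RR c k / (((j : ℝ) - 1) * (j : ℝ))
          = P.RR c k / (j : ℝ) := dsub_identity (by linarith) (by linarith)
      have hsub' : Ioo x₁ x₂ ⊆ P.clo c' (k + 1) := by
        intro y hy
        obtain ⟨ha, hb⟩ := hclaim y hy
        refine ⟨?_, ?_⟩
        · rw [hrel]
          linarith
        · rw [hrel, hD']
          linarith
      have hA' : P.A c' (k + 1) ∉ Ioo x₁ x₂ := by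
        have hAv : P.A c' (k + 1) = P.A c k + (-1 : ℝ) ^ k * (P.RR c k / ((j : ℝ) - 1)) :=
          A_update c k j
        by_cases hcej : j = P.r c k + 1
        · subst hcej
          have hc : ((P.r c k + 1 : ℕ) : ℝ) - 1 = (P.r c k : ℝ) := by push_cast; ring
          rw [hAv, hc, RR_div_r]
          exact hE
        · rw [hAv, ← cast_sub_one (by omega : 1 ≤ j)]
          exact hex (j - 1) (by omega)
      have hE' : P.altEnd c' (k + 1) ∉ Ioo x₁ x₂ := by
        have hEv : P.altEnd c' (k + 1) = P.A c k + (-1 : ℝ) ^ k * (P.RR c k / (j : ℝ)) :=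
          altEnd_update (P := P) c k (by omega)
        rw [hEv]
        exact hex j hj1
      have hD'le : P.D c' (k + 1) ≤ P.D c k / 2 := by
        rw [hD', hDR, div_div]
        exact divRle hR.le (by nlinarith) (by nlinarith)
      have hnext : P.D c' (k + 1) < (x₂ - x₁) * 2 ^ F := by
        have hp : (0 : ℝ) < 2 ^ F := by positivity
        rw [pow_succ] at hDF
        nlinarith
      exact ih c' (k + 1) hadm' hsub' hA' hE' hnext

lemma descend {x₁ x₂ : ℝ} (h₀ : 0 ≤ x₁) (h₁₂ : x₁ < x₂) (h₁ : x₂ ≤ 1) :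
    ∃ c k, P.AdmissibleUpTo c k ∧ Ioo x₁ x₂ ⊆ P.clo c k ∧
      P.A c k ∉ Ioo x₁ x₂ ∧ P.altEnd c k ∉ Ioo x₁ x₂ ∧
      ∃ i, P.r c k + 1 ≤ i ∧
        (P.A c k + (-1 : ℝ) ^ k * (P.RR c k / (i : ℝ))) ∈ Ioo x₁ x₂ := by
  obtain ⟨F, hF⟩ := pow_unbounded_of_one_lt (R := ℝ) ((x₂ - x₁)⁻¹) (by norm_num : (1 : ℝ) < 2)
  set c0 : ℕ → ℕ := fun _ => 0 with hc0
  have hadm0 : P.AdmissibleUpTo c0 0 := fun i hi => absurd hi (by omega)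
  have hA0 : P.A c0 0 = 0 := by simp [PerronSystem.A]
  have hD0 : P.D c0 0 = 1 := by simp [PerronSystem.D, PerronSystem.rprod, qprod]
  have hco0 : ∀ y, P.hco c0 0 y = y := by
    intro y
    simp [PerronSystem.hco, hA0]
  have hsub0 : Ioo x₁ x₂ ⊆ P.clo c0 0 := by
    rintro y ⟨hy1, hy2⟩
    refine ⟨?_, ?_⟩
    · rw [hco0]
      linarith
    · rw [hco0, hD0]
      linarith
  have hA0' : P.A c0 0 ∉ Ioo x₁ x₂ := by
    rw [hA0]
    rintro ⟨hlt, _⟩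
    linarith
  have hE0 : P.altEnd c0 0 ∉ Ioo x₁ x₂ := by
    have h1' : P.altEnd c0 0 = 1 := by
      unfold PerronSystem.altEnd
      rw [hA0, hD0]
      norm_num
    rw [h1']
    rintro ⟨_, hgt⟩
    linarith
  have hDF : P.D c0 0 < (x₂ - x₁) * 2 ^ F := by
    rw [hD0]
    have hpos : 0 < x₂ - x₁ := by linarith
    have := mul_lt_mul_of_pos_left hF hpos
    rw [mul_inv_cancel₀ hpos.ne'] at this
    linarith
  exact descend_aux h₁₂ F c0 0 hadm0 hsub0 hA0' hE0 hDF

end PerronAux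
/-- Every set `U = (x₁,x₂) \ IS^{P⁻}` with `0 ≤ x₁ < x₂ ≤ 1` can be covered by
at most three sets from `𝔓⁻`, each of diameter at most `x₂ − x₁`. -/
theorem cover_by_three_famAlt (P : PerronSystem) (x₁ x₂ : ℝ)
    (h₀ : 0 ≤ x₁) (h₁₂ : x₁ < x₂) (h₁ : x₂ ≤ 1) :
    ∃ U₁ U₂ U₃ : Set ℝ, U₁ ∈ P.famAlt ∧ U₂ ∈ P.famAlt ∧ U₃ ∈ P.famAlt ∧
      Set.Ioo x₁ x₂ \ P.IS ⊆ U₁ ∪ U₂ ∪ U₃ ∧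
      EMetric.diam U₁ ≤ ENNReal.ofReal (x₂ - x₁) ∧
      EMetric.diam U₂ ≤ ENNReal.ofReal (x₂ - x₁) ∧
      EMetric.diam U₃ ≤ ENNReal.ofReal (x₂ - x₁) := by
  classical
  obtain ⟨c, k, hadm, hsub, hA, hE, i₀, hi₀1, hi₀2⟩ := descend (P := P) h₀ h₁₂ h₁
  have hrk := r_pos (P := P) c k
  have hR := RR_pos (P := P) hadm
  have hD := D_pos (P := P) hadm
  have hrk' : (1 : ℝ) ≤ (P.r c k : ℝ) := by exact_mod_cast hrk
  have hDR : P.D c k = P.RR c k / (P.r c k : ℝ) := (RR_div_r c k).symm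
  set a := min (P.hco c k x₁) (P.hco c k x₂) with hadef
  set b := max (P.hco c k x₁) (P.hco c k x₂) with hbdef
  have hioo : ∀ y, y ∈ Ioo x₁ x₂ ↔ a < P.hco c k y ∧ P.hco c k y < b :=
    fun y => Ioo_iff_band h₁₂ y
  have hba : b - a = x₂ - x₁ := band_width h₁₂
  obtain ⟨⟨he1a, he1b⟩, ⟨he2a, he2b⟩⟩ := endpoints_mem h₁₂ hsub
  have ha0 : 0 ≤ a := le_min he1a he2a
  have hbD : b ≤ P.D c k := max_le he1b he2b
  have hexS : ∃ i : ℕ, P.r c k + 1 ≤ i ∧ a < P.RR c k / (i : ℝ) ∧ P.RR c k / (i : ℝ) < b := by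
    refine ⟨i₀, hi₀1, ?_, ?_⟩
    · have := ((hioo _).mp hi₀2).1
      rwa [hco_tpt] at this
    · have := ((hioo _).mp hi₀2).2
      rwa [hco_tpt] at this
  obtain ⟨n, hn1, hn2, hn3, hnmin⟩ :
      ∃ n, P.r c k + 1 ≤ n ∧ a < P.RR c k / (n : ℝ) ∧ P.RR c k / (n : ℝ) < b ∧
        ∀ i, P.r c k + 1 ≤ i → a < P.RR c k / (i : ℝ) → P.RR c k / (i : ℝ) < b → n ≤ i :=
    ⟨Nat.find hexS, (Nat.find_spec hexS).1, (Nat.find_spec hexS).2.1,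
      (Nat.find_spec hexS).2.2, fun i h1 h2 h3 => Nat.find_min' hexS ⟨h1, h2, h3⟩⟩
  have hn2n : 2 ≤ n := by omega
  have hn2' : (2 : ℝ) ≤ (n : ℝ) := by exact_mod_cast hn2n
  have hrn : (P.r c k : ℝ) + 1 ≤ (n : ℝ) := by exact_mod_cast hn1
  have hbub : b ≤ P.RR c k / ((n : ℝ) - 1) := by
    by_contra hgt
    push_neg at hgt
    by_cases hne : n = P.r c k + 1
    · rw [hne] at hgt
      have hc : ((P.r c k + 1 : ℕ) : ℝ) - 1 = (P.r c k : ℝ) := by push_cast; ring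
      rw [hc, ← hDR] at hgt
      linarith
    · have hlt1 : a < P.RR c k / ((n - 1 : ℕ) : ℝ) := by
        rw [cast_sub_one (by omega : 1 ≤ n)]
        have : P.RR c k / (n : ℝ) < P.RR c k / ((n : ℝ) - 1) :=
          divRlt hR (by linarith) (by linarith)
        linarith
      have hlt2 : P.RR c k / ((n - 1 : ℕ) : ℝ) < b := by
        rw [cast_sub_one (by omega : 1 ≤ n)]
        exact hgt
      have := hnmin (n - 1) (by omega) hlt1 hlt2
      omega
  -- data of the child `n` (the one hugging the piece on the `b`-side)
  have hadmn : P.AdmissibleUpTo (Function.update c k n) (k + 1) := adm_update hadm hn1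
  have hDn : P.D (Function.update c k n) (k + 1)
      = P.RR c k / (((n : ℝ) - 1) * (n : ℝ)) := D_update c k n
  have hreln : ∀ y, P.hco (Function.update c k n) (k + 1) y
      = P.RR c k / ((n : ℝ) - 1) - P.hco c k y := fun y => hco_update c k n y
  have hidn : P.RR c k / ((n : ℝ) - 1) - P.RR c k / (((n : ℝ) - 1) * (n : ℝ))
      = P.RR c k / (n : ℝ) := dsub_identity (by linarith) (by linarith)
  have hxE0 : 0 ≤ P.RR c k / ((n : ℝ) - 1) - b := by linarith
  have hxED : P.RR c k / ((n : ℝ) - 1) - b < P.D (Function.update c k n) (k + 1) := by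
    rw [hDn]
    linarith
  have hDnE : P.D (Function.update c k n) (k + 1) - (P.RR c k / ((n : ℝ) - 1) - b)
      = b - P.RR c k / (n : ℝ) := by
    rw [hDn]
    linarith
  rcases eq_or_lt_of_le ha0 with ha0' | hapos
  · -- a = 0 : one exact tail on the A-side, two sets on the E-side
    obtain ⟨hsub1, hcov1⟩ := cover_inf hadm (show P.r c k + 1 ≤ n + 1 by omega)
    have hcn : ((n + 1 : ℕ) : ℝ) - 1 = (n : ℝ) := by push_cast; ring
    rw [hcn] at hsub1 hcov1
    obtain ⟨U₂, U₃, hm2, hm3, hcov23, hd2, hd3⟩ := sideE2 hadmn hxE0 hxED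
    refine ⟨_, U₂, U₃, ⟨c, k, n + 1, hadm, by omega, Or.inr rfl⟩, hm2, hm3, ?_, ?_, ?_, ?_⟩
    · rintro y ⟨hy, hyIS⟩
      obtain ⟨hya, hyb⟩ := (hioo y).mp hy
      rcases lt_trichotomy (P.hco c k y) (P.RR c k / (n : ℝ)) with hlt | heq | hgt
      · exact Or.inl (Or.inl (hcov1 ⟨⟨by linarith, hlt⟩, hyIS⟩))
      · refine absurd (?_ : y ∈ P.IS) hyIS
        rw [(hco_eq_iff c k).mp heq]
        exact tpt_mem_IS hadm (by omega)
      · have hmem : y ∈ U₂ ∪ U₃ := by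
          apply hcov23
          refine ⟨⟨?_, ?_⟩, hyIS⟩
          · rw [hreln]
            linarith
          · rw [hreln, hDn]
            linarith
        rcases hmem with h | h
        · exact Or.inl (Or.inr h)
        · exact Or.inr h
    · refine le_trans (by simpa using diam_le_band (P := P) hsub1)
        (ENNReal.ofReal_le_ofReal ?_)
      linarith
    · refine le_trans hd2 (ENNReal.ofReal_le_ofReal ?_)
      rw [hDnE]
      linarith
    · refine le_trans hd3 (ENNReal.ofReal_le_ofReal ?_)
      rw [hDnE]
      linarith
  · -- a > 0 : there is a largest boundary digit m
    obtain ⟨N, hN⟩ := exists_nat_gt (P.RR c k / a)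
    have hbound : ∀ i : ℕ, (P.r c k + 1 ≤ i ∧ a < P.RR c k / (i : ℝ)
        ∧ P.RR c k / (i : ℝ) < b) → i ≤ N := by
      rintro i ⟨h1, h2, h3⟩
      have hi0 : (0 : ℝ) < (i : ℝ) := by exact_mod_cast (by omega : 0 < i)
      have h4 : a * (i : ℝ) < P.RR c k := (lt_div_iff₀ hi0).mp h2
      have h5 : (i : ℝ) < P.RR c k / a := (lt_div_iff₀ hapos).mpr (by linarith)
      have h6 : (i : ℝ) < (N : ℝ) := lt_trans h5 hN
      exact_mod_cast h6.le
    obtain ⟨m, hm1, hm2, hm3, hmax⟩ :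
        ∃ m, P.r c k + 1 ≤ m ∧ a < P.RR c k / (m : ℝ) ∧ P.RR c k / (m : ℝ) < b ∧
          ∀ i, P.r c k + 1 ≤ i → a < P.RR c k / (i : ℝ) → P.RR c k / (i : ℝ) < b → i ≤ m := by
      have hspec := Nat.findGreatest_spec (P := fun i => P.r c k + 1 ≤ i ∧
          a < P.RR c k / (i : ℝ) ∧ P.RR c k / (i : ℝ) < b)
        (hbound n ⟨hn1, hn2, hn3⟩) ⟨hn1, hn2, hn3⟩
      exact ⟨_, hspec.1, hspec.2.1, hspec.2.2,
        fun i h1 h2 h3 => Nat.le_findGreatest (hbound i ⟨h1, h2, h3⟩) ⟨h1, h2, h3⟩⟩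
    have hnm : n ≤ m := hnmin m hm1 hm2 hm3
    have hm2' : (2 : ℝ) ≤ (m : ℝ) := by exact_mod_cast (by omega : 2 ≤ m)
    have hrm : (P.r c k : ℝ) + 1 ≤ (m : ℝ) := by exact_mod_cast hm1
    have hcm : ((m + 1 : ℕ) : ℝ) = (m : ℝ) + 1 := by push_cast; ring
    have ham1 : P.RR c k / ((m : ℝ) + 1) ≤ a := by
      by_contra hgt
      push_neg at hgt
      have hlt1 : a < P.RR c k / ((m + 1 : ℕ) : ℝ) := by
        rw [hcm]
        exact hgt
      have hlt2 : P.RR c k / ((m + 1 : ℕ) : ℝ) < b := by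
        rw [hcm]
        have : P.RR c k / ((m : ℝ) + 1) < P.RR c k / (m : ℝ) :=
          divRlt hR (by linarith) (by linarith)
        linarith
      have := hmax (m + 1) (by omega) hlt1 hlt2
      omega
    have hadma : P.AdmissibleUpTo (Function.update c k (m + 1)) (k + 1) :=
      adm_update hadm (by omega)
    have hDm : P.D (Function.update c k (m + 1)) (k + 1)
        = P.RR c k / ((m : ℝ) * ((m : ℝ) + 1)) := by
      rw [D_update, hcm]
      ring_nf
    have hrelm : ∀ y, P.hco (Function.update c k (m + 1)) (k + 1) y
        = P.RR c k / (m : ℝ) - P.hco c k y := by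
      intro y
      rw [hco_update, hcm]
      ring_nf
    have hidm : P.RR c k / (m : ℝ) - P.RR c k / ((m : ℝ) * ((m : ℝ) + 1))
        = P.RR c k / ((m : ℝ) + 1) := by
      have h := dsub_identity (R := P.RR c k) (x := (m : ℝ) + 1) (by linarith) (by linarith)
      rw [show ((m : ℝ) + 1) - 1 = (m : ℝ) from by ring] at h
      exact h
    have hxApos : 0 < P.RR c k / (m : ℝ) - a := by linarith
    have hxAle : P.RR c k / (m : ℝ) - a ≤ P.D (Function.update c k (m + 1)) (k + 1) := by
      rw [hDm]
      linarith
    rcases eq_or_lt_of_le hnm with hem | hltnm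
    · -- n = m : a single boundary point inside
      subst hem
      rcases le_total (P.RR c k / (n : ℝ) - a) (b - P.RR c k / (n : ℝ)) with hside | hside
      · -- A-side piece is the smaller one : sideA1 + sideE2
        obtain ⟨U₁, s, hmem1, hcov1, hd1, hs1, hs2, _⟩ := sideA1 hadma hxApos hxAle
        obtain ⟨U₂, U₃, hmem2, hmem3, hcov23, hd2, hd3⟩ := sideE2 hadmn hxE0 hxED
        refine ⟨U₁, U₂, U₃, hmem1, hmem2, hmem3, ?_, ?_, ?_, ?_⟩
        · rintro y ⟨hy, hyIS⟩
          obtain ⟨hya, hyb⟩ := (hioo y).mp hy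
          rcases lt_trichotomy (P.hco c k y) (P.RR c k / (n : ℝ)) with hlt2 | heq | hgt
          · refine Or.inl (Or.inl (hcov1 ⟨⟨?_, ?_⟩, hyIS⟩))
            · rw [hrelm]
              linarith
            · rw [hrelm]
              linarith
          · refine absurd (?_ : y ∈ P.IS) hyIS
            rw [(hco_eq_iff c k).mp heq]
            exact tpt_mem_IS hadm (by omega)
          · have hmem : y ∈ U₂ ∪ U₃ := by
              apply hcov23
              refine ⟨⟨?_, ?_⟩, hyIS⟩
              · rw [hreln]
                linarith
              · rw [hreln, hDn]
                linarith
            rcases hmem with h | h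
            · exact Or.inl (Or.inr h)
            · exact Or.inr h
        · refine le_trans hd1 (ENNReal.ofReal_le_ofReal ?_)
          linarith
        · refine le_trans hd2 (ENNReal.ofReal_le_ofReal ?_)
          rw [hDnE]
          linarith
        · refine le_trans hd3 (ENNReal.ofReal_le_ofReal ?_)
          rw [hDnE]
          linarith
      · -- E-side piece is the smaller one : sideE1 + sideA2
        obtain ⟨U₁, s, hmem1, hcov1, hd1, hs0, hs1, hs2, _⟩ := sideE1 hadmn hxE0 hxED
        obtain ⟨U₂, U₃, hmem2, hmem3, hcov23, hd2, hd3⟩ := sideA2 hadma hxApos hxAle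
        refine ⟨U₁, U₂, U₃, hmem1, hmem2, hmem3, ?_, ?_, ?_, ?_⟩
        · rintro y ⟨hy, hyIS⟩
          obtain ⟨hya, hyb⟩ := (hioo y).mp hy
          rcases lt_trichotomy (P.hco c k y) (P.RR c k / (n : ℝ)) with hlt2 | heq | hgt
          · have hmem : y ∈ U₂ ∪ U₃ := by
              apply hcov23
              refine ⟨⟨?_, ?_⟩, hyIS⟩
              · rw [hrelm]
                linarith
              · rw [hrelm]
                linarith
            rcases hmem with h | h
            · exact Or.inl (Or.inr h)
            · exact Or.inr h
          · refine absurd (?_ : y ∈ P.IS) hyIS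
            rw [(hco_eq_iff c k).mp heq]
            exact tpt_mem_IS hadm (by omega)
          · refine Or.inl (Or.inl (hcov1 ⟨⟨?_, ?_⟩, hyIS⟩))
            · rw [hreln]
              linarith
            · rw [hreln, hDn]
              linarith
        · refine le_trans hd1 (ENNReal.ofReal_le_ofReal ?_)
          have h1 : P.D (Function.update c k n) (k + 1) - s
              = (b - P.RR c k / (n : ℝ)) + ((P.RR c k / ((n : ℝ) - 1) - b) - s) := by
            rw [← hDnE]
            ring
          linarith [hDnE]
        · refine le_trans hd2 (ENNReal.ofReal_le_ofReal ?_)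
          linarith
        · refine le_trans hd3 (ENNReal.ofReal_le_ofReal ?_)
          linarith
    · -- n < m : middle part present
      obtain ⟨hsubM, hcovM⟩ := cover_fin hadm (show P.r c k + 1 ≤ n + 1 by omega)
        (show n + 1 ≤ m by omega)
      have hcn : ((n + 1 : ℕ) : ℝ) - 1 = (n : ℝ) := by push_cast; ring
      rw [hcn] at hsubM hcovM
      obtain ⟨U₁, sA, hmemA, hcovA, hdA, hsA1, hsA2, hsA3⟩ := sideA1 hadma hxApos hxAle
      obtain ⟨U₃, sE, hmemE, hcovE, hdE, hsE0, hsE1, hsE2, hsE3⟩ := sideE1 hadmn hxE0 hxED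
      have hnm1 : (n : ℝ) ≤ (m : ℝ) - 1 := by
        have hc2 : (n : ℝ) + 1 ≤ (m : ℝ) := by exact_mod_cast hltnm
        linarith only [hc2]
      have hgm : P.RR c k / ((m : ℝ) - 1) - P.RR c k / (m : ℝ)
          = P.RR c k / (((m : ℝ) - 1) * (m : ℝ)) :=
        dsub_identity' (ne_of_gt (show (0:ℝ) < (m:ℝ) - 1 by linarith only [hm2']))
          (ne_of_gt (show (0:ℝ) < (m:ℝ) by linarith only [hm2']))
      have hRm1 : P.RR c k / ((m : ℝ) - 1) ≤ P.RR c k / (n : ℝ) :=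
        divRle hR.le (by linarith only [hn2']) hnm1
      have hDm2 : P.D (Function.update c k (m + 1)) (k + 1) / 2
          ≤ P.RR c k / (((m : ℝ) - 1) * (m : ℝ)) := by
        rw [hDm, div_div]
        refine divRle hR.le ?_ ?_
        · nlinarith only [hm2']
        · nlinarith only [hm2']
      have hgn : P.RR c k / (n : ℝ) - P.RR c k / ((n : ℝ) + 1)
          = P.RR c k / ((n : ℝ) * ((n : ℝ) + 1)) := by
        have h := dsub_identity' (R := P.RR c k) (x := (n : ℝ) + 1)
          (ne_of_gt (show (0:ℝ) < (n:ℝ) + 1 - 1 by linarith only [hn2']))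
          (ne_of_gt (show (0:ℝ) < (n:ℝ) + 1 by linarith only [hn2']))
        rw [show ((n : ℝ) + 1) - 1 = (n : ℝ) from by ring] at h
        exact h
      have hRn1 : P.RR c k / (m : ℝ) ≤ P.RR c k / ((n : ℝ) + 1) := by
        refine divRle hR.le ?_ ?_
        · linarith only [hn2']
        · have hc2 : (n : ℝ) + 1 ≤ (m : ℝ) := by exact_mod_cast hltnm
          linarith only [hc2]
      have hDn4 : P.D (Function.update c k n) (k + 1) / 4
          ≤ P.RR c k / ((n : ℝ) * ((n : ℝ) + 1)) := by
        rw [hDn, div_div]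
        refine divRle hR.le ?_ ?_
        · nlinarith only [hn2']
        · nlinarith only [hn2']
      refine ⟨U₁, _, U₃, hmemA,
        ⟨c, k, n + 1, hadm, by omega, Or.inl ⟨m, by omega, rfl⟩⟩, hmemE, ?_, ?_, ?_, ?_⟩
      · rintro y ⟨hy, hyIS⟩
        obtain ⟨hya, hyb⟩ := (hioo y).mp hy
        rcases lt_trichotomy (P.hco c k y) (P.RR c k / (m : ℝ)) with hltm | heqm | hgtm
        · refine Or.inl (Or.inl (hcovA ⟨⟨?_, ?_⟩, hyIS⟩))
          · rw [hrelm]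
            linarith only [hltm]
          · rw [hrelm]
            linarith only [hya, hsA1]
        · refine absurd (?_ : y ∈ P.IS) hyIS
          rw [(hco_eq_iff c k).mp heqm]
          exact tpt_mem_IS hadm (by omega)
        · rcases lt_trichotomy (P.hco c k y) (P.RR c k / (n : ℝ)) with hltn | heqn | hgtn
          · exact Or.inl (Or.inr (hcovM ⟨⟨hgtm, hltn⟩, hyIS⟩))
          · refine absurd (?_ : y ∈ P.IS) hyIS
            rw [(hco_eq_iff c k).mp heqn]
            exact tpt_mem_IS hadm (by omega)
          · refine Or.inr (hcovE ⟨⟨?_, ?_⟩, hyIS⟩)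
            · rw [hreln]
              linarith only [hyb, hsE1]
            · rw [hreln, hDn]
              linarith only [hgtn, hidn]
      · refine le_trans hdA (ENNReal.ofReal_le_ofReal ?_)
        linarith only [hsA3, hDm2, hgm, hRm1, hn3, hba]
      · refine le_trans (diam_le_band (P := P) hsubM) (ENNReal.ofReal_le_ofReal ?_)
        linarith only [hm2, hn3, hba]
      · refine le_trans hdE (ENNReal.ofReal_le_ofReal ?_)
        linarith only [hsE2, hsE3, hDn4, hgn, hRn1, hm2, hba, hDnE]
end

section
/- Let P be a Perron system, let (c₁,…,c_k) be a P-admissible word, let n ≥ r_k + 1, and let M = ⋃_{i=n}^{∞} Δ^P_{c₁…c_k i} be the corresponding countable union in 𝔓. Then for every ε > 0 and every α > 0 there exists a strictly increasing sequence of integers (t_j)_{j≥1} with t₁ = n such that, setting M_j = ⋃_{i=t_j}^{t_{j+1}−1} Δ^P_{c₁…c_k i} (a finite union of consecutive cylinders), one has M = ⋃_{j=1}^{∞} M_j and ∑_{j=1}^{∞} |M_j|^α < |M|^α · (1 + ε). -/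
open Set Filter MeasureTheory
open scoped ENNReal

section AuxLemmas

namespace PerronSystem

lemma r_update (P : PerronSystem) (c : ℕ → ℕ) (k i m : ℕ) (hm : m ≤ k) :
    P.r (Function.update c k i) m = P.r c m := by
  unfold r
  congr 1
  rw [List.ofFn_inj]
  funext j
  exact Function.update_of_ne (by omega : (j : ℕ) ≠ k) i c

lemma rprod_update (P : PerronSystem) (c : ℕ → ℕ) (k i m : ℕ) (hm : m ≤ k + 1) :
    P.rprod (Function.update c k i) m = P.rprod c m := by
  unfold rprod
  refine Finset.prod_congr rfl fun j hj => ?_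
  have := Finset.mem_range.mp hj
  rw [P.r_update c k i j (by omega)]

lemma qprod_update (c : ℕ → ℕ) (k i m : ℕ) (hm : m ≤ k) :
    qprod (Function.update c k i) m = qprod c m := by
  unfold qprod
  refine Finset.prod_congr rfl fun j hj => ?_
  have := Finset.mem_range.mp hj
  rw [Function.update_of_ne (by omega : j ≠ k) i c]

lemma rprod_pos (P : PerronSystem) (c : ℕ → ℕ) (m : ℕ) : 0 < P.rprod c m := by
  refine Finset.prod_pos fun j _ => ?_
  exact_mod_cast P.φ_pos _

lemma qprod_pos (c : ℕ → ℕ) (m : ℕ) (h : ∀ j < m, 2 ≤ c j) : 0 < qprod c m := by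
  refine Finset.prod_pos fun j hj => ?_
  have h2 : (2 : ℝ) ≤ (c j : ℝ) := by exact_mod_cast h j (Finset.mem_range.mp hj)
  nlinarith

lemma cyl_update (P : PerronSystem) (c : ℕ → ℕ) (k : ℕ) (hadm : P.AdmissibleUpTo c k)
    (i : ℕ) (hi : 2 ≤ i) :
    P.cyl (Function.update c k i) (k + 1) =
      Set.Ioc (P.S c k + P.rprod c (k + 1) / (qprod c k * (i : ℝ)))
        (P.S c k + P.rprod c (k + 1) / (qprod c k * ((i : ℝ) - 1))) := by
  have hc2 : ∀ j < k, 2 ≤ c j := fun j hj => by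
    have h1 := hadm j hj
    have h2 := P.φ_pos (List.ofFn fun t : Fin j => c t)
    unfold PerronSystem.r at h1
    omega
  have hQ : 0 < qprod c k := qprod_pos c k hc2
  have hR : 0 < P.rprod c (k + 1) := P.rprod_pos c (k + 1)
  have hiR : (2 : ℝ) ≤ (i : ℝ) := by exact_mod_cast hi
  have hS : P.S (Function.update c k i) (k + 1)
      = P.S c k + P.rprod c (k + 1) / (qprod c k * (i : ℝ)) := by
    unfold S
    rw [Finset.sum_range_succ]
    congr 1
    · refine Finset.sum_congr rfl fun m hm => ?_
      have hmk := Finset.mem_range.mp hm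
      rw [P.rprod_update c k i (m + 1) (by omega), qprod_update c k i m (by omega),
        Function.update_of_ne (by omega : m ≠ k) i c]
    · rw [P.rprod_update c k i (k + 1) le_rfl, qprod_update c k i k le_rfl,
        Function.update_self]
  have hqu : qprod (Function.update c k i) (k + 1) = qprod c k * (((i : ℝ) - 1) * (i : ℝ)) := by
    conv_lhs => rw [qprod]
    rw [Finset.prod_range_succ, Function.update_self]
    congr 1
    exact qprod_update c k i k le_rfl
  have hD : P.D (Function.update c k i) (k + 1)
      = P.rprod c (k + 1) / (qprod c k * (((i : ℝ) - 1) * (i : ℝ))) := by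
    unfold D
    rw [P.rprod_update c k i (k + 1) le_rfl, hqu]
  have h1 : (i : ℝ) ≠ 0 := by linarith
  have h2 : (i : ℝ) - 1 ≠ 0 := by linarith
  have h3 : qprod c k ≠ 0 := ne_of_gt hQ
  have hhigh : P.S c k + P.rprod c (k + 1) / (qprod c k * (i : ℝ))
      + P.rprod c (k + 1) / (qprod c k * (((i : ℝ) - 1) * (i : ℝ)))
      = P.S c k + P.rprod c (k + 1) / (qprod c k * ((i : ℝ) - 1)) := by
    field_simp
    ring
  unfold cyl
  rw [hS, hD, hhigh]

/-- For a strictly monotone `t : ℕ → ℕ`, every `i ≥ t 0` lies in some `[t j, t (j+1))`. -/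
lemma exists_nat_interval (t : ℕ → ℕ) (ht : StrictMono t) (i : ℕ) (hi : t 0 ≤ i) :
    ∃ j, t j ≤ i ∧ i < t (j + 1) := by
  have hub : ∃ j, i < t j := ⟨i + 1, lt_of_lt_of_le (Nat.lt_succ_self i) ht.le_apply⟩
  have hj0 : i < t (Nat.find hub) := Nat.find_spec hub
  have hne : Nat.find hub ≠ 0 := by
    intro h
    rw [h] at hj0
    omega
  refine ⟨Nat.find hub - 1, ?_, ?_⟩
  · by_contra hcon
    push_neg at hcon
    exact Nat.find_min hub (by omega) hcon
  · have : Nat.find hub - 1 + 1 = Nat.find hub := by omega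
    rw [this]
    exact hj0

lemma pow_rpow_comm (q : ℝ≥0∞) (j : ℕ) (α : ℝ) : (q ^ j) ^ α = (q ^ α) ^ j := by
  rw [← ENNReal.rpow_natCast q j, ← ENNReal.rpow_natCast (q ^ α) j,
    ← ENNReal.rpow_mul, ← ENNReal.rpow_mul, mul_comm]

end PerronSystem

end AuxLemmas

/-- Every countable union `M = ⋃_{i=n}^{∞} Δ^P_{c₁…c_k i} ∈ 𝔓` can be split
into finite unions `M_j = ⋃_{i=t_j}^{t_{j+1}−1} Δ^P_{c₁…c_k i}` of consecutive cylinders with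
`∑_j |M_j|^α < |M|^α (1 + ε)`. -/
theorem countable_union_split (P : PerronSystem) (c : ℕ → ℕ) (k : ℕ)
    (hadm : P.AdmissibleUpTo c k) (n : ℕ) (hn : P.r c k + 1 ≤ n)
    (ε α : ℝ) (hε : 0 < ε) (hα : 0 < α) :
    ∃ t : ℕ → ℕ, t 0 = n ∧ StrictMono t ∧
      (⋃ i ∈ {j : ℕ | n ≤ j}, P.cyl (Function.update c k i) (k + 1)) =
        (⋃ j : ℕ, ⋃ i ∈ Finset.Ico (t j) (t (j + 1)), P.cyl (Function.update c k i) (k + 1)) ∧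
      ∑' j : ℕ,
          (EMetric.diam (⋃ i ∈ Finset.Ico (t j) (t (j + 1)),
            P.cyl (Function.update c k i) (k + 1))) ^ α <
        (EMetric.diam (⋃ i ∈ {j : ℕ | n ≤ j},
            P.cyl (Function.update c k i) (k + 1))) ^ α * ENNReal.ofReal (1 + ε) := by
  classical
  have hrpos : 1 ≤ P.r c k := P.φ_pos _
  have hn2 : 2 ≤ n := by omega
  have hc2 : ∀ j < k, 2 ≤ c j := fun j hj => by
    have h1 := hadm j hj
    have h2 := P.φ_pos (List.ofFn fun t : Fin j => c t)
    unfold PerronSystem.r at h1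
    omega
  have hQ : 0 < qprod c k := PerronSystem.qprod_pos c k hc2
  have hR : 0 < P.rprod c (k + 1) := P.rprod_pos c (k + 1)
  set s : ℝ := P.S c k with hs
  set a : ℝ := P.rprod c (k + 1) / qprod c k with ha
  have hapos : 0 < a := div_pos hR hQ
  have hcyl : ∀ i : ℕ, 2 ≤ i →
      P.cyl (Function.update c k i) (k + 1)
        = Ioc (s + a / (i : ℝ)) (s + a / ((i : ℝ) - 1)) := by
    intro i hi
    rw [P.cyl_update c k hadm i hi, ha, ← div_div, ← div_div]
  have hn1R : (0 : ℝ) < (n : ℝ) - 1 := by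
    have : (2 : ℝ) ≤ (n : ℝ) := by exact_mod_cast hn2
    linarith
  -- the infinite union is an interval
  have hMeq : (⋃ i ∈ {j : ℕ | n ≤ j}, P.cyl (Function.update c k i) (k + 1))
      = Ioc s (s + a / ((n : ℝ) - 1)) := by
    ext x
    simp only [mem_iUnion, mem_setOf_eq, exists_prop, mem_Ioc]
    constructor
    · rintro ⟨i, hi, hx⟩
      rw [hcyl i (by omega)] at hx
      obtain ⟨h1, h2⟩ := hx
      have hiR : (2 : ℝ) ≤ (i : ℝ) := by exact_mod_cast (show 2 ≤ i by omega)
      have hi1 : (0 : ℝ) < (i : ℝ) - 1 := by linarith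
      have hle : a / ((i : ℝ) - 1) ≤ a / ((n : ℝ) - 1) := by
        have hni : ((n : ℝ)) ≤ (i : ℝ) := by exact_mod_cast hi
        apply div_le_div_of_nonneg_left hapos.le hn1R
        linarith
      have hpos : 0 < a / (i : ℝ) := by positivity
      exact ⟨by linarith, by linarith⟩
    · rintro ⟨h1, h2⟩
      set y := x - s with hy
      have hy0 : 0 < y := by simp only [hy]; linarith
      have hyle : y ≤ a / ((n : ℝ) - 1) := by simp only [hy]; linarith
      have hflge : (n - 1 : ℕ) ≤ ⌊a / y⌋₊ := by
        apply Nat.le_floor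
        have hcast : ((n - 1 : ℕ) : ℝ) = (n : ℝ) - 1 := by
          push_cast [Nat.cast_sub (by omega : 1 ≤ n)]
          ring
        rw [hcast, le_div_iff₀ hy0]
        calc ((n : ℝ) - 1) * y ≤ ((n : ℝ) - 1) * (a / ((n : ℝ) - 1)) := by
              exact mul_le_mul_of_nonneg_left hyle hn1R.le
          _ = a := by field_simp
      set i : ℕ := ⌊a / y⌋₊ + 1 with hidef
      have hfl1 : 1 ≤ ⌊a / y⌋₊ := by omega
      have hin : n ≤ i := by omega
      have hiR1 : ((i : ℕ) : ℝ) - 1 = (⌊a / y⌋₊ : ℝ) := by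
        simp only [hidef]
        push_cast
        ring
      have hiRpos : (0 : ℝ) < (i : ℝ) := by
        exact_mod_cast Nat.succ_pos _
      refine ⟨i, hin, ?_⟩
      rw [hcyl i (by omega)]
      have h3 : a / y < (i : ℝ) := by
        have hlt := Nat.lt_floor_add_one (a / y)
        have : ((i : ℕ) : ℝ) = (⌊a / y⌋₊ : ℝ) + 1 := by
          simp only [hidef]; push_cast; ring
        rw [this]
        exact hlt
      have h4 : a / (i : ℝ) < y := by
        rw [div_lt_iff₀ hiRpos]
        have := (div_lt_iff₀ hy0).mp h3
        linarith
      have h6 : 0 < (i : ℝ) - 1 := by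
        rw [hiR1]; exact_mod_cast hfl1
      have h5 : ((i : ℝ) - 1) ≤ a / y := by
        rw [hiR1]; exact Nat.floor_le (by positivity)
      have h7 : y ≤ a / ((i : ℝ) - 1) := by
        rw [le_div_iff₀ h6]
        have := (le_div_iff₀ hy0).mp h5
        linarith
      constructor
      · simp only [hy] at h4; linarith
      · simp only [hy] at h7; linarith
  have hMdiam : EMetric.diam (⋃ i ∈ {j : ℕ | n ≤ j}, P.cyl (Function.update c k i) (k + 1))
      = ENNReal.ofReal (a / ((n : ℝ) - 1)) := by
    rw [hMeq]; exact (Real.ediam_Ioc _ _).trans (by rw [add_sub_cancel_left])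
  -- choose K
  obtain ⟨K, hKgt, hK2⟩ : ∃ K : ℕ, (1 + ε) / ε < (K : ℝ) ^ α ∧ 2 ≤ K := by
    have h1 : Tendsto (fun K : ℕ => (K : ℝ) ^ α) atTop atTop :=
      (tendsto_rpow_atTop hα).comp tendsto_natCast_atTop_atTop
    exact ((h1.eventually_gt_atTop _).and (eventually_ge_atTop 2)).exists
  have hK0 : (0 : ℝ) < (K : ℝ) := by exact_mod_cast (show 0 < K by omega)
  set t : ℕ → ℕ := fun j => (n - 1) * K ^ j + 1 with htdef
  have ht0 : t 0 = n := by simp only [htdef, pow_zero, mul_one]; omega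
  have htmono : StrictMono t := by
    intro u v huv
    have hpow : K ^ u < K ^ v := Nat.pow_lt_pow_right (by omega) huv
    have h1 : 0 < n - 1 := by omega
    simp only [htdef]
    exact Nat.add_lt_add_right (mul_lt_mul_of_pos_left hpow h1) 1
  have htn : ∀ j, n ≤ t j := fun j => by
    have h1 : 1 ≤ K ^ j := Nat.one_le_pow _ _ (by omega)
    have h2 : n - 1 ≤ (n - 1) * K ^ j := Nat.le_mul_of_pos_right _ (by omega)
    calc n ≤ n - 1 + 1 := by omega
      _ ≤ (n - 1) * K ^ j + 1 := Nat.add_le_add_right h2 1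
  have ht1 : ∀ j, ((t j : ℕ) : ℝ) - 1 = ((n : ℝ) - 1) * (K : ℝ) ^ j := by
    intro j
    simp only [htdef]
    push_cast [Nat.cast_sub (by omega : 1 ≤ n)]
    ring
  refine ⟨t, ht0, htmono, ?_, ?_⟩
  · -- set equality
    ext x
    simp only [mem_iUnion, mem_setOf_eq, exists_prop, Finset.mem_Ico]
    constructor
    · rintro ⟨i, hi, hx⟩
      obtain ⟨j, hj1, hj2⟩ := PerronSystem.exists_nat_interval t htmono i (by omega)
      exact ⟨j, i, ⟨hj1, hj2⟩, hx⟩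
    · rintro ⟨j, i, ⟨hj1, hj2⟩, hx⟩
      exact ⟨i, le_trans (htn j) hj1, hx⟩
  · -- the sum estimate
    set X : ℝ≥0∞ := ENNReal.ofReal (a / ((n : ℝ) - 1)) with hX
    set q : ℝ≥0∞ := ENNReal.ofReal ((1 : ℝ) / K) with hq
    set ρ : ℝ := ((1 : ℝ) / K) ^ α with hρ
    have hρ0 : 0 ≤ ρ := by rw [hρ]; positivity
    have hKR1 : (1 : ℝ) / K < 1 := by
      rw [div_lt_one hK0]
      exact_mod_cast (show 1 < K by omega)
    have hρ1 : ρ < 1 := by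
      rw [hρ]
      exact Real.rpow_lt_one (by positivity) hKR1 hα
    have hqρ : q ^ α = ENNReal.ofReal ρ := by
      rw [hq, hρ, ← ENNReal.ofReal_rpow_of_pos (by positivity)]
    have hterm : ∀ j : ℕ,
        (EMetric.diam (⋃ i ∈ Finset.Ico (t j) (t (j + 1)),
          P.cyl (Function.update c k i) (k + 1))) ^ α ≤ X ^ α * (ENNReal.ofReal ρ) ^ j := by
      intro j
      have htj2 : 2 ≤ t j := le_trans hn2 (htn j)
      have htjR : (0 : ℝ) < ((t j : ℕ) : ℝ) - 1 := by
        rw [ht1 j]; positivity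
      have hsub : (⋃ i ∈ Finset.Ico (t j) (t (j + 1)), P.cyl (Function.update c k i) (k + 1))
          ⊆ Ioc s (s + a / (((t j : ℕ) : ℝ) - 1)) := by
        refine Set.iUnion₂_subset fun i hi => ?_
        have hi1 : t j ≤ i := (Finset.mem_Ico.mp hi).1
        have hi2 : 2 ≤ i := le_trans htj2 hi1
        rw [hcyl i hi2]
        have hiR : (2 : ℝ) ≤ (i : ℝ) := by exact_mod_cast hi2
        refine Ioc_subset_Ioc (le_add_of_nonneg_right (by positivity)) (add_le_add (le_refl s) ?_)
        apply div_le_div_of_nonneg_left hapos.le htjR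
        have : ((t j : ℕ) : ℝ) ≤ (i : ℝ) := by exact_mod_cast hi1
        linarith
      have hdiamj : EMetric.diam (⋃ i ∈ Finset.Ico (t j) (t (j + 1)),
          P.cyl (Function.update c k i) (k + 1)) ≤ ENNReal.ofReal (a / (((t j : ℕ) : ℝ) - 1)) := by
        calc EMetric.diam _ ≤ EMetric.diam (Ioc s (s + a / (((t j : ℕ) : ℝ) - 1))) :=
              EMetric.diam_mono hsub
          _ = ENNReal.ofReal (s + a / (((t j : ℕ) : ℝ) - 1) - s) := Real.ediam_Ioc _ _
          _ = ENNReal.ofReal (a / (((t j : ℕ) : ℝ) - 1)) := by rw [add_sub_cancel_left]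
      have hsplit : ENNReal.ofReal (a / (((t j : ℕ) : ℝ) - 1)) = X * q ^ j := by
        have hreal : a / (((t j : ℕ) : ℝ) - 1) = (a / ((n : ℝ) - 1)) * ((1 : ℝ) / K) ^ j := by
          rw [ht1 j]
          have hK0' : (K : ℝ) ≠ 0 := ne_of_gt hK0
          have hn1' : (n : ℝ) - 1 ≠ 0 := ne_of_gt hn1R
          field_simp
          rw [← mul_pow, mul_one_div_cancel hK0', one_pow]
        rw [hreal, ENNReal.ofReal_mul (by positivity), hX, hq, ENNReal.ofReal_pow (by positivity)]
      calc (EMetric.diam (⋃ i ∈ Finset.Ico (t j) (t (j + 1)),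
            P.cyl (Function.update c k i) (k + 1))) ^ α
          ≤ (ENNReal.ofReal (a / (((t j : ℕ) : ℝ) - 1))) ^ α :=
            ENNReal.rpow_le_rpow hdiamj hα.le
        _ = (X * q ^ j) ^ α := by rw [hsplit]
        _ = X ^ α * (q ^ j) ^ α := ENNReal.mul_rpow_of_nonneg _ _ hα.le
        _ = X ^ α * (q ^ α) ^ j := by rw [PerronSystem.pow_rpow_comm]
        _ = X ^ α * (ENNReal.ofReal ρ) ^ j := by rw [hqρ]
    have hXne0 : X ≠ 0 := by
      rw [hX]
      simp only [ne_eq, ENNReal.ofReal_eq_zero, not_le]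
      positivity
    have hXnetop : X ≠ ⊤ := ENNReal.ofReal_ne_top
    have hXα0 : X ^ α ≠ 0 := by
      simp only [ne_eq, ENNReal.rpow_eq_zero_iff, not_or]
      exact ⟨fun h => hXne0 h.1, fun h => hXnetop h.1⟩
    have hXαtop : X ^ α ≠ ⊤ := ENNReal.rpow_ne_top_of_nonneg hα.le hXnetop
    have hgeom : ∑' j : ℕ, (ENNReal.ofReal ρ) ^ j = ENNReal.ofReal ((1 - ρ)⁻¹) := by
      have h1 : ∀ j : ℕ, (ENNReal.ofReal ρ) ^ j = ENNReal.ofReal (ρ ^ j) := fun j =>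
        (ENNReal.ofReal_pow hρ0 j).symm
      rw [tsum_congr h1, ← ENNReal.ofReal_tsum_of_nonneg (fun j => pow_nonneg hρ0 j)
        (summable_geometric_of_lt_one hρ0 hρ1), tsum_geometric_of_lt_one hρ0 hρ1]
    have hreallt : (1 - ρ)⁻¹ < 1 + ε := by
      have hb0 : (0 : ℝ) < (K : ℝ) ^ α := Real.rpow_pos_of_pos hK0 α
      have hρb : ρ = ((K : ℝ) ^ α)⁻¹ := by
        rw [hρ, one_div, Real.inv_rpow hK0.le]
      have hεb : 1 + ε < (K : ℝ) ^ α * ε := by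
        have := (div_lt_iff₀ hε).mp hKgt
        linarith
      have hb1 : 1 < (K : ℝ) ^ α := by nlinarith
      have h1ρ : 0 < 1 - ρ := by linarith
      have key : (1 - ρ)⁻¹ = (K : ℝ) ^ α / ((K : ℝ) ^ α - 1) := by
        rw [hρb]
        field_simp
      rw [key, div_lt_iff₀ (by linarith : (0 : ℝ) < (K : ℝ) ^ α - 1)]
      nlinarith
    calc ∑' j : ℕ, (EMetric.diam (⋃ i ∈ Finset.Ico (t j) (t (j + 1)),
          P.cyl (Function.update c k i) (k + 1))) ^ α
        ≤ ∑' j : ℕ, X ^ α * (ENNReal.ofReal ρ) ^ j := ENNReal.tsum_le_tsum hterm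
      _ = X ^ α * ∑' j : ℕ, (ENNReal.ofReal ρ) ^ j := ENNReal.tsum_mul_left
      _ = X ^ α * ENNReal.ofReal ((1 - ρ)⁻¹) := by rw [hgeom]
      _ < X ^ α * ENNReal.ofReal (1 + ε) := by
          rw [ENNReal.mul_lt_mul_iff_right hXα0 hXαtop]
          exact (ENNReal.ofReal_lt_ofReal_iff (by linarith)).mpr hreallt
      _ = (EMetric.diam (⋃ i ∈ {j : ℕ | n ≤ j},
            P.cyl (Function.update c k i) (k + 1))) ^ α * ENNReal.ofReal (1 + ε) := by
          rw [hMdiam]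
end

section
/- For every set 𝔐 of nondecreasing integer sequences with first term ≥ 2, dim_H { E'(σ(c)) : c ∈ 𝔐 } ≤ dim_H { E(c) : c ∈ 𝔐 }, where dim_H denotes the Hausdorff dimension. (Equivalently, the map T sending the classical Engel expansion with digits (c_n) to the modified Engel expansion with digits (c_n + n − 1) satisfies dim_H T(E) ≤ dim_H E for every E ⊆ (0,1].) -/
open Filter

noncomputable section

/-- The classical Engel series `E(c) = ∑_{n≥1} 1/(c₁c₂⋯c_n)` (0-based: `c 0 = c₁`). -/
def engel (c : ℕ → ℕ) : ℝ :=
  ∑' n : ℕ, 1 / ∏ i ∈ Finset.range (n + 1), (c i : ℝ)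

/-- The modified Engel series
`E'(c) = 1/c₁ + ∑_{n≥1} 1/((c₁−1)(c₂−1)⋯(c_n−1)·c_{n+1})` (0-based: `c 0 = c₁`). -/
def modEngel (c : ℕ → ℕ) : ℝ :=
  1 / (c 0 : ℝ) +
    ∑' n : ℕ, 1 / ((∏ i ∈ Finset.range (n + 1), ((c i : ℝ) - 1)) * (c (n + 1) : ℝ))

/-- The digit shift `σ(c)_n = c_n + n − 1` (0-based: `σ(c) (n-1) = c (n-1) + (n-1)`). -/
def engelShift (c : ℕ → ℕ) : ℕ → ℕ := fun n => c n + n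

/-- The Pierce series in Perron notation
`Π(c) = ∑_{n≥0} (−1)^n/((c₁−1)⋯(c_n−1)(c_{n+1}−1))` (0-based: `c 0 = c₁`). -/
def pierce (c : ℕ → ℕ) : ℝ :=
  ∑' n : ℕ, (-1 : ℝ) ^ n / ((∏ i ∈ Finset.range n, ((c i : ℝ) - 1)) * ((c n : ℝ) - 1))

/-- The traditional Pierce series `Π̃(d) = ∑_{n≥1} (−1)^{n+1}/(d₁d₂⋯d_n)` (0-based: `d 0 = d₁`). -/
def pierceTrad (d : ℕ → ℕ) : ℝ :=
  ∑' n : ℕ, (-1 : ℝ) ^ n / ∏ i ∈ Finset.range (n + 1), (d i : ℝ)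

end

namespace EngelAux

open Finset

noncomputable section

/-- tail of a sequence -/
def tl (c : ℕ → ℕ) : ℕ → ℕ := fun i => c (i + 1)

def et (c : ℕ → ℕ) (m : ℕ) : ℝ := 1 / ∏ i ∈ range (m + 1), (c i : ℝ)

def mt (n : ℕ) (c : ℕ → ℕ) (m : ℕ) : ℝ :=
  1 / ((∏ i ∈ range (m + 1), ((c i : ℝ) + n + i - 1)) * ((c (m + 1) : ℝ) + n + (m + 1)))

def G (n : ℕ) (c : ℕ → ℕ) : ℝ := 1 / ((c 0 : ℝ) + n) + ∑' m, mt n c m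

end

variable {c : ℕ → ℕ}

lemma two_le (hm : Monotone c) (h2 : 2 ≤ c 0) (i : ℕ) : 2 ≤ c i :=
  h2.trans (hm (Nat.zero_le i))

lemma two_leR (hm : Monotone c) (h2 : 2 ≤ c 0) (i : ℕ) : (2 : ℝ) ≤ (c i : ℝ) := by
  exact_mod_cast two_le hm h2 i

lemma tl_mono (hm : Monotone c) : Monotone (tl c) := fun i j hij => hm (Nat.succ_le_succ hij)

lemma tl_two (hm : Monotone c) (h2 : 2 ≤ c 0) : 2 ≤ tl c 0 := h2.trans (hm (Nat.zero_le 1))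

-- ### positivity and summability

lemma prod_pos_of_ge_one {f : ℕ → ℝ} (h : ∀ i, (1:ℝ) ≤ f i) (s : Finset ℕ) :
    0 < ∏ i ∈ s, f i :=
  Finset.prod_pos fun i _ => zero_lt_one.trans_le (h i)

lemma prod_ge_two_pow {f : ℕ → ℝ} (h0 : 1 ≤ f 0) (h : ∀ i, 1 ≤ i → 2 ≤ f i) (m : ℕ) :
    (2:ℝ) ^ m ≤ ∏ i ∈ range (m + 1), f i := by
  induction m with
  | zero => simpa using h0
  | succ m ih =>
      rw [Finset.prod_range_succ, pow_succ]
      have h2 : (2:ℝ) ≤ f (m + 1) := h (m+1) (Nat.succ_le_succ (Nat.zero_le m))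
      have hp : (0:ℝ) < 2 ^ m := by positivity
      nlinarith

lemma et_pos (hm : Monotone c) (h2 : 2 ≤ c 0) (m : ℕ) : 0 < et c m := by
  have : 0 < ∏ i ∈ range (m + 1), (c i : ℝ) :=
    Finset.prod_pos fun i _ => by have := two_leR hm h2 i; linarith
  exact div_pos one_pos this

lemma summable_half : Summable (fun m : ℕ => (1/2 : ℝ) ^ m) :=
  summable_geometric_of_lt_one (by norm_num) (by norm_num)

lemma et_le_half (hm : Monotone c) (h2 : 2 ≤ c 0) (m : ℕ) : et c m ≤ (1/2 : ℝ) ^ m := by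
  have hp : (2:ℝ) ^ m ≤ ∏ i ∈ range (m + 1), (c i : ℝ) := by
    refine prod_ge_two_pow ?_ (fun i _ => two_leR hm h2 i) m
    linarith [two_leR hm h2 0]
  have h2p : (0:ℝ) < 2 ^ m := by positivity
  rw [one_div, inv_pow, ← one_div]
  exact one_div_le_one_div_of_le h2p hp

lemma summable_et (hm : Monotone c) (h2 : 2 ≤ c 0) : Summable (et c) :=
  Summable.of_nonneg_of_le (fun m => (et_pos hm h2 m).le) (et_le_half hm h2) summable_half

lemma engel_eq : engel c = ∑' m, et c m := rfl

lemma engel_rec (hm : Monotone c) (h2 : 2 ≤ c 0) :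
    engel c = 1 / (c 0 : ℝ) + (1 / (c 0 : ℝ)) * engel (tl c) := by
  have hsum := summable_et hm h2
  have h0 : et c 0 = 1 / (c 0 : ℝ) := by simp [et]
  have key : ∀ m, et c (m + 1) = (1 / (c 0 : ℝ)) * et (tl c) m := by
    intro m
    unfold et tl
    rw [Finset.prod_range_succ' (fun i => (c i : ℝ)) (m + 1), one_div_mul_one_div]
    congr 1
    ring
  rw [engel_eq, Summable.tsum_eq_zero_add hsum, h0, tsum_congr key, tsum_mul_left, engel_eq]

lemma engel_nonneg (hm : Monotone c) (h2 : 2 ≤ c 0) : 0 ≤ engel c :=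
  tsum_nonneg fun m => (et_pos hm h2 m).le

lemma engel_lb (hm : Monotone c) (h2 : 2 ≤ c 0) : 1 / (c 0 : ℝ) ≤ engel c := by
  have ht := engel_nonneg (tl_mono hm) (tl_two hm h2)
  have hc : (0:ℝ) < (c 0 : ℝ) := by have := two_leR hm h2 0; linarith
  rw [engel_rec hm h2]
  have : 0 ≤ (1 / (c 0 : ℝ)) * engel (tl c) := by positivity
  linarith

lemma engel_ub (hm : Monotone c) (h2 : 2 ≤ c 0) : engel c ≤ 1 / ((c 0 : ℝ) - 1) := by
  have hc := two_leR hm h2 0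
  set r : ℝ := 1 / (c 0 : ℝ) with hr
  have hr0 : 0 ≤ r := by positivity
  have hr1 : r < 1 := by
    rw [hr, div_lt_one (by linarith)]; linarith
  have hle : ∀ m, et c m ≤ r ^ (m + 1) := by
    intro m
    have hp : (c 0 : ℝ) ^ (m + 1) ≤ ∏ i ∈ range (m + 1), (c i : ℝ) := by
      have := Finset.prod_le_prod (f := fun _ => (c 0 : ℝ)) (g := fun i => (c i : ℝ))
        (s := range (m + 1)) (fun i _ => by linarith)
        (fun i _ => Nat.cast_le.mpr (hm (Nat.zero_le i)))
      simpa using this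
    have hpow : (0:ℝ) < (c 0 : ℝ) ^ (m + 1) := by positivity
    rw [hr, one_div, inv_pow, ← one_div]
    exact one_div_le_one_div_of_le hpow hp
  have hsum2 : Summable (fun m : ℕ => r ^ (m + 1)) := by
    have := (summable_geometric_of_lt_one hr0 hr1).mul_left r
    refine this.congr fun m => ?_
    rw [← pow_succ']
  have := Summable.tsum_le_tsum hle (summable_et hm h2) hsum2
  rw [engel_eq]
  refine this.trans ?_
  have : ∑' m : ℕ, r ^ (m + 1) = r * (1 - r)⁻¹ := by
    calc ∑' m : ℕ, r ^ (m + 1) = ∑' m : ℕ, r * r ^ m := by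
          refine tsum_congr fun m => ?_; rw [← pow_succ']
      _ = r * ∑' m : ℕ, r ^ m := tsum_mul_left
      _ = r * (1 - r)⁻¹ := by rw [tsum_geometric_of_lt_one hr0 hr1]
  rw [this, hr]
  have h1 : (c 0 : ℝ) ≠ 0 := by linarith
  have h1' : (c 0 : ℝ) - 1 ≠ 0 := by intro h; nlinarith
  have key : 1 / (c 0 : ℝ) * (1 - 1 / (c 0 : ℝ))⁻¹ = 1 / ((c 0 : ℝ) - 1) := by
    rw [show (1 : ℝ) - 1 / (c 0 : ℝ) = ((c 0 : ℝ) - 1) / (c 0 : ℝ) by field_simp]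
    field_simp
  rw [key]

-- ### the modified Engel tails `G`

lemma mtf_ge_one (hm : Monotone c) (h2 : 2 ≤ c 0) (n : ℕ) (i : ℕ) :
    (1:ℝ) ≤ (c i : ℝ) + n + i - 1 := by
  have := two_leR hm h2 i
  have hn : (0:ℝ) ≤ (n:ℝ) := Nat.cast_nonneg n
  have hi : (0:ℝ) ≤ (i:ℝ) := Nat.cast_nonneg i
  linarith

lemma mt_denom_pos (hm : Monotone c) (h2 : 2 ≤ c 0) (n m : ℕ) :
    0 < (∏ i ∈ range (m + 1), ((c i : ℝ) + n + i - 1)) * ((c (m + 1) : ℝ) + n + (m + 1)) := by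
  have h1 : 0 < ∏ i ∈ range (m + 1), ((c i : ℝ) + n + i - 1) :=
    prod_pos_of_ge_one (mtf_ge_one hm h2 n) _
  have hL : (0:ℝ) < (c (m + 1) : ℝ) + n + (m + 1) := by
    have := two_leR hm h2 (m + 1)
    have hn : (0:ℝ) ≤ (n:ℝ) := Nat.cast_nonneg n
    have hmm : (0:ℝ) ≤ ((m + 1 : ℕ):ℝ) := Nat.cast_nonneg _
    push_cast at hmm ⊢
    linarith
  exact mul_pos h1 hL

lemma mt_pos (hm : Monotone c) (h2 : 2 ≤ c 0) (n m : ℕ) : 0 < mt n c m :=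
  div_pos one_pos (mt_denom_pos hm h2 n m)

lemma mt_le_half (hm : Monotone c) (h2 : 2 ≤ c 0) (n m : ℕ) : mt n c m ≤ (1/2 : ℝ) ^ m := by
  have hp : (2:ℝ) ^ m ≤ ∏ i ∈ range (m + 1), ((c i : ℝ) + n + i - 1) := by
    refine prod_ge_two_pow ?_ ?_ m
    · simpa using mtf_ge_one hm h2 n 0
    · intro i hi
      have h1 := two_leR hm h2 i
      have h2' : (1:ℝ) ≤ (i:ℝ) := by exact_mod_cast hi
      have hn : (0:ℝ) ≤ (n:ℝ) := Nat.cast_nonneg n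
      linarith
  have hL : (1:ℝ) ≤ (c (m + 1) : ℝ) + n + (m + 1) := by
    have := two_leR hm h2 (m + 1)
    have hn : (0:ℝ) ≤ (n:ℝ) := Nat.cast_nonneg n
    have hmm : (0:ℝ) ≤ ((m + 1 : ℕ):ℝ) := Nat.cast_nonneg _
    push_cast at hmm ⊢
    linarith
  have h2p : (0:ℝ) < 2 ^ m := by positivity
  have hhalf : (1/2 : ℝ) ^ m = 1 / 2 ^ m := by rw [div_pow, one_pow]
  rw [mt, hhalf]
  refine one_div_le_one_div_of_le h2p ?_
  nlinarith

lemma summable_mt (hm : Monotone c) (h2 : 2 ≤ c 0) (n : ℕ) : Summable (mt n c) :=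
  Summable.of_nonneg_of_le (fun m => (mt_pos hm h2 n m).le) (mt_le_half hm h2 n) summable_half

lemma G_rec (hm : Monotone c) (h2 : 2 ≤ c 0) (n : ℕ) :
    G n c = 1 / ((c 0 : ℝ) + n) + (1 / ((c 0 : ℝ) + n - 1)) * G (n + 1) (tl c) := by
  have hsum := summable_mt hm h2 n
  have key : ∀ m, mt n c (m + 1) = (1 / ((c 0 : ℝ) + n - 1)) * mt (n + 1) (tl c) m := by
    intro m
    have prodeq : ∏ i ∈ range (m + 1), ((tl c i : ℝ) + (n + 1 : ℕ) + i - 1)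
        = ∏ i ∈ range (m + 1), ((c (i + 1) : ℝ) + n + (i + 1 : ℕ) - 1) :=
      Finset.prod_congr rfl fun i _ => by push_cast [tl]; ring
    unfold mt
    rw [Finset.prod_range_succ' (fun i => (c i : ℝ) + n + i - 1) (m + 1), prodeq,
      one_div_mul_one_div]
    congr 1
    push_cast [tl]
    ring
  have mt0 : mt n c 0 = (1 / ((c 0 : ℝ) + n - 1)) * (1 / ((tl c 0 : ℝ) + (n + 1 : ℕ))) := by
    unfold mt tl
    rw [Finset.prod_range_one, one_div_mul_one_div]
    congr 1
    push_cast
    ring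
  rw [G, Summable.tsum_eq_zero_add hsum, mt0, tsum_congr key, tsum_mul_left, G]
  ring

lemma G_lb (hm : Monotone c) (h2 : 2 ≤ c 0) (n : ℕ) : 1 / ((c 0 : ℝ) + n) ≤ G n c :=
  le_add_of_nonneg_right (tsum_nonneg fun m => (mt_pos hm h2 n m).le)

lemma telescope_aux {a : ℝ} (ha2 : 2 ≤ a) (m : ℕ) :
    1 / (∏ i ∈ range (m + 2), (a + (i:ℝ) - 1)) - 1 / (∏ i ∈ range (m + 1 + 2), (a + (i:ℝ) - 1))
      = 1 / ((∏ i ∈ range (m + 1), (a + (i:ℝ) - 1)) * (a + ((m + 1 : ℕ):ℝ))) := by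
  have hfac : ∀ i : ℕ, (1:ℝ) ≤ a + i - 1 := fun i => by
    have : (0:ℝ) ≤ (i:ℝ) := Nat.cast_nonneg i
    linarith
  have e2 : ∏ i ∈ range (m + 2), (a + (i:ℝ) - 1)
      = (∏ i ∈ range (m + 1), (a + (i:ℝ) - 1)) * (a + ((m + 1 : ℕ):ℝ) - 1) :=
    Finset.prod_range_succ _ (m + 1)
  have e1 : ∏ i ∈ range (m + 1 + 2), (a + (i:ℝ) - 1)
      = (∏ i ∈ range (m + 2), (a + (i:ℝ) - 1)) * (a + ((m + 2 : ℕ):ℝ) - 1) :=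
    Finset.prod_range_succ _ (m + 2)
  have hApos : 0 < ∏ i ∈ range (m + 1), (a + (i:ℝ) - 1) := prod_pos_of_ge_one hfac _
  rw [e1, e2]
  generalize hP : (∏ i ∈ range (m + 1), (a + (i:ℝ) - 1)) = P at hApos ⊢
  have hPne : P ≠ 0 := hApos.ne'
  have h1 : a + ((m:ℝ) + 1) - 1 ≠ 0 := by
    have := hfac (m + 1); push_cast at this; intro h; rw [h] at this; linarith
  have h2' : a + ((m:ℝ) + 2) - 1 ≠ 0 := by
    have := hfac (m + 2); push_cast at this; intro h; rw [h] at this; linarith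
  have hq' : a + ((m:ℝ) + 1) ≠ 0 := by
    have := hfac (m + 1); push_cast at this; intro h; rw [h] at this; linarith
  push_cast
  field_simp
  ring

lemma G_ub (hm : Monotone c) (h2 : 2 ≤ c 0) (n : ℕ) : G n c ≤ 1 / ((c 0 : ℝ) + n - 1) := by
  set a : ℝ := (c 0 : ℝ) + n with ha
  have ha2 : (2:ℝ) ≤ a := by
    have := two_leR hm h2 0
    have hn : (0:ℝ) ≤ (n:ℝ) := Nat.cast_nonneg n
    rw [ha]; linarith
  have hfac : ∀ i : ℕ, (1:ℝ) ≤ a + i - 1 := fun i => by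
    have : (0:ℝ) ≤ (i:ℝ) := Nat.cast_nonneg i
    linarith
  set u : ℕ → ℝ := fun m => 1 / ∏ i ∈ range (m + 2), (a + i - 1) with hu
  have hprodpos : ∀ k : ℕ, (0:ℝ) < ∏ i ∈ range k, (a + i - 1) :=
    fun k => prod_pos_of_ge_one hfac _
  have hstep : ∀ m, mt n c m ≤ u m - u (m + 1) := by
    intro m
    have hA : ∏ i ∈ range (m + 1), (a + i - 1)
        ≤ ∏ i ∈ range (m + 1), ((c i : ℝ) + n + i - 1) := by
      refine Finset.prod_le_prod (fun i _ => by linarith [hfac i]) (fun i _ => ?_)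
      have : (c 0 : ℝ) ≤ (c i : ℝ) := Nat.cast_le.mpr (hm (Nat.zero_le i))
      rw [ha]; linarith
    have hL : a + (m + 1 : ℕ) ≤ (c (m + 1) : ℝ) + n + (m + 1 : ℕ) := by
      have : (c 0 : ℝ) ≤ (c (m + 1) : ℝ) := Nat.cast_le.mpr (hm (Nat.zero_le _))
      rw [ha]; linarith
    have hq : (0:ℝ) < a + (m + 1 : ℕ) := by
      have : (0:ℝ) ≤ ((m + 1 : ℕ):ℝ) := Nat.cast_nonneg _
      linarith
    have hid : u m - u (m + 1)
        = 1 / ((∏ i ∈ range (m + 1), (a + i - 1)) * (a + (m + 1 : ℕ))) := by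
      rw [hu]
      exact telescope_aux ha2 m
    rw [hid, mt]
    refine one_div_le_one_div_of_le (mul_pos (hprodpos (m + 1)) hq) ?_
    have hApos := hprodpos (m + 1)
    have hAnn : (0:ℝ) ≤ ∏ i ∈ range (m + 1), ((c i : ℝ) + n + i - 1) := le_trans hApos.le hA
    push_cast at hL hq ⊢
    exact mul_le_mul hA hL hq.le hAnn
  have hsumle : ∑' m, mt n c m ≤ u 0 := by
    refine Summable.tsum_le_of_sum_range_le (summable_mt hm h2 n) fun M => ?_
    calc ∑ m ∈ range M, mt n c m ≤ ∑ m ∈ range M, (u m - u (m + 1)) :=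
          Finset.sum_le_sum fun m _ => hstep m
      _ = u 0 - u M := Finset.sum_range_sub' u M
      _ ≤ u 0 := by
          have : 0 < u M := div_pos one_pos (hprodpos (M + 2))
          linarith
  have hu0 : u 0 = 1 / ((a - 1) * a) := by
    rw [hu]
    simp only
    rw [Finset.prod_range_succ, Finset.prod_range_one]
    norm_num
  have : G n c ≤ 1 / a + 1 / ((a - 1) * a) := by
    rw [G, ← ha, ← hu0]
    linarith [hsumle]
  refine this.trans ?_
  have h1 : a ≠ 0 := by linarith
  have h2' : a - 1 ≠ 0 := by intro h; linarith [h]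
  have h2'' : a - 1 > 0 := by linarith
  rw [show (1:ℝ) / a + 1 / ((a - 1) * a) = 1 / (a - 1) by field_simp; ring]

-- ### anti-monotonicity in the digits

lemma engel_anti (j : ℕ) : ∀ (c c' : ℕ → ℕ), Monotone c → 2 ≤ c 0 → Monotone c' → 2 ≤ c' 0 →
    (∀ i, i < j → c i = c' i) → c j < c' j → engel c' ≤ engel c := by
  induction j with
  | zero =>
      intro c c' hm h2 hm' h2' _ hlt
      have h1 := engel_ub hm' h2'
      have h2'' := engel_lb hm h2
      have hcast : (c 0 : ℝ) ≤ (c' 0 : ℝ) - 1 := by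
        have : (c 0 : ℝ) + 1 ≤ (c' 0 : ℝ) := by exact_mod_cast hlt
        linarith
      have hpos : (0:ℝ) < (c 0 : ℝ) := by have := two_leR hm h2 0; linarith
      have := one_div_le_one_div_of_le hpos hcast
      linarith
  | succ j ih =>
      intro c c' hm h2 hm' h2' hagree hlt
      have h0 : c 0 = c' 0 := hagree 0 (Nat.succ_pos j)
      have ht := ih (tl c) (tl c') (tl_mono hm) (tl_two hm h2) (tl_mono hm') (tl_two hm' h2')
        (fun i hi => hagree (i + 1) (Nat.succ_lt_succ hi)) hlt
      rw [engel_rec hm h2, engel_rec hm' h2', ← h0]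
      have hpos : (0:ℝ) < 1 / (c 0 : ℝ) := by
        have := two_leR hm h2 0; positivity
      nlinarith

lemma G_anti (j : ℕ) : ∀ (n : ℕ) (c c' : ℕ → ℕ), Monotone c → 2 ≤ c 0 → Monotone c' → 2 ≤ c' 0 →
    (∀ i, i < j → c i = c' i) → c j < c' j → G n c' ≤ G n c := by
  induction j with
  | zero =>
      intro n c c' hm h2 hm' h2' _ hlt
      have h1 := G_ub hm' h2' n
      have h2'' := G_lb hm h2 n
      have hcast : (c 0 : ℝ) + n ≤ (c' 0 : ℝ) + n - 1 := by
        have : (c 0 : ℝ) + 1 ≤ (c' 0 : ℝ) := by exact_mod_cast hlt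
        linarith
      have hpos : (0:ℝ) < (c 0 : ℝ) + n := by
        have := two_leR hm h2 0; have : (0:ℝ) ≤ (n:ℝ) := Nat.cast_nonneg n; linarith [two_leR hm h2 0]
      have := one_div_le_one_div_of_le hpos hcast
      linarith
  | succ j ih =>
      intro n c c' hm h2 hm' h2' hagree hlt
      have h0 : c 0 = c' 0 := hagree 0 (Nat.succ_pos j)
      have ht := ih (n + 1) (tl c) (tl c') (tl_mono hm) (tl_two hm h2) (tl_mono hm') (tl_two hm' h2')
        (fun i hi => hagree (i + 1) (Nat.succ_lt_succ hi)) hlt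
      rw [G_rec hm h2 n, G_rec hm' h2' n, ← h0]
      have hpos : (0:ℝ) < 1 / ((c 0 : ℝ) + n - 1) := by
        have := two_leR hm h2 0
        have hn : (0:ℝ) ≤ (n:ℝ) := Nat.cast_nonneg n
        exact one_div_pos.mpr (by linarith)
      nlinarith


lemma numQ {v w nn : ℝ} (hv : 2 ≤ v) (hw : v + 1 ≤ w) (hn : 1 ≤ nn) :
    (1/(v+nn-1)) * (1/(v+nn) - 1/(w+nn+1)) ≤ (1/v) * (2 * (1/(v-1) - 1/(w-1))) := by
  have h1 : (0:ℝ) < v - 1 := by linarith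
  have h2 : (0:ℝ) < w - 1 := by linarith
  have h3 : (0:ℝ) < v + nn - 1 := by linarith
  have h4 : (0:ℝ) < v + nn := by linarith
  have h5 : (0:ℝ) < w + nn + 1 := by linarith
  have h6 : (0:ℝ) < v := by linarith
  have e1 : (1/(v+nn-1)) * (1/(v+nn) - 1/(w+nn+1))
      = (w+1-v) / ((v+nn-1) * ((v+nn) * (w+nn+1))) := by
    field_simp
    try ring
  have e2 : (1/v) * (2 * (1/(v-1) - 1/(w-1))) = (2*(w-v)) / (v * ((v-1) * (w-1))) := by
    field_simp
    try ring
  rw [e1, e2]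
  have hd : v * ((v-1) * (w-1)) ≤ (v+nn-1) * ((v+nn) * (w+nn+1)) := by
    have a1 : v ≤ v + nn - 1 := by linarith
    have a2 : v - 1 ≤ v + nn := by linarith
    have a3 : w - 1 ≤ w + nn + 1 := by linarith
    have b1 : (v-1) * (w-1) ≤ (v+nn) * (w+nn+1) :=
      mul_le_mul a2 a3 h2.le h4.le
    exact mul_le_mul a1 b1 (by positivity) h3.le
  exact div_le_div₀ (by linarith) (by linarith) (by positivity) hd

lemma numQ0 {v w : ℝ} (hv : 2 ≤ v) (hw : v + 1 ≤ w) :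
    (1/(v-1)) * (1/v - 1/(w+1)) ≤ 4 * ((1/v) * (1/(v-1) - 1/(w-1))) := by
  have h1 : (0:ℝ) < v - 1 := by linarith
  have h2 : (0:ℝ) < w - 1 := by linarith
  have h5 : (0:ℝ) < w + 1 := by linarith
  have h6 : (0:ℝ) < v := by linarith
  have e1 : (1/(v-1)) * (1/v - 1/(w+1)) = (w+1-v) / ((v-1) * (v * (w+1))) := by
    field_simp; try ring
  have e2 : 4 * ((1/v) * (1/(v-1) - 1/(w-1))) = (4*(w-v)) / ((v-1) * (v * (w-1))) := by
    field_simp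
    try ring
    try exact Or.inl trivial
  rw [e1, e2]
  rw [div_le_div_iff₀ (by positivity) (by positivity)]
  have h7 : w + 1 - v ≤ 2*(w-v) := by linarith
  have h8 : (w-1:ℝ) ≤ w+1 := by linarith
  have hp : (w+1-v)*(w-1) ≤ (2*(w-v))*(w+1) := mul_le_mul h7 h8 (by linarith) (by linarith)
  have hq := mul_le_mul_of_nonneg_left hp (show (0:ℝ) ≤ (v-1)*v by positivity)
  have hX : (0:ℝ) ≤ ((v-1)*v) * ((w-v)*(w+1)) := by
    have : (0:ℝ) ≤ w - v := by linarith
    positivity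
  nlinarith [hq, hX]

lemma numA {u v nn : ℝ} (hu : 2 ≤ u) (hv : u + 2 ≤ v) (hn : 1 ≤ nn) :
    1/(u+nn-1) - 1/(v+nn) ≤ 3*(1/u - 1/(v-1)) := by
  have h1 : (0:ℝ) < u + nn - 1 := by linarith
  have h2 : (0:ℝ) < v + nn := by linarith
  have h3 : (0:ℝ) < u := by linarith
  have h4 : (0:ℝ) < v - 1 := by linarith
  have e1 : 1/(u+nn-1) - 1/(v+nn) = (v-u+1) / ((u+nn-1) * (v+nn)) := by
    field_simp; try ring
  have e2 : 3*(1/u - 1/(v-1)) = (3*(v-1-u)) / (u * (v-1)) := by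
    field_simp; try ring
  rw [e1, e2]
  have hd : u * (v-1) ≤ (u+nn-1) * (v+nn) :=
    mul_le_mul (by linarith) (by linarith) h4.le h1.le
  exact div_le_div₀ (by linarith) (by linarith) (by positivity) hd

lemma numA0 {u v : ℝ} (hu : 2 ≤ u) (hv : u + 2 ≤ v) :
    1/(u-1) - 1/v ≤ 6*(1/u - 1/(v-1)) := by
  have h1 : (0:ℝ) < u - 1 := by linarith
  have h2 : (0:ℝ) < v := by linarith
  have h3 : (0:ℝ) < u := by linarith
  have h4 : (0:ℝ) < v - 1 := by linarith
  have e1 : 1/(u-1) - 1/v = (v-u+1) / ((u-1) * v) := by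
    field_simp; try ring
  have e2 : 6*(1/u - 1/(v-1)) = (6*(v-1-u)) / (u * (v-1)) := by
    field_simp; try ring
  rw [e1, e2]
  rw [div_le_div_iff₀ (by positivity) (by positivity)]
  have h5 : v - u + 1 ≤ 3*(v-1-u) := by linarith
  have h6 : u*(v-1) ≤ 2*((u-1)*v) := by nlinarith
  have hp := mul_le_mul h5 h6 (by positivity) (by linarith)
  nlinarith [hp]


-- ### the cylinder-top lemma (Q)

lemma Q1 (N : ℕ) : ∀ (n : ℕ) (c : ℕ → ℕ), Monotone c → 2 ≤ c 0 → 1 ≤ n →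
    1/((c 0:ℝ) + n - 1) - G n c ≤ 2 * (1/((c 0:ℝ) - 1) - engel c) + (1/2)^N := by
  induction N with
  | zero =>
      intro n c hm h2 hn
      have hub := engel_ub hm h2
      have hGlb := G_lb hm h2 n
      have hv := two_leR hm h2 0
      have hn1 : (1:ℝ) ≤ (n:ℝ) := by exact_mod_cast hn
      have hL : 1/((c 0:ℝ)+n-1) ≤ 1 := by
        rw [div_le_one (by linarith)]; linarith
      have hGpos : 0 < G n c :=
        lt_of_lt_of_le (one_div_pos.mpr (by linarith)) hGlb
      have hub' : 0 ≤ 1/((c 0:ℝ)-1) - engel c := by linarith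
      rw [pow_zero]
      linarith
  | succ N ih =>
      intro n c hm h2 hn
      have hv := two_leR hm h2 0
      have hn1 : (1:ℝ) ≤ (n:ℝ) := by exact_mod_cast hn
      set v := (c 0:ℝ) with hvdef
      have htm := tl_mono hm
      have ht2 := tl_two hm h2
      have hne1 : v + (n:ℝ) - 1 ≠ 0 := by linarith
      have hne2 : v + (n:ℝ) ≠ 0 := by linarith
      have hne3 : v ≠ 0 := by linarith
      have hne4 : v - 1 ≠ 0 := by linarith
      have hLHS : 1/(v+(n:ℝ)-1) - G n c = (1/(v+(n:ℝ)-1)) * (1/(v+(n:ℝ)) - G (n+1) (tl c)) := by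
        rw [G_rec hm h2 n, ← hvdef]
        field_simp
        ring
      have hRHS : 1/(v-1) - engel c = (1/v) * (1/(v-1) - engel (tl c)) := by
        rw [engel_rec hm h2]
        field_simp
        ring
      have hfacpos : (0:ℝ) < 1/(v+(n:ℝ)-1) := one_div_pos.mpr (by linarith)
      by_cases hc1 : tl c 0 = c 0
      · -- recursive case
        have hIH := ih (n+1) (tl c) htm ht2 (by omega)
        have htl0 : ((tl c 0 : ℕ):ℝ) = v := by
          rw [hvdef]; exact_mod_cast hc1
        rw [htl0] at hIH
        push_cast at hIH
        have hsimp : v + ((n:ℝ)+1) - 1 = v + (n:ℝ) := by ring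
        rw [hsimp] at hIH
        have hcore : 0 ≤ 1/(v-1) - engel (tl c) := by
          have h' := engel_ub htm ht2
          rw [htl0] at h'
          linarith
        have hhalfpos : (0:ℝ) ≤ (1/2:ℝ)^N := by positivity
        calc 1/(v+(n:ℝ)-1) - G n c
            = (1/(v+(n:ℝ)-1)) * (1/(v+(n:ℝ)) - G (n+1) (tl c)) := hLHS
          _ ≤ (1/(v+(n:ℝ)-1)) * (2*(1/(v-1) - engel (tl c)) + (1/2)^N) :=
              mul_le_mul_of_nonneg_left hIH hfacpos.le
          _ = (1/(v+(n:ℝ)-1)) * (2*(1/(v-1) - engel (tl c)))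
              + (1/(v+(n:ℝ)-1)) * (1/2)^N := by ring
          _ ≤ (1/v) * (2*(1/(v-1) - engel (tl c))) + (1/2) * (1/2)^N := by
              have hA : (1/(v+(n:ℝ)-1)) * (2*(1/(v-1) - engel (tl c)))
                  ≤ (1/v) * (2*(1/(v-1) - engel (tl c))) :=
                mul_le_mul_of_nonneg_right
                  (one_div_le_one_div_of_le (by linarith) (by linarith)) (by linarith)
              have hB : (1/(v+(n:ℝ)-1)) * (1/2:ℝ)^N ≤ (1/2) * (1/2)^N :=
                mul_le_mul_of_nonneg_right
                  (one_div_le_one_div_of_le (by norm_num) (by linarith)) hhalfpos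
              linarith
          _ = 2*((1/v) * (1/(v-1) - engel (tl c))) + (1/2)^(N+1) := by
              rw [pow_succ]; ring
          _ = 2*(1/(v-1) - engel c) + (1/2)^(N+1) := by rw [hRHS]
      · -- direct case
        have hwlt : c 0 < tl c 0 :=
          lt_of_le_of_ne (hm (by norm_num : (0:ℕ) ≤ 1)) (Ne.symm hc1)
        set w := ((tl c 0:ℕ):ℝ) with hwdef
        have hvw : v + 1 ≤ w := by
          rw [hvdef, hwdef]; exact_mod_cast hwlt
        have hb1 : 1/(w + (n:ℝ) + 1) ≤ G (n+1) (tl c) := by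
          have h := G_lb htm ht2 (n+1)
          have hcast : ((tl c 0:ℕ):ℝ) + ((n+1:ℕ):ℝ) = w + (n:ℝ) + 1 := by
            rw [hwdef]; push_cast; ring
          rw [hcast] at h
          exact h
        have hb2 : engel (tl c) ≤ 1/(w-1) := engel_ub htm ht2
        have hnum := numQ (v := v) (w := w) (nn := (n:ℝ)) (by linarith) hvw hn1
        have hchain1 : 1/(v+(n:ℝ)) - G (n+1) (tl c) ≤ 1/(v+(n:ℝ)) - 1/(w+(n:ℝ)+1) := by
          linarith [hb1]
        have hcore : (1/v) * (2 * (1/(v-1) - 1/(w-1)))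
            ≤ (1/v) * (2 * (1/(v-1) - engel (tl c))) := by
          have : (0:ℝ) ≤ 1/v := by positivity
          nlinarith [hb2]
        have hhalfpos : (0:ℝ) ≤ (1/2:ℝ)^(N+1) := by positivity
        calc 1/(v+(n:ℝ)-1) - G n c
            = (1/(v+(n:ℝ)-1)) * (1/(v+(n:ℝ)) - G (n+1) (tl c)) := hLHS
          _ ≤ (1/(v+(n:ℝ)-1)) * (1/(v+(n:ℝ)) - 1/(w+(n:ℝ)+1)) :=
              mul_le_mul_of_nonneg_left hchain1 hfacpos.le
          _ ≤ (1/v) * (2 * (1/(v-1) - 1/(w-1))) := hnum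
          _ ≤ (1/v) * (2 * (1/(v-1) - engel (tl c))) := hcore
          _ = 2*(1/(v-1) - engel c) := by rw [hRHS]; ring
          _ ≤ 2*(1/(v-1) - engel c) + (1/2)^(N+1) := by linarith

lemma Q1' (n : ℕ) (c : ℕ → ℕ) (hm : Monotone c) (h2 : 2 ≤ c 0) (hn : 1 ≤ n) :
    1/((c 0:ℝ) + n - 1) - G n c ≤ 2 * (1/((c 0:ℝ) - 1) - engel c) := by
  by_contra h
  push_neg at h
  obtain ⟨N, hN⟩ := exists_pow_lt_of_lt_one (sub_pos.mpr h) (by norm_num : (1/2:ℝ) < 1)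
  have := Q1 N n c hm h2 hn
  linarith

lemma Q0 (c : ℕ → ℕ) (hm : Monotone c) (h2 : 2 ≤ c 0) :
    1/((c 0:ℝ) - 1) - G 0 c ≤ 4 * (1/((c 0:ℝ) - 1) - engel c) := by
  have hv := two_leR hm h2 0
  set v := (c 0:ℝ) with hvdef
  have htm := tl_mono hm
  have ht2 := tl_two hm h2
  have hne3 : v ≠ 0 := by linarith
  have hne4 : v - 1 ≠ 0 := by linarith
  have hLHS : 1/(v-1) - G 0 c = (1/(v-1)) * (1/v - G 1 (tl c)) := by
    rw [G_rec hm h2 0]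
    push_cast
    rw [← hvdef]
    simp only [add_zero]
    field_simp
    ring
  have hRHS : 1/(v-1) - engel c = (1/v) * (1/(v-1) - engel (tl c)) := by
    rw [engel_rec hm h2]
    field_simp
    ring
  have hfacpos : (0:ℝ) < 1/(v-1) := one_div_pos.mpr (by linarith)
  by_cases hc1 : tl c 0 = c 0
  · have hIH := Q1' 1 (tl c) htm ht2 le_rfl
    have htl0 : ((tl c 0 : ℕ):ℝ) = v := by
      rw [hvdef]; exact_mod_cast hc1
    rw [htl0] at hIH
    push_cast at hIH
    have hsimp : v + 1 - 1 = v := by ring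
    rw [hsimp] at hIH
    have hcore : 0 ≤ 1/(v-1) - engel (tl c) := by
      have h' := engel_ub htm ht2
      rw [htl0] at h'
      linarith
    calc 1/(v-1) - G 0 c = (1/(v-1)) * (1/v - G 1 (tl c)) := hLHS
      _ ≤ (1/(v-1)) * (2 * (1/(v-1) - engel (tl c))) :=
          mul_le_mul_of_nonneg_left hIH hfacpos.le
      _ ≤ (2/v) * (2 * (1/(v-1) - engel (tl c))) := by
          have hfle : 1/(v-1) ≤ 2/v := by
            rw [div_le_div_iff₀ (by linarith) (by linarith)]
            linarith
          nlinarith [hcore]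
      _ = 4 * ((1/v) * (1/(v-1) - engel (tl c))) := by ring
      _ = 4 * (1/(v-1) - engel c) := by rw [hRHS]
  · have hwlt : c 0 < tl c 0 :=
      lt_of_le_of_ne (hm (by norm_num : (0:ℕ) ≤ 1)) (Ne.symm hc1)
    set w := ((tl c 0:ℕ):ℝ) with hwdef
    have hvw : v + 1 ≤ w := by
      rw [hvdef, hwdef]; exact_mod_cast hwlt
    have hb1 : 1/(w + 1) ≤ G 1 (tl c) := by
      have h := G_lb htm ht2 1
      have hcast : ((tl c 0:ℕ):ℝ) + ((1:ℕ):ℝ) = w + 1 := by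
        rw [hwdef]; push_cast; ring
      rw [hcast] at h
      exact h
    have hb2 : engel (tl c) ≤ 1/(w-1) := engel_ub htm ht2
    have hnum := numQ0 (v := v) (w := w) (by linarith) hvw
    have hchain1 : 1/v - G 1 (tl c) ≤ 1/v - 1/(w+1) := by linarith
    have hcore : (1/v) * (1/(v-1) - 1/(w-1)) ≤ (1/v) * (1/(v-1) - engel (tl c)) := by
      have : (0:ℝ) ≤ 1/v := by positivity
      nlinarith [hb2]
    calc 1/(v-1) - G 0 c = (1/(v-1)) * (1/v - G 1 (tl c)) := hLHS
      _ ≤ (1/(v-1)) * (1/v - 1/(w+1)) := mul_le_mul_of_nonneg_left hchain1 hfacpos.le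
      _ ≤ 4 * ((1/v) * (1/(v-1) - 1/(w-1))) := hnum
      _ ≤ 4 * ((1/v) * (1/(v-1) - engel (tl c))) := by linarith [hcore]
      _ = 4 * (1/(v-1) - engel c) := by rw [hRHS]

-- ### main Lipschitz comparison

lemma Pmain (j : ℕ) : ∀ (n : ℕ) (c c' : ℕ → ℕ), Monotone c → 2 ≤ c 0 → Monotone c' → 2 ≤ c' 0 →
    (∀ i, i < j → c i = c' i) → c j < c' j → 1 ≤ n →
    G n c - G n c' ≤ 3 * (engel c - engel c') := by
  induction j with
  | zero =>
      intro n c c' hm h2 hm' h2' _ hlt hn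
      have hu := two_leR hm h2 0
      have hn1 : (1:ℝ) ≤ (n:ℝ) := by exact_mod_cast hn
      set u := ((c 0:ℕ):ℝ) with hudef
      set v := ((c' 0:ℕ):ℝ) with hvdef
      have huv : u + 1 ≤ v := by rw [hudef, hvdef]; exact_mod_cast hlt
      have htm := tl_mono hm; have ht2 := tl_two hm h2
      by_cases hB : c' 0 = c 0 + 1
      · -- adjacent digits
        have hveq : v = u + 1 := by rw [hvdef, hudef]; exact_mod_cast hB
        have eG : G n c = 1/(u+(n:ℝ)) + (1/(u+(n:ℝ)-1)) * G (n+1) (tl c) := G_rec hm h2 n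
        have eS : engel c = 1/u + (1/u) * engel (tl c) := engel_rec hm h2
        have ht0 := two_leR htm ht2 0
        -- part 1 : the contribution of the tail of c
        have hp1 : (1/(u+(n:ℝ)-1)) * G (n+1) (tl c) ≤ (1/u) * engel (tl c) := by
          have hGt : G (n+1) (tl c) ≤ engel (tl c) := by
            have hub := G_ub htm ht2 (n+1)
            have hlb := engel_lb htm ht2
            have hstep : 1/((tl c 0:ℝ) + ((n+1:ℕ):ℝ) - 1) ≤ 1/((tl c 0:ℝ)) := by
              apply one_div_le_one_div_of_le (by linarith) (by push_cast; linarith)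
            linarith
          have hGt0 : 0 ≤ G (n+1) (tl c) := by
            have := G_lb htm ht2 (n+1)
            have hpos : (0:ℝ) < 1/((tl c 0:ℝ) + ((n+1:ℕ):ℝ)) :=
              one_div_pos.mpr (by push_cast; linarith)
            linarith
          exact mul_le_mul (one_div_le_one_div_of_le (by linarith) (by linarith)) hGt hGt0
            (by positivity)
        -- part 2 : cylinder-top estimate for c'
        have hq := Q1' n c' hm' h2' hn
        rw [← hvdef, hveq] at hq
        have hq' : 1/(u+(n:ℝ)) - G n c' ≤ 2 * (1/u - engel c') := by
          have e1 : u+1+(n:ℝ)-1 = u+(n:ℝ) := by ring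
          have e2 : u+1-1 = u := by ring
          rw [e1, e2] at hq; exact hq
        have hub' : engel c' ≤ 1/u := by
          have h' := engel_ub hm' h2'
          rw [← hvdef, hveq] at h'
          have e2 : u+1-1 = u := by ring
          rw [e2] at h'; exact h'
        have hA : 0 ≤ (1/u) * engel (tl c) := by
          have := engel_nonneg htm ht2
          positivity
        rw [eG, eS]
        linarith
      · -- gap of at least two
        have hv2 : u + 2 ≤ v := by
          have hnat : c 0 + 2 ≤ c' 0 := by omega
          rw [hudef, hvdef]; exact_mod_cast hnat
        have h1 := G_ub hm h2 n
        have h2'' := G_lb hm' h2' n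
        have h3 := engel_lb hm h2
        have h4 := engel_ub hm' h2'
        have hnum := numA (u := u) (v := v) (nn := (n:ℝ)) (by linarith) hv2 hn1
        rw [← hudef] at h1 h3
        rw [← hvdef] at h2'' h4
        linarith
  | succ j ih =>
      intro n c c' hm h2 hm' h2' hagree hlt hn
      have h0 : c 0 = c' 0 := hagree 0 (Nat.succ_pos j)
      have hu := two_leR hm h2 0
      have hn1 : (1:ℝ) ≤ (n:ℝ) := by exact_mod_cast hn
      have htm := tl_mono hm; have ht2 := tl_two hm h2
      have htm' := tl_mono hm'; have ht2' := tl_two hm' h2'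
      have hXY := ih (n+1) (tl c) (tl c') htm ht2 htm' ht2'
        (fun i hi => hagree (i+1) (Nat.succ_lt_succ hi)) hlt (by omega)
      have hY0 : engel (tl c') ≤ engel (tl c) :=
        engel_anti j (tl c) (tl c') htm ht2 htm' ht2'
          (fun i hi => hagree (i+1) (Nat.succ_lt_succ hi)) hlt
      have eG : G n c = 1/((c 0:ℝ)+(n:ℝ)) + (1/((c 0:ℝ)+(n:ℝ)-1)) * G (n+1) (tl c) :=
        G_rec hm h2 n
      have eG' : G n c' = 1/((c 0:ℝ)+(n:ℝ)) + (1/((c 0:ℝ)+(n:ℝ)-1)) * G (n+1) (tl c') := by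
        have := G_rec hm' h2' n
        rw [← h0] at this
        exact this
      have eS : engel c = 1/(c 0:ℝ) + (1/(c 0:ℝ)) * engel (tl c) := engel_rec hm h2
      have eS' : engel c' = 1/(c 0:ℝ) + (1/(c 0:ℝ)) * engel (tl c') := by
        have := engel_rec hm' h2'
        rw [← h0] at this
        exact this
      have hfpos : (0:ℝ) < 1/((c 0:ℝ)+(n:ℝ)-1) := one_div_pos.mpr (by linarith)
      have e1 : G n c - G n c'
          = (1/((c 0:ℝ)+(n:ℝ)-1)) * (G (n+1) (tl c) - G (n+1) (tl c')) := by
        rw [eG, eG']; ring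
      have e2 : 3 * (engel c - engel c')
          = (1/(c 0:ℝ)) * (3 * (engel (tl c) - engel (tl c'))) := by
        rw [eS, eS']; ring
      rw [e1, e2]
      calc (1/((c 0:ℝ)+(n:ℝ)-1)) * (G (n+1) (tl c) - G (n+1) (tl c'))
          ≤ (1/((c 0:ℝ)+(n:ℝ)-1)) * (3 * (engel (tl c) - engel (tl c'))) :=
            mul_le_mul_of_nonneg_left hXY hfpos.le
        _ ≤ (1/(c 0:ℝ)) * (3 * (engel (tl c) - engel (tl c'))) :=
            mul_le_mul_of_nonneg_right
              (one_div_le_one_div_of_le (by linarith) (by linarith)) (by linarith)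

lemma P0 (j : ℕ) : ∀ (c c' : ℕ → ℕ), Monotone c → 2 ≤ c 0 → Monotone c' → 2 ≤ c' 0 →
    (∀ i, i < j → c i = c' i) → c j < c' j →
    G 0 c - G 0 c' ≤ 6 * (engel c - engel c') := by
  induction j with
  | zero =>
      intro c c' hm h2 hm' h2' _ hlt
      have hu := two_leR hm h2 0
      set u := ((c 0:ℕ):ℝ) with hudef
      set v := ((c' 0:ℕ):ℝ) with hvdef
      have huv : u + 1 ≤ v := by rw [hudef, hvdef]; exact_mod_cast hlt
      have htm := tl_mono hm; have ht2 := tl_two hm h2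
      by_cases hB : c' 0 = c 0 + 1
      · have hveq : v = u + 1 := by rw [hvdef, hudef]; exact_mod_cast hB
        have eG : G 0 c = 1/u + (1/(u-1)) * G 1 (tl c) := by
          have := G_rec hm h2 0
          push_cast at this
          rw [← hudef] at this
          simpa using this
        have eS : engel c = 1/u + (1/u) * engel (tl c) := engel_rec hm h2
        have ht0 := two_leR htm ht2 0
        have hp1 : (1/(u-1)) * G 1 (tl c) ≤ (2/u) * engel (tl c) := by
          have hGt : G 1 (tl c) ≤ engel (tl c) := by
            have hub := G_ub htm ht2 1
            have hlb := engel_lb htm ht2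
            have hstep : 1/((tl c 0:ℝ) + ((1:ℕ):ℝ) - 1) ≤ 1/((tl c 0:ℝ)) := by
              apply one_div_le_one_div_of_le (by linarith) (by push_cast; linarith)
            linarith
          have hGt0 : 0 ≤ G 1 (tl c) := by
            have := G_lb htm ht2 1
            have hpos : (0:ℝ) < 1/((tl c 0:ℝ) + ((1:ℕ):ℝ)) :=
              one_div_pos.mpr (by push_cast; linarith)
            linarith
          have hfle : 1/(u-1) ≤ 2/u := by
            rw [div_le_div_iff₀ (by linarith) (by linarith)]
            linarith
          exact mul_le_mul hfle hGt hGt0 (by positivity)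
        have hq := Q0 c' hm' h2'
        rw [← hvdef, hveq] at hq
        have hq' : 1/u - G 0 c' ≤ 4 * (1/u - engel c') := by
          have e2 : u+1-1 = u := by ring
          rw [e2] at hq; exact hq
        have hub' : engel c' ≤ 1/u := by
          have h' := engel_ub hm' h2'
          rw [← hvdef, hveq] at h'
          have e2 : u+1-1 = u := by ring
          rw [e2] at h'; exact h'
        have hA : 0 ≤ (1/u) * engel (tl c) := by
          have := engel_nonneg htm ht2
          positivity
        have hA2 : 0 ≤ (2/u) * engel (tl c) := by
          have := engel_nonneg htm ht2
          positivity
        have hA3 : (2/u) * engel (tl c) ≤ 6 * ((1/u) * engel (tl c)) := by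
          have h' : (2/u) * engel (tl c) = 2 * ((1/u) * engel (tl c)) := by ring
          rw [h']
          linarith [hA]
        rw [eG, eS]
        linarith
      · have hv2 : u + 2 ≤ v := by
          have hnat : c 0 + 2 ≤ c' 0 := by omega
          rw [hudef, hvdef]; exact_mod_cast hnat
        have h1 := G_ub hm h2 0
        have h2'' := G_lb hm' h2' 0
        have h3 := engel_lb hm h2
        have h4 := engel_ub hm' h2'
        have hnum := numA0 (u := u) (v := v) (by linarith) hv2
        push_cast at h1 h2''
        rw [← hudef] at h1 h3
        rw [← hvdef] at h2'' h4
        have e1 : u + 0 - 1 = u - 1 := by ring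
        have e2 : v + 0 = v := by ring
        rw [e1] at h1
        rw [e2] at h2''
        linarith
  | succ j ih =>
      intro c c' hm h2 hm' h2' hagree hlt
      have h0 : c 0 = c' 0 := hagree 0 (Nat.succ_pos j)
      have hu := two_leR hm h2 0
      have htm := tl_mono hm; have ht2 := tl_two hm h2
      have htm' := tl_mono hm'; have ht2' := tl_two hm' h2'
      have hXY := Pmain j 1 (tl c) (tl c') htm ht2 htm' ht2'
        (fun i hi => hagree (i+1) (Nat.succ_lt_succ hi)) hlt le_rfl
      have hY0 : engel (tl c') ≤ engel (tl c) :=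
        engel_anti j (tl c) (tl c') htm ht2 htm' ht2'
          (fun i hi => hagree (i+1) (Nat.succ_lt_succ hi)) hlt
      have eG : G 0 c = 1/(c 0:ℝ) + (1/((c 0:ℝ)-1)) * G 1 (tl c) := by
        have := G_rec hm h2 0
        push_cast at this
        simpa using this
      have eG' : G 0 c' = 1/(c 0:ℝ) + (1/((c 0:ℝ)-1)) * G 1 (tl c') := by
        have := G_rec hm' h2' 0
        push_cast at this
        rw [← h0] at this
        simpa using this
      have eS : engel c = 1/(c 0:ℝ) + (1/(c 0:ℝ)) * engel (tl c) := engel_rec hm h2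
      have eS' : engel c' = 1/(c 0:ℝ) + (1/(c 0:ℝ)) * engel (tl c') := by
        have := engel_rec hm' h2'
        rw [← h0] at this
        exact this
      have hfpos : (0:ℝ) < 1/((c 0:ℝ)-1) := one_div_pos.mpr (by linarith)
      have e1 : G 0 c - G 0 c'
          = (1/((c 0:ℝ)-1)) * (G 1 (tl c) - G 1 (tl c')) := by
        rw [eG, eG']; ring
      have e2 : 6 * (engel c - engel c')
          = (2/(c 0:ℝ)) * (3 * (engel (tl c) - engel (tl c'))) := by
        rw [eS, eS']; ring
      rw [e1, e2]
      calc (1/((c 0:ℝ)-1)) * (G 1 (tl c) - G 1 (tl c'))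
          ≤ (1/((c 0:ℝ)-1)) * (3 * (engel (tl c) - engel (tl c'))) :=
            mul_le_mul_of_nonneg_left hXY hfpos.le
        _ ≤ (2/(c 0:ℝ)) * (3 * (engel (tl c) - engel (tl c'))) := by
            have hfle : 1/((c 0:ℝ)-1) ≤ 2/(c 0:ℝ) := by
              rw [div_le_div_iff₀ (by linarith) (by linarith)]
              linarith
            exact mul_le_mul_of_nonneg_right hfle (by linarith)

-- ### assembly

lemma bridge (c : ℕ → ℕ) : modEngel (engelShift c) = G 0 c := by
  unfold modEngel G
  congr 1
  · have : ((engelShift c 0 : ℕ):ℝ) = (c 0 : ℝ) + ((0:ℕ):ℝ) := by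
      unfold engelShift; push_cast; ring
    rw [this]
  · refine tsum_congr fun m => ?_
    unfold mt engelShift
    congr 1
    congr 1
    · refine Finset.prod_congr rfl fun i _ => ?_
      push_cast
      ring
    · push_cast
      ring

lemma key (c c' : ℕ → ℕ) (hm : Monotone c) (h2 : 2 ≤ c 0) (hm' : Monotone c') (h2' : 2 ≤ c' 0) :
    |G 0 c - G 0 c'| ≤ 6 * |engel c - engel c'| := by
  by_cases heq : c = c'
  · subst heq; simp
  · have hex : ∃ k, c k ≠ c' k := by
      by_contra h
      push_neg at h
      exact heq (funext h)
    set j := Nat.find hex with hj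
    have hjne : c j ≠ c' j := Nat.find_spec hex
    have hagree : ∀ i, i < j → c i = c' i := fun i hi => of_not_not (Nat.find_min hex hi)
    rcases lt_or_gt_of_ne hjne with h | h
    · have hS := engel_anti j c c' hm h2 hm' h2' hagree h
      have hG := G_anti j 0 c c' hm h2 hm' h2' hagree h
      have hP := P0 j c c' hm h2 hm' h2' hagree h
      rw [abs_of_nonneg (by linarith), abs_of_nonneg (by linarith)]
      linarith
    · have hS := engel_anti j c' c hm' h2' hm h2 (fun i hi => (hagree i hi).symm) h
      have hG := G_anti j 0 c' c hm' h2' hm h2 (fun i hi => (hagree i hi).symm) h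
      have hP := P0 j c' c hm' h2' hm h2 (fun i hi => (hagree i hi).symm) h
      rw [abs_sub_comm (G 0 c), abs_sub_comm (engel c)]
      rw [abs_of_nonneg (by linarith), abs_of_nonneg (by linarith)]
      linarith

open Classical in
/-- The map sending `E(c)` to `E'(σ(c))`. -/
noncomputable def F : ℝ → ℝ := fun x =>
  if h : ∃ c : ℕ → ℕ, (Monotone c ∧ 2 ≤ c 0) ∧ engel c = x then
    modEngel (engelShift h.choose)
  else 0

lemma F_spec (c : ℕ → ℕ) (hm : Monotone c) (h2 : 2 ≤ c 0) :
    F (engel c) = modEngel (engelShift c) := by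
  have hex : ∃ d : ℕ → ℕ, (Monotone d ∧ 2 ≤ d 0) ∧ engel d = engel c := ⟨c, ⟨hm, h2⟩, rfl⟩
  rw [F]
  rw [dif_pos hex]
  obtain ⟨⟨hmd, h2d⟩, hed⟩ := hex.choose_spec
  rw [bridge, bridge]
  have hk := key hex.choose c hmd h2d hm h2
  rw [hed] at hk
  simp only [sub_self, abs_zero, mul_zero] at hk
  have h0 : |G 0 hex.choose - G 0 c| = 0 := le_antisymm hk (abs_nonneg _)
  have := abs_eq_zero.mp h0
  linarith

end EngelAux

/-- For every set `𝔐` of nondecreasing digit sequences with first term `≥ 2`,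
`dim_H {E'(σ(c)) : c ∈ 𝔐} ≤ dim_H {E(c) : c ∈ 𝔐}`. -/
theorem dimH_modEngel_le_dimH_engel (𝔐 : Set (ℕ → ℕ))
    (h𝔐 : ∀ c ∈ 𝔐, Monotone c ∧ 2 ≤ c 0) :
    dimH {x : ℝ | ∃ c ∈ 𝔐, x = modEngel (engelShift c)} ≤
      dimH {x : ℝ | ∃ c ∈ 𝔐, x = engel c} := by
  classical
  set A : Set ℝ := {x : ℝ | ∃ c ∈ 𝔐, x = engel c} with hA
  have himg : {x : ℝ | ∃ c ∈ 𝔐, x = modEngel (engelShift c)} = EngelAux.F '' A := by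
    ext x
    constructor
    · rintro ⟨c, hc, rfl⟩
      obtain ⟨hm, h2⟩ := h𝔐 c hc
      exact ⟨engel c, ⟨c, hc, rfl⟩, EngelAux.F_spec c hm h2⟩
    · rintro ⟨y, ⟨c, hc, rfl⟩, rfl⟩
      obtain ⟨hm, h2⟩ := h𝔐 c hc
      exact ⟨c, hc, EngelAux.F_spec c hm h2⟩
  have hlip : LipschitzOnWith 6 EngelAux.F A := by
    refine LipschitzOnWith.of_dist_le_mul fun x hx y hy => ?_
    obtain ⟨c, hc, rfl⟩ := hx
    obtain ⟨c', hc', rfl⟩ := hy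
    obtain ⟨hm, h2⟩ := h𝔐 c hc
    obtain ⟨hm', h2'⟩ := h𝔐 c' hc'
    rw [EngelAux.F_spec c hm h2, EngelAux.F_spec c' hm' h2',
      EngelAux.bridge, EngelAux.bridge, Real.dist_eq, Real.dist_eq]
    have hk := EngelAux.key c c' hm h2 hm' h2'
    have h6 : ((6 : NNReal) : ℝ) = 6 := by norm_num
    rw [h6]
    exact hk
  rw [himg]
  exact hlip.dimH_image_le
end

section
/- (Fractal quasi-equivalence principle for the Pierce expansion in the Perron and traditional notations.) Let ψ : ℕ → (0,∞) satisfy ∑_{n=1}^{∞} 1/ψ(n) < ∞, and let 𝔐 be a set of strictly increasing integer sequences such that every a ∈ 𝔐 satisfies a₁ ≥ 2 and a_n ≥ ψ(n) for all sufficiently large n. Then dim_H { Π(a) : a ∈ 𝔐 } = dim_H { Π(a + 1) : a ∈ 𝔐 }, where (a+1)_n = a_n + 1 and dim_H denotes the Hausdorff dimension. (The first set consists of the irrationals whose Pierce digits in Perron notation form a sequence in 𝔐, the second of the irrationals whose Pierce digits in traditional notation form a sequence in 𝔐.) -/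
open Filter

open scoped NNReal ENNReal

set_option maxHeartbeats 1000000

noncomputable section

namespace PierceAux

def Adm (a : ℕ → ℕ) : Prop := StrictMono a ∧ 2 ≤ a 0

def dd (a : ℕ → ℕ) (i : ℕ) : ℝ := (a i : ℝ) - 1

def PP (a : ℕ → ℕ) (n : ℕ) : ℝ := ∏ i ∈ Finset.range (n + 1), dd a i

def QQ (a : ℕ → ℕ) (n : ℕ) : ℝ := ∏ i ∈ Finset.range n, dd a i

def sh (a : ℕ → ℕ) : ℕ → ℕ := fun n => a (n + 1)

def shn (a : ℕ → ℕ) (n : ℕ) : ℕ → ℕ := fun m => a (m + n)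

def inc (a : ℕ → ℕ) : ℕ → ℕ := fun n => a n + 1

lemma Adm.le_apply {a : ℕ → ℕ} (ha : Adm a) (n : ℕ) : n + 2 ≤ a n := by
  induction n with
  | zero => simpa using ha.2
  | succ n ih => have := ha.1 (show n < n + 1 by omega); omega

lemma Adm.one_le_dd {a : ℕ → ℕ} (ha : Adm a) (n : ℕ) : (n : ℝ) + 1 ≤ dd a n := by
  have h := ha.le_apply n
  have h' : ((n : ℝ)) + 2 ≤ (a n : ℝ) := by exact_mod_cast h
  unfold dd; linarith

lemma Adm.dd_pos {a : ℕ → ℕ} (ha : Adm a) (n : ℕ) : 0 < dd a n :=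
  lt_of_lt_of_le (by positivity) (ha.one_le_dd n)

lemma Adm.dd_succ {a : ℕ → ℕ} (ha : Adm a) (n : ℕ) : dd a n + 1 ≤ dd a (n + 1) := by
  have h := ha.1 (show n < n + 1 by omega)
  have : (a n : ℝ) + 1 ≤ (a (n+1) : ℝ) := by exact_mod_cast h
  unfold dd; linarith

lemma Adm.sheesh {a : ℕ → ℕ} (ha : Adm a) : Adm (sh a) := by
  constructor
  · exact fun m n h => ha.1 (by omega)
  · have := ha.le_apply 1; simpa [PierceAux.sh] using by omega

lemma Adm.shnn {a : ℕ → ℕ} (ha : Adm a) (n : ℕ) : Adm (shn a n) := by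
  constructor
  · exact fun i j h => ha.1 (by omega)
  · have := ha.le_apply n; simpa [PierceAux.shn] using by omega

lemma Adm.incc {a : ℕ → ℕ} (ha : Adm a) : Adm (inc a) := by
  constructor
  · intro i j h
    have := ha.1 h
    show a i + 1 < a j + 1
    omega
  · show 2 ≤ a 0 + 1
    have := ha.2
    omega

lemma dd_inc (a : ℕ → ℕ) (n : ℕ) : dd (inc a) n = dd a n + 1 := by
  unfold dd inc; push_cast; ring

lemma PP_pos {a : ℕ → ℕ} (ha : Adm a) (n : ℕ) : 0 < PP a n :=
  Finset.prod_pos fun i _ => ha.dd_pos i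

lemma QQ_pos {a : ℕ → ℕ} (ha : Adm a) (n : ℕ) : 0 < QQ a n :=
  Finset.prod_pos fun i _ => ha.dd_pos i

lemma PP_succ (a : ℕ → ℕ) (n : ℕ) : PP a (n + 1) = PP a n * dd a (n + 1) :=
  Finset.prod_range_succ _ _

lemma PP_succ' (a : ℕ → ℕ) (n : ℕ) : PP a (n + 1) = dd a 0 * PP (sh a) n := by
  have : PP a (n+1) = (∏ i ∈ Finset.range (n+1), dd a (i+1)) * dd a 0 :=
    Finset.prod_range_succ' _ _
  rw [this, mul_comm]; rfl

lemma QQ_succ' (a : ℕ → ℕ) (n : ℕ) : QQ a (n + 1) = dd a 0 * QQ (sh a) n := by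
  have : QQ a (n+1) = (∏ i ∈ Finset.range n, dd a (i+1)) * dd a 0 :=
    Finset.prod_range_succ' _ _
  rw [this, mul_comm]; rfl

lemma two_pow_le_PP {a : ℕ → ℕ} (ha : Adm a) (n : ℕ) : (2 : ℝ) ^ n ≤ PP a n := by
  induction n with
  | zero => simpa [PP] using le_trans (by norm_num) (ha.one_le_dd 0)
  | succ n ih =>
      rw [PP_succ, pow_succ]
      have h2 : (2:ℝ) ≤ dd a (n+1) := le_trans (by push_cast; linarith) (ha.one_le_dd (n+1))
      have := PP_pos ha n
      nlinarith [pow_pos (show (0:ℝ) < 2 by norm_num) n]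

lemma two_pow_le_QQ_inc {a : ℕ → ℕ} (ha : Adm a) (n : ℕ) : (2 : ℝ) ^ n ≤ QQ (inc a) n := by
  induction n with
  | zero => simp [QQ]
  | succ n ih =>
      rw [QQ, Finset.prod_range_succ, ← QQ, pow_succ]
      have h1 : (1:ℝ) ≤ dd a n := le_trans (by norm_num : (1:ℝ) ≤ (n:ℝ)+1) (ha.one_le_dd n)
      have h2 : (2:ℝ) ≤ dd (inc a) n := by rw [dd_inc]; linarith
      have := QQ_pos ha.incc n
      nlinarith [pow_pos (show (0:ℝ) < 2 by norm_num) n]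

lemma QQ_le_QQ_inc {a : ℕ → ℕ} (ha : Adm a) (n : ℕ) : QQ a n ≤ QQ (inc a) n := by
  unfold QQ
  apply Finset.prod_le_prod (fun i _ => (ha.dd_pos i).le)
  intro i _
  rw [dd_inc]; linarith

lemma QQ_inc_le {a : ℕ → ℕ} (ha : Adm a) (n : ℕ) : QQ (inc a) n ≤ (n + 1) * QQ a n := by
  induction n with
  | zero => simp [QQ]
  | succ n ih =>
      rw [QQ, QQ, Finset.prod_range_succ, Finset.prod_range_succ, ← QQ, ← QQ, dd_inc]
      have hd : (n : ℝ) + 1 ≤ dd a n := ha.one_le_dd n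
      have h1 := QQ_pos ha n
      have h2 := QQ_pos ha.incc n
      have h3 := ha.dd_pos n
      have key : QQ (inc a) n * (dd a n + 1) ≤ ((n:ℝ) + 1) * QQ a n * (dd a n + 1) := by
        apply mul_le_mul_of_nonneg_right ih (by linarith)
      refine key.trans ?_
      push_cast
      nlinarith


lemma pierce_eq (a : ℕ → ℕ) : pierce a = ∑' n : ℕ, (-1 : ℝ) ^ n * (PP a n)⁻¹ := by
  unfold pierce
  refine tsum_congr fun n => ?_
  rw [div_eq_mul_inv, PP, Finset.prod_range_succ]
  rfl

lemma antitone_u {a : ℕ → ℕ} (ha : Adm a) : Antitone fun n => (PP a n)⁻¹ := by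
  apply antitone_nat_of_succ_le
  intro n
  apply inv_anti₀ (PP_pos ha n)
  rw [PP_succ]
  nlinarith [PP_pos ha n, ha.one_le_dd (n+1), Nat.cast_nonneg (α := ℝ) n]

lemma summable_u {a : ℕ → ℕ} (ha : Adm a) :
    Summable fun n : ℕ => (-1 : ℝ) ^ n * (PP a n)⁻¹ := by
  apply Summable.of_norm_bounded (g := fun n : ℕ => (1/2 : ℝ) ^ n)
    (summable_geometric_of_lt_one (by norm_num) (by norm_num))
  intro n
  have h1 := two_pow_le_PP ha n
  have h2 := PP_pos ha n
  rw [norm_mul, norm_pow, norm_neg, norm_one, one_pow, one_mul, norm_inv,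
    Real.norm_of_nonneg h2.le]
  rw [div_pow, one_pow]
  rw [← one_div]
  apply div_le_div_of_nonneg_left (by norm_num) (by positivity) h1


lemma tendsto_partial {a : ℕ → ℕ} (ha : Adm a) :
    Tendsto (fun n => ∑ i ∈ Finset.range n, (-1 : ℝ) ^ i * (PP a i)⁻¹)
      atTop (nhds (pierce a)) := by
  rw [pierce_eq]
  exact (summable_u ha).hasSum.tendsto_sum_nat

lemma pierce_le {a : ℕ → ℕ} (ha : Adm a) : pierce a ≤ (dd a 0)⁻¹ := by
  have h := Antitone.tendsto_le_alternating_series (tendsto_partial ha) (antitone_u ha) 0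
  simpa [PP] using h

lemma pierce_ge' {a : ℕ → ℕ} (ha : Adm a) :
    (PP a 0)⁻¹ - (PP a 1)⁻¹ ≤ pierce a := by
  have h := Antitone.alternating_series_le_tendsto (tendsto_partial ha) (antitone_u ha) 1
  norm_num [Finset.sum_range_succ] at h
  linarith

lemma pierce_ge {a : ℕ → ℕ} (ha : Adm a) : (dd a 0 + 1)⁻¹ ≤ pierce a := by
  have h := pierce_ge' ha
  have h1 : PP a 1 = dd a 0 * dd a 1 := by
    rw [PP_succ]; simp [PP]
  have hPP0 : PP a 0 = dd a 0 := by simp [PP]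
  rw [hPP0, h1] at h
  refine le_trans ?_ h
  have hd0 := ha.dd_pos 0
  have hd1 := ha.dd_pos 1
  have hdd := ha.dd_succ 0
  rw [inv_eq_one_div, inv_eq_one_div, mul_inv, inv_eq_one_div, inv_eq_one_div,
    div_mul_div_comm, one_mul, div_sub_div _ _ (ne_of_gt hd0) (by positivity),
    div_le_div_iff₀ (by positivity) (by positivity)]
  nlinarith

lemma shift_eq {a : ℕ → ℕ} (ha : Adm a) :
    pierce a = (dd a 0)⁻¹ - (dd a 0)⁻¹ * pierce (sh a) := by
  rw [pierce_eq, Summable.tsum_eq_zero_add (summable_u ha)]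
  have h0 : (-1 : ℝ) ^ 0 * (PP a 0)⁻¹ = (dd a 0)⁻¹ := by simp [PP]
  rw [h0]
  have hterm : ∀ n : ℕ, (-1 : ℝ) ^ (n+1) * (PP a (n+1))⁻¹
      = -(dd a 0)⁻¹ * ((-1 : ℝ) ^ n * (PP (sh a) n)⁻¹) := by
    intro n
    rw [PP_succ', mul_inv, pow_succ]
    ring
  rw [tsum_congr hterm, tsum_mul_left, pierce_eq (sh a)]
  ring


lemma pierce_pos {a : ℕ → ℕ} (ha : Adm a) : 0 < pierce a :=
  lt_of_lt_of_le (by have := ha.dd_pos 0; positivity) (pierce_ge ha)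

lemma one_le_dd0 {a : ℕ → ℕ} (ha : Adm a) : (1:ℝ) ≤ dd a 0 := by
  have := ha.one_le_dd 0; norm_num at this; linarith

lemma pierce_le_one {a : ℕ → ℕ} (ha : Adm a) : pierce a ≤ 1 := by
  have h := pierce_le ha
  have h1 := one_le_dd0 ha
  have : (dd a 0)⁻¹ ≤ 1 := by
    rw [inv_le_one_iff₀]; right; exact h1
  linarith

lemma inc_le {a : ℕ → ℕ} (ha : Adm a) : pierce (inc a) ≤ pierce a := by
  have h1 := pierce_le ha.incc
  have h2 := pierce_ge ha
  rw [dd_inc] at h1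
  linarith

lemma le_inc {a : ℕ → ℕ} (ha : Adm a) : pierce a ≤ 3 * pierce (inc a) := by
  have h1 := pierce_le ha
  have h2 := pierce_ge ha.incc
  rw [dd_inc] at h2
  have hd := one_le_dd0 ha
  have key : (dd a 0)⁻¹ ≤ 3 * (dd a 0 + 1 + 1)⁻¹ := by
    rw [inv_eq_one_div, inv_eq_one_div, ← mul_div_assoc,
      div_le_div_iff₀ (by linarith) (by linarith)]
    nlinarith
  linarith

lemma core_calc (d e d' α₂ β α₂' β' : ℝ)
    (hd1 : 1 ≤ d) (he1 : d + 1 ≤ e) (hd' : d + 1 ≤ d')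
    (hβpos : 0 < β) (hα₂pos : 0 < α₂)
    (hβ'le : β' ≤ β) (hβ'ge : β ≤ 3 * β') (hβ'pos : 0 < β')
    (hα₂'le : α₂' ≤ α₂) (hα₂'ge : α₂ ≤ 3 * α₂') (hα₂'pos : 0 < α₂') :
    0 < (d⁻¹ - d⁻¹ * ((d')⁻¹ - (d')⁻¹ * α₂)) - (e⁻¹ - e⁻¹ * β) ∧
    ((d+1)⁻¹ - (d+1)⁻¹ * ((d'+1)⁻¹ - (d'+1)⁻¹ * α₂')) - ((e+1)⁻¹ - (e+1)⁻¹ * β')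
      ≤ 2 * ((d⁻¹ - d⁻¹ * ((d')⁻¹ - (d')⁻¹ * α₂)) - (e⁻¹ - e⁻¹ * β)) ∧
    (d⁻¹ - d⁻¹ * ((d')⁻¹ - (d')⁻¹ * α₂)) - (e⁻¹ - e⁻¹ * β)
      ≤ 24 * (((d+1)⁻¹ - (d+1)⁻¹ * ((d'+1)⁻¹ - (d'+1)⁻¹ * α₂')) - ((e+1)⁻¹ - (e+1)⁻¹ * β')) := by
  have hdpos : (0:ℝ) < d := by linarith
  have hepos : (0:ℝ) < e := by linarith
  have hd'pos : (0:ℝ) < d' := by linarith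
  set A := (e - d) * d' - e with hA_def
  set A' := (e - d) * (d' + 1) - (e + 1) with hA'_def
  set N := A / d' + e * α₂ / d' + d * β with hN_def
  set N' := A' / (d' + 1) + (e + 1) * α₂' / (d' + 1) + (d + 1) * β' with hN'_def
  have hg : (d⁻¹ - d⁻¹ * ((d')⁻¹ - (d')⁻¹ * α₂)) - (e⁻¹ - e⁻¹ * β) = N / (d * e) := by
    rw [hN_def, hA_def]
    field_simp
    ring
  have hg' : ((d+1)⁻¹ - (d+1)⁻¹ * ((d'+1)⁻¹ - (d'+1)⁻¹ * α₂')) - ((e+1)⁻¹ - (e+1)⁻¹ * β')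
      = N' / ((d + 1) * (e + 1)) := by
    rw [hN'_def, hA'_def]
    field_simp
    ring
  have hApos : 0 ≤ A := by rw [hA_def]; nlinarith
  have hA'A : A' = A + ((e - d) - 1) := by rw [hA'_def, hA_def]; ring
  have hk1 : (1:ℝ) ≤ e - d := by linarith
  have hAk : (e - d) - 1 ≤ A := by rw [hA_def]; nlinarith
  have hA'le : A' ≤ 2 * A := by rw [hA'A]; linarith
  have hA'ge : A ≤ A' := by rw [hA'A]; linarith
  have hA'pos : 0 ≤ A' := le_trans hApos hA'ge
  have hNpos : 0 < N := by
    rw [hN_def]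
    have t1 : 0 ≤ A / d' := div_nonneg hApos hd'pos.le
    have t2 : 0 < e * α₂ / d' := by positivity
    have t3 : 0 < d * β := by positivity
    linarith
  have hN'pos : 0 ≤ N' := by
    rw [hN'_def]
    have t1 : 0 ≤ A' / (d' + 1) := div_nonneg hA'pos (by linarith)
    have t2 : 0 ≤ (e + 1) * α₂' / (d' + 1) := by positivity
    have t3 : 0 ≤ (d + 1) * β' := by positivity
    linarith
  have hN'le : N' ≤ 2 * N := by
    have t1 : A' / (d' + 1) ≤ 2 * A / d' := by
      rw [div_le_div_iff₀ (by linarith) hd'pos]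
      nlinarith
    have t2 : (e + 1) * α₂' / (d' + 1) ≤ 2 * (e * α₂) / d' := by
      rw [div_le_div_iff₀ (by linarith) hd'pos]
      have s1 : (e + 1) * α₂' ≤ 2 * (e * α₂) := by nlinarith
      have s2 : (e + 1) * α₂' * d' ≤ 2 * (e * α₂) * d' :=
        mul_le_mul_of_nonneg_right s1 hd'pos.le
      have s3 : 2 * (e * α₂) * d' ≤ 2 * (e * α₂) * (d' + 1) :=
        mul_le_mul_of_nonneg_left (by linarith) (by positivity)
      linarith
    have t3 : (d + 1) * β' ≤ 2 * (d * β) := by nlinarith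
    rw [hN_def, hN'_def]
    have expand : 2 * (A / d' + e * α₂ / d' + d * β)
        = 2 * A / d' + 2 * (e * α₂) / d' + 2 * (d * β) := by ring
    rw [expand]
    linarith
  have hNle : N ≤ 6 * N' := by
    have t1 : A / d' ≤ 6 * A' / (d' + 1) := by
      rw [div_le_div_iff₀ hd'pos (by linarith)]
      nlinarith
    have t2 : e * α₂ / d' ≤ 6 * ((e + 1) * α₂') / (d' + 1) := by
      rw [div_le_div_iff₀ hd'pos (by linarith)]
      have s1 : e * α₂ ≤ e * (3 * α₂') := mul_le_mul_of_nonneg_left hα₂'ge hepos.le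
      have s2 : e * α₂ * (d' + 1) ≤ e * (3 * α₂') * (2 * d') := by
        apply mul_le_mul s1 (by linarith) (by linarith) (by positivity)
      have s3 : e * (3 * α₂') * (2 * d') ≤ 6 * ((e + 1) * α₂') * d' := by
        nlinarith [mul_nonneg hα₂'pos.le hd'pos.le]
      linarith
    have t3 : d * β ≤ 6 * ((d + 1) * β') := by nlinarith
    rw [hN_def, hN'_def]
    have expand : 6 * (A / (d'+1) + (e + 1) * α₂' / (d'+1) + (d + 1) * β')
        = 6 * A / (d'+1) + 6 * ((e+1) * α₂') / (d'+1) + 6 * ((d+1) * β') := by ring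
    have expand' : 6 * (A' / (d' + 1) + (e + 1) * α₂' / (d' + 1) + (d + 1) * β')
        = 6 * A' / (d' + 1) + 6 * ((e + 1) * α₂') / (d' + 1) + 6 * ((d + 1) * β') := by ring
    rw [expand']
    linarith
  refine ⟨?_, ?_, ?_⟩
  · rw [hg]; positivity
  · rw [hg, hg', ← mul_div_assoc, div_le_div_iff₀ (by positivity) (by positivity)]
    have h1 : N' * (d * e) ≤ 2 * N * (d * e) :=
      mul_le_mul_of_nonneg_right hN'le (by positivity)
    have h2 : 2 * N * (d * e) ≤ 2 * N * ((d + 1) * (e + 1)) :=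
      mul_le_mul_of_nonneg_left (by nlinarith) (by linarith)
    linarith
  · rw [hg, hg', ← mul_div_assoc, div_le_div_iff₀ (by positivity) (by positivity)]
    have h1 : N * ((d + 1) * (e + 1)) ≤ 6 * N' * ((d + 1) * (e + 1)) :=
      mul_le_mul_of_nonneg_right hNle (by positivity)
    have h2 : 6 * N' * ((d + 1) * (e + 1)) ≤ 6 * N' * (4 * (d * e)) :=
      mul_le_mul_of_nonneg_left (by nlinarith) (by linarith)
    linarith


lemma dd_sh (a : ℕ → ℕ) (n : ℕ) : dd (sh a) n = dd a (n + 1) := rfl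
lemma sh_inc (a : ℕ → ℕ) : sh (inc a) = inc (sh a) := rfl
lemma shn_zero (a : ℕ → ℕ) : shn a 0 = a := rfl
lemma shn_succ (a : ℕ → ℕ) (n : ℕ) : shn a (n + 1) = shn (sh a) n := rfl
lemma shn_inc (a : ℕ → ℕ) (n : ℕ) : shn (inc a) n = inc (shn a n) := rfl

lemma core {a b : ℕ → ℕ} (ha : Adm a) (hb : Adm b) (hlt : a 0 < b 0) :
    0 < pierce a - pierce b ∧
    pierce (inc a) - pierce (inc b) ≤ 2 * (pierce a - pierce b) ∧
    pierce a - pierce b ≤ 24 * (pierce (inc a) - pierce (inc b)) := by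
  have ea : pierce a = (dd a 0)⁻¹ -
      (dd a 0)⁻¹ * ((dd a 1)⁻¹ - (dd a 1)⁻¹ * pierce (sh (sh a))) := by
    rw [shift_eq ha, shift_eq ha.sheesh, dd_sh]
  have eb : pierce b = (dd b 0)⁻¹ - (dd b 0)⁻¹ * pierce (sh b) := shift_eq hb
  have ea' : pierce (inc a) = (dd a 0 + 1)⁻¹ -
      (dd a 0 + 1)⁻¹ * ((dd a 1 + 1)⁻¹ - (dd a 1 + 1)⁻¹ * pierce (inc (sh (sh a)))) := by
    rw [shift_eq ha.incc, dd_inc, sh_inc, shift_eq ha.sheesh.incc, dd_inc, dd_sh, sh_inc]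
  have eb' : pierce (inc b) = (dd b 0 + 1)⁻¹ - (dd b 0 + 1)⁻¹ * pierce (inc (sh b)) := by
    rw [shift_eq hb.incc, dd_inc, sh_inc]
  have he1 : dd a 0 + 1 ≤ dd b 0 := by
    have h : (a 0 : ℝ) + 1 ≤ (b 0 : ℝ) := by exact_mod_cast hlt
    unfold dd; linarith
  rw [ea, eb, ea', eb']
  exact core_calc (dd a 0) (dd b 0) (dd a 1) (pierce (sh (sh a))) (pierce (sh b))
    (pierce (inc (sh (sh a)))) (pierce (inc (sh b)))
    (one_le_dd0 ha) he1 (ha.dd_succ 0)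
    (pierce_pos hb.sheesh) (pierce_pos ha.sheesh.sheesh)
    (inc_le hb.sheesh) (le_inc hb.sheesh) (pierce_pos hb.sheesh.incc)
    (inc_le ha.sheesh.sheesh) (le_inc ha.sheesh.sheesh) (pierce_pos ha.sheesh.sheesh.incc)

lemma diff_shift (n : ℕ) : ∀ a b : ℕ → ℕ, Adm a → Adm b → (∀ i, i < n → a i = b i) →
    pierce a - pierce b
      = (-1 : ℝ) ^ n * (QQ a n)⁻¹ * (pierce (shn a n) - pierce (shn b n)) := by
  induction n with
  | zero => intro a b _ _ _; simp [QQ, shn_zero]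
  | succ n ih =>
    intro a b ha hb hagree
    have h0 : a 0 = b 0 := hagree 0 (by omega)
    have hdd0 : dd b 0 = dd a 0 := by unfold dd; rw [h0]
    have hrec := ih (sh a) (sh b) ha.sheesh hb.sheesh
      (fun i hi => hagree (i + 1) (by omega))
    rw [shift_eq ha, shift_eq hb, hdd0, shn_succ, shn_succ, QQ_succ', mul_inv, pow_succ]
    linear_combination (-(dd a 0)⁻¹) * hrec

lemma keyOrd {a b : ℕ → ℕ} (ha : Adm a) (hb : Adm b) (n : ℕ)
    (hagree : ∀ i, i < n → a i = b i) (hlt : a n < b n) :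
    0 < |pierce a - pierce b| ∧
    |pierce (inc a) - pierce (inc b)| ≤ 2 * |pierce a - pierce b| ∧
    |pierce a - pierce b| ≤ 24 * (n + 1) * |pierce (inc a) - pierce (inc b)| ∧
    |pierce (inc a) - pierce (inc b)| ≤ ((2:ℝ))⁻¹ ^ n := by
  have hlt' : shn a n 0 < shn b n 0 := by simpa [shn] using hlt
  obtain ⟨hG, hG2, hG24⟩ := core (ha.shnn n) (hb.shnn n) hlt'
  have hG'pos : 0 < pierce (inc (shn a n)) - pierce (inc (shn b n)) := by linarith
  set G := pierce (shn a n) - pierce (shn b n) with hGdef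
  set G' := pierce (inc (shn a n)) - pierce (inc (shn b n)) with hG'def
  have hQpos := QQ_pos ha n
  have hQ'pos := QQ_pos ha.incc n
  have hd1 : pierce a - pierce b = (-1:ℝ)^n * (QQ a n)⁻¹ * G :=
    diff_shift n a b ha hb hagree
  have hd2 : pierce (inc a) - pierce (inc b) = (-1:ℝ)^n * (QQ (inc a) n)⁻¹ * G' := by
    have := diff_shift n (inc a) (inc b) ha.incc hb.incc
      (fun i hi => by simp only [inc, hagree i hi])
    rw [this, shn_inc, shn_inc]
  have habs1 : |pierce a - pierce b| = (QQ a n)⁻¹ * G := by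
    rw [hd1, abs_mul, abs_mul, abs_pow, abs_neg, abs_one, one_pow, one_mul,
      abs_of_pos (inv_pos.mpr hQpos), abs_of_pos hG]
  have habs2 : |pierce (inc a) - pierce (inc b)| = (QQ (inc a) n)⁻¹ * G' := by
    rw [hd2, abs_mul, abs_mul, abs_pow, abs_neg, abs_one, one_pow, one_mul,
      abs_of_pos (inv_pos.mpr hQ'pos), abs_of_pos hG'pos]
  have hQle : QQ a n ≤ QQ (inc a) n := QQ_le_QQ_inc ha n
  have hQinvle : (QQ (inc a) n)⁻¹ ≤ (QQ a n)⁻¹ := inv_anti₀ hQpos hQle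
  refine ⟨?_, ?_, ?_, ?_⟩
  · rw [habs1]; positivity
  · rw [habs1, habs2]
    calc (QQ (inc a) n)⁻¹ * G' ≤ (QQ (inc a) n)⁻¹ * (2 * G) :=
          mul_le_mul_of_nonneg_left hG2 (by positivity)
      _ ≤ (QQ a n)⁻¹ * (2 * G) := mul_le_mul_of_nonneg_right hQinvle (by linarith)
      _ = 2 * ((QQ a n)⁻¹ * G) := by ring
  · rw [habs1, habs2]
    have hQQ : (QQ a n)⁻¹ ≤ (n + 1) * (QQ (inc a) n)⁻¹ := by
      rw [inv_eq_one_div, inv_eq_one_div, mul_one_div, div_le_div_iff₀ hQpos hQ'pos]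
      have := QQ_inc_le ha n
      linarith
    calc (QQ a n)⁻¹ * G ≤ (QQ a n)⁻¹ * (24 * G') :=
          mul_le_mul_of_nonneg_left hG24 (by positivity)
      _ ≤ ((n + 1) * (QQ (inc a) n)⁻¹) * (24 * G') :=
          mul_le_mul_of_nonneg_right hQQ (by linarith)
      _ = 24 * (n + 1) * ((QQ (inc a) n)⁻¹ * G') := by ring
  · rw [habs2]
    have hG'le : G' ≤ 1 := by
      have h1 := pierce_le_one (ha.shnn n).incc
      have h2 := pierce_pos (hb.shnn n).incc
      linarith
    have hQ'ge : (2:ℝ)^n ≤ QQ (inc a) n := two_pow_le_QQ_inc ha n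
    have : (QQ (inc a) n)⁻¹ ≤ ((2:ℝ)^n)⁻¹ := inv_anti₀ (by positivity) hQ'ge
    calc (QQ (inc a) n)⁻¹ * G' ≤ (QQ (inc a) n)⁻¹ * 1 :=
          mul_le_mul_of_nonneg_left hG'le (by positivity)
      _ = (QQ (inc a) n)⁻¹ := mul_one _
      _ ≤ ((2:ℝ)^n)⁻¹ := this
      _ = ((2:ℝ))⁻¹ ^ n := by rw [← inv_pow]

lemma key {a b : ℕ → ℕ} (ha : Adm a) (hb : Adm b) (hne : a ≠ b) :
    ∃ n : ℕ,
      0 < |pierce a - pierce b| ∧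
      |pierce (inc a) - pierce (inc b)| ≤ 2 * |pierce a - pierce b| ∧
      |pierce a - pierce b| ≤ 24 * (n + 1) * |pierce (inc a) - pierce (inc b)| ∧
      |pierce (inc a) - pierce (inc b)| ≤ ((2:ℝ))⁻¹ ^ n := by
  have hex : ∃ m, a m ≠ b m := by
    by_contra h
    push_neg at h
    exact hne (funext h)
  set n := Nat.find hex with hn
  have hagree : ∀ i, i < n → a i = b i := fun i hi => by
    have := Nat.find_min hex hi
    simpa using this
  have hne_n : a n ≠ b n := Nat.find_spec hex
  rcases lt_or_gt_of_ne hne_n with h | h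
  · exact ⟨n, keyOrd ha hb n hagree h⟩
  · obtain ⟨c1, c2, c3, c4⟩ := keyOrd hb ha n (fun i hi => (hagree i hi).symm) h
    rw [abs_sub_comm (pierce b), abs_sub_comm (pierce (inc b))] at *
    exact ⟨n, c1, c2, c3, c4⟩


lemma pierce_inj {a b : ℕ → ℕ} (ha : Adm a) (hb : Adm b) (h : pierce a = pierce b) :
    a = b := by
  by_contra hne
  obtain ⟨n, c1, -, -, -⟩ := key ha hb hne
  rw [h, sub_self, abs_zero] at c1
  exact lt_irrefl 0 c1

lemma pierce_inc_inj {a b : ℕ → ℕ} (ha : Adm a) (hb : Adm b)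
    (h : pierce (inc a) = pierce (inc b)) : a = b := by
  by_contra hne
  obtain ⟨n, c1, -, c3, -⟩ := key ha hb hne
  rw [h, sub_self, abs_zero, mul_zero] at c3
  linarith

lemma bound_const {t : ℝ} (ht : 0 < t) (ht1 : t ≤ 1) :
    ∃ C : ℝ, 0 < C ∧ ∀ n : ℕ, 24 * ((n : ℝ) + 1) * ((((2:ℝ))⁻¹ ^ n) ^ t) ≤ C := by
  set ε := (2:ℝ) ^ t - 1 with hε_def
  have hε : 0 < ε := by
    have : (1:ℝ) < 2 ^ t := by
      rw [Real.one_lt_rpow_iff_of_pos (by norm_num)]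
      left; exact ⟨by norm_num, ht⟩
    simp only [hε_def]; linarith
  have hε1 : ε ≤ 1 := by
    have : (2:ℝ) ^ t ≤ 2 ^ (1:ℝ) :=
      Real.rpow_le_rpow_of_exponent_le (by norm_num) ht1
    rw [Real.rpow_one] at this
    simp only [hε_def]; linarith
  refine ⟨24 / ε, by positivity, fun n => ?_⟩
  have hpow : ((((2:ℝ))⁻¹ ^ n) ^ t) = ((1 + ε) ^ n)⁻¹ := by
    have h1 : (1:ℝ) + ε = 2 ^ t := by simp [hε_def]
    have h2 : ((2:ℝ)⁻¹ ^ n : ℝ) = ((2:ℝ) ^ n)⁻¹ := by rw [inv_pow]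
    rw [h2, ← Real.rpow_natCast (2:ℝ) n, ← Real.inv_rpow (by norm_num),
      ← Real.rpow_mul (by norm_num), mul_comm, Real.rpow_mul (by norm_num),
      Real.inv_rpow (by positivity), ← h1, Real.rpow_natCast, inv_pow]
  rw [hpow]
  have hP : (0:ℝ) < (1 + ε) ^ n := by positivity
  rw [← div_eq_mul_inv, div_le_div_iff₀ hP hε]
  have hbern : 1 + (n : ℝ) * ε ≤ (1 + ε) ^ n := by
    have := one_add_mul_le_pow (a := ε) (by linarith) n
    linarith
  have hstep : ((n:ℝ) + 1) * ε ≤ (1 + ε) ^ n := by nlinarith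
  nlinarith

lemma holder_est {a b : ℕ → ℕ} (ha : Adm a) (hb : Adm b) {r C : ℝ}
    (hr0 : 0 < r) (hr1 : r < 1)
    (hC : ∀ n : ℕ, 24 * ((n : ℝ) + 1) * ((((2:ℝ))⁻¹ ^ n) ^ (1 - r)) ≤ C) :
    |pierce a - pierce b| ≤ C * |pierce (inc a) - pierce (inc b)| ^ r := by
  rcases eq_or_ne a b with rfl | hne
  · rw [sub_self, abs_zero, sub_self, abs_zero, Real.zero_rpow (ne_of_gt hr0), mul_zero]
  obtain ⟨n, c1, c2, c3, c4⟩ := key ha hb hne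
  set δ := |pierce a - pierce b| with hδ
  set δ' := |pierce (inc a) - pierce (inc b)| with hδ'
  have hδ'pos : 0 < δ' := by nlinarith [c1, c3]
  have hsplit : δ' = δ' ^ (1 - r) * δ' ^ r := by
    rw [← Real.rpow_add hδ'pos, sub_add_cancel, Real.rpow_one]
  have h1 : δ' ^ (1 - r) ≤ (((2:ℝ))⁻¹ ^ n) ^ (1 - r) :=
    Real.rpow_le_rpow (abs_nonneg _) c4 (by linarith)
  have h2 : (0:ℝ) ≤ δ' ^ r := Real.rpow_nonneg (abs_nonneg _) r
  calc δ ≤ 24 * (n + 1) * δ' := c3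
    _ = 24 * (n + 1) * (δ' ^ (1 - r) * δ' ^ r) := by rw [← hsplit]
    _ ≤ 24 * (n + 1) * ((((2:ℝ))⁻¹ ^ n) ^ (1 - r) * δ' ^ r) := by
        apply mul_le_mul_of_nonneg_left (mul_le_mul_of_nonneg_right h1 h2) (by positivity)
    _ = (24 * (n + 1) * (((2:ℝ))⁻¹ ^ n) ^ (1 - r)) * δ' ^ r := by ring
    _ ≤ C * δ' ^ r := mul_le_mul_of_nonneg_right (hC n) h2


lemma inc_eq (a : ℕ → ℕ) : inc a = fun n => a n + 1 := rfl

end PierceAux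

end

open PierceAux in
/-- Fractal quasi-equivalence principle for the Pierce expansion in the Perron
and traditional notations: if `∑ 1/ψ(n) < ∞` and every `a ∈ 𝔐` is strictly increasing with
`a₁ ≥ 2` and `a_n ≥ ψ(n)` for all sufficiently large `n`, then
`dim_H {Π(a) : a ∈ 𝔐} = dim_H {Π(a+1) : a ∈ 𝔐}`. -/
theorem fractal_quasi_equivalence_pierce (ψ : ℕ → ℝ) (hψpos : ∀ n, 0 < ψ n)
    (hψsum : Summable fun n : ℕ => 1 / ψ n)
    (𝔐 : Set (ℕ → ℕ))
    (h𝔐 : ∀ a ∈ 𝔐, StrictMono a ∧ 2 ≤ a 0 ∧ ∀ᶠ n in atTop, ψ n ≤ (a n : ℝ)) :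
    dimH {x : ℝ | ∃ a ∈ 𝔐, x = pierce a} =
      dimH {x : ℝ | ∃ a ∈ 𝔐, x = pierce fun n => a n + 1} := by
  classical
  have hAdm : ∀ a ∈ 𝔐, Adm a := fun a h => ⟨(h𝔐 a h).1, (h𝔐 a h).2.1⟩
  set E : Set ℝ := {x : ℝ | ∃ a ∈ 𝔐, x = pierce a} with hE
  set E' : Set ℝ := {x : ℝ | ∃ a ∈ 𝔐, x = pierce fun n => a n + 1} with hE'
  let F : ℝ → ℝ := fun x =>
    if h : ∃ a, a ∈ 𝔐 ∧ x = pierce a then pierce (inc h.choose) else 0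
  let G : ℝ → ℝ := fun y =>
    if h : ∃ a, a ∈ 𝔐 ∧ y = pierce fun n => a n + 1 then pierce h.choose else 0
  have hF : ∀ (x : ℝ) (h : ∃ a, a ∈ 𝔐 ∧ x = pierce a),
      F x = pierce (inc h.choose) := fun x h => dif_pos h
  have hG : ∀ (y : ℝ) (h : ∃ a, a ∈ 𝔐 ∧ y = pierce fun n => a n + 1),
      G y = pierce h.choose := fun y h => dif_pos h
  -- image of F
  have himgF : F '' E = E' := by
    apply Set.eq_of_subset_of_subset
    · rintro y ⟨x, hx, rfl⟩
      rw [hF x hx]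
      exact ⟨hx.choose, hx.choose_spec.1, rfl⟩
    · rintro y ⟨b, hb, rfl⟩
      have hx : ∃ a, a ∈ 𝔐 ∧ pierce b = pierce a := ⟨b, hb, rfl⟩
      refine ⟨pierce b, ⟨b, hb, rfl⟩, ?_⟩
      rw [hF _ hx]
      have hcb : hx.choose = b :=
        pierce_inj (hAdm _ hx.choose_spec.1) (hAdm b hb) hx.choose_spec.2.symm
      rw [hcb]
      rfl
  -- image of G
  have himgG : G '' E' = E := by
    apply Set.eq_of_subset_of_subset
    · rintro x ⟨y, hy, rfl⟩
      rw [hG y hy]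
      exact ⟨hy.choose, hy.choose_spec.1, rfl⟩
    · rintro x ⟨b, hb, rfl⟩
      have hy : ∃ a, a ∈ 𝔐 ∧ (pierce fun n => b n + 1) = pierce fun n => a n + 1 :=
        ⟨b, hb, rfl⟩
      refine ⟨pierce fun n => b n + 1, ⟨b, hb, rfl⟩, ?_⟩
      rw [hG _ hy]
      have hcb : hy.choose = b :=
        pierce_inc_inj (hAdm _ hy.choose_spec.1) (hAdm b hb) hy.choose_spec.2.symm
      rw [hcb]
  -- Lipschitz bound for F
  have hlip : LipschitzOnWith 2 F E := by
    apply LipschitzOnWith.of_dist_le_mul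
    intro x hx y hy
    have sx := (hx : ∃ a, a ∈ 𝔐 ∧ x = pierce a).choose_spec
    have sy := (hy : ∃ a, a ∈ 𝔐 ∧ y = pierce a).choose_spec
    rw [hF x hx, hF y hy, Real.dist_eq, Real.dist_eq]
    rcases eq_or_ne hx.choose hy.choose with heq | hne
    · rw [heq, sub_self, abs_zero]
      positivity
    · obtain ⟨n, c1, c2, c3, c4⟩ :=
        key (hAdm _ sx.1) (hAdm _ sy.1) hne
      rw [← sx.2, ← sy.2] at c2
      exact_mod_cast c2
  have hdim1 : dimH E' ≤ dimH E := himgF ▸ hlip.dimH_image_le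
  -- Hölder bound for G
  have hholder : ∀ r : ℝ≥0, 0 < r → r < 1 → dimH E ≤ dimH E' / r := by
    intro r h0 h1r
    have hr0 : (0:ℝ) < (r:ℝ) := by exact_mod_cast h0
    have hr1 : (r:ℝ) < 1 := by exact_mod_cast h1r
    obtain ⟨C, hCpos, hC⟩ := bound_const (t := 1 - (r:ℝ)) (by linarith) (by linarith)
    have hH : HolderOnWith C.toNNReal r G E' := by
      intro y1 hy1 y2 hy2
      have s1 := (hy1 : ∃ a, a ∈ 𝔐 ∧ y1 = pierce fun n => a n + 1).choose_spec
      have s2 := (hy2 : ∃ a, a ∈ 𝔐 ∧ y2 = pierce fun n => a n + 1).choose_spec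
      rw [hG y1 hy1, hG y2 hy2, edist_dist, edist_dist, Real.dist_eq, Real.dist_eq]
      have hest := holder_est (hAdm _ s1.1) (hAdm _ s2.1) hr0 hr1 hC
      rw [inc_eq, inc_eq, ← s1.2, ← s2.2] at hest
      calc ENNReal.ofReal |pierce hy1.choose - pierce hy2.choose|
          ≤ ENNReal.ofReal (C * |y1 - y2| ^ (r:ℝ)) :=
            ENNReal.ofReal_le_ofReal hest
        _ = ENNReal.ofReal C * ENNReal.ofReal (|y1 - y2| ^ (r:ℝ)) :=
            ENNReal.ofReal_mul hCpos.le
        _ = ENNReal.ofReal C * ENNReal.ofReal |y1 - y2| ^ (r:ℝ) := by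
            rw [ENNReal.ofReal_rpow_of_nonneg (abs_nonneg _) r.coe_nonneg]
        _ = (C.toNNReal : ℝ≥0∞) * ENNReal.ofReal |y1 - y2| ^ (r:ℝ) := rfl
    have := hH.dimH_image_le h0
    rwa [himgG] at this
  refine le_antisymm ?_ hdim1
  have hmul : ∀ r : ℝ≥0, 0 < r → r < 1 → dimH E * r ≤ dimH E' := by
    intro r h0 h1r
    have h := hholder r h0 h1r
    rwa [ENNReal.le_div_iff_mul_le (Or.inl (by exact_mod_cast h0.ne'))
      (Or.inl ENNReal.coe_ne_top)] at h
  calc dimH E = dimH E * 1 := (mul_one _).symm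
    _ ≤ dimH E' := by
        apply ENNReal.mul_le_of_forall_lt
        intro a' ha' b' hb'
        rcases eq_or_ne b' 0 with rfl | hb0
        · simp
        · have hbt : b' ≠ ⊤ := ne_top_of_lt hb'
          have hbr : (b'.toNNReal : ℝ≥0∞) = b' := ENNReal.coe_toNNReal hbt
          have h0 : 0 < b'.toNNReal := ENNReal.toNNReal_pos hb0 hbt
          have h1r : b'.toNNReal < 1 := by
            have : (b'.toNNReal : ℝ≥0∞) < 1 := hbr ▸ hb'
            exact_mod_cast this
          calc a' * b' ≤ dimH E * b' := mul_le_mul_left ha'.le _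
            _ = dimH E * b'.toNNReal := by rw [hbr]
            _ ≤ dimH E' := hmul _ h0 h1r
end
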